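/- arXiv:1901.09718 — 6 statements merged into one kernel-verified Lean document; each statement's English description precedes it below -/
import Mathlib

section
/- Let t0 ≤ t1 < t2 ≤ T and ξ > 0. If (x̃^ξ, ũ^ξ) and (x̌^ξ, ǔ^ξ) are feasible processes for (FP3) with x̃^ξ(t) = ξ for all t ∈ [t1,t2], and x̌^ξ(t) = ξ − a(t − t1) for t ∈ [t1, ť] and x̌^ξ(t) = ξ + a(t − t2) for t ∈ (ť, t2], where ť := (t1+t2)/2, then J(x̌^ξ, ǔ^ξ)|_{[t1,t2]} − J(x̃^ξ, ũ^ξ)|_{[t1,t2]} = (1/λ)(a/λ − 1)·Δ(t1,t2), and the strict inequality J(x̌^ξ, ǔ^ξ)|_{[t1,t2]} > J(x̃^ξ, ũ^ξ)|_{[t1,t2]} holds. -/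
open MeasureTheory Set

noncomputable section

-- integrability of bounded ae-measurable function on interval
lemma aux_integrableOn {u : ℝ → ℝ} {t0 T : ℝ}
    (hu : AEStronglyMeasurable u (volume.restrict (Icc t0 T)))
    (hb : ∀ᵐ t ∂(volume.restrict (Icc t0 T)), u t ∈ Icc (-1 : ℝ) 1)
    {α β : ℝ} (h : Ioc α β ⊆ Icc t0 T) : IntegrableOn u (Ioc α β) := by
  have hle : volume.restrict (Ioc α β) ≤ volume.restrict (Icc t0 T) :=
    Measure.restrict_mono h le_rfl
  have hm : AEStronglyMeasurable u (volume.restrict (Ioc α β)) :=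
    hu.mono_measure hle
  have hb' : ∀ᵐ t ∂(volume.restrict (Ioc α β)), ‖u t‖ ≤ 1 := by
    refine (hb.filter_mono (ae_mono hle)).mono fun t ht => ?_
    exact abs_le.2 ⟨ht.1, ht.2⟩
  exact Integrable.mono' (integrable_const 1) hm hb'

lemma aux_ae_zero {f : ℝ → ℝ} {p q : ℝ} (hpq : p ≤ q)
    (hint : IntegrableOn f (Ioc p q))
    (h : ∀ t ∈ Icc p q, ∫ s in p..t, f s = 0) :
    ∀ᵐ t ∂(volume.restrict (Ioc p q)), f t = 0 := by
  set μ := volume.restrict (Ioc p q) with hμ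
  have hf : Integrable f μ := hint
  have hii : ∀ γ ∈ Icc p q, IntervalIntegrable f volume p γ := fun γ hγ => by
    rw [intervalIntegrable_iff_integrableOn_Ioc_of_le hγ.1]
    exact hint.mono_set (Ioc_subset_Ioc_right hγ.2)
  have claim : ∀ ⦃s : Set ℝ⦄, MeasurableSet s → ∫ x in s, f x ∂μ = 0 := by
    refine MeasurableSpace.induction_on_inter
      (BorelSpace.measurable_eq.trans (borel_eq_generateFrom_Ioc ℝ))
      (isPiSystem_Ioc (id : ℝ → ℝ) (id : ℝ → ℝ)) (by simp) ?_ ?_ ?_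
    · rintro S ⟨l, u, hlu, rfl⟩
      rw [hμ, Measure.restrict_restrict measurableSet_Ioc, Ioc_inter_Ioc]
      rcases le_or_gt (min u q) (max l p) with hc | hc
      · rw [Ioc_eq_empty (not_lt.2 hc)]; simp
      · have h1 : p ≤ max l p := le_max_right _ _
        have h2 : min u q ≤ q := min_le_right _ _
        have hα : max l p ∈ Icc p q := ⟨h1, hc.le.trans h2⟩
        have hβ : min u q ∈ Icc p q := ⟨h1.trans hc.le, h2⟩
        rw [← intervalIntegral.integral_of_le hc.le]
        have := intervalIntegral.integral_interval_sub_left (hii _ hβ) (hii _ hα)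
        rw [h _ hβ, h _ hα] at this
        rw [← this]; ring
    · intro s hs hsi
      have := integral_add_compl hs hf
      have htot : ∫ x, f x ∂μ = 0 := by
        have heq : (∫ x, f x ∂μ) = ∫ s in p..q, f s := by
          rw [intervalIntegral.integral_of_le hpq]
        rw [heq]; exact h q ⟨hpq, le_rfl⟩
      linarith [htot, hsi, this]
    · intro g hd hm hval
      rw [integral_iUnion hm hd hf.integrableOn]
      simp [hval]
  have := hf.ae_eq_zero_of_forall_setIntegral_eq_zero (fun s hs _ => claim hs)
  exact this.mono fun t ht => ht

lemma aux_ae_one {f : ℝ → ℝ} {p q : ℝ} (hpq : p ≤ q)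
    (hint : IntegrableOn f (Ioc p q))
    (hb : ∀ᵐ t ∂(volume.restrict (Ioc p q)), f t ≤ 1)
    (hI : ∫ t in Ioc p q, f t = q - p) :
    ∀ᵐ t ∂(volume.restrict (Ioc p q)), f t = 1 := by
  set μ := volume.restrict (Ioc p q) with hμ
  have hg : Integrable (fun t => 1 - f t) μ := (integrable_const 1).sub hint
  have hone : ∫ _t in Ioc p q, (1 : ℝ) = q - p := by
    rw [setIntegral_const, measureReal_def, Real.volume_Ioc, smul_eq_mul, mul_one,
      ENNReal.toReal_ofReal (sub_nonneg.2 hpq)]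
  have hzero : ∫ t, (1 - f t) ∂μ = 0 := by
    have : ∫ t, (1 - f t) ∂μ = (∫ _t in Ioc p q, (1:ℝ)) - ∫ t in Ioc p q, f t :=
      integral_sub (integrable_const 1) hint
    rw [this, hone, hI, sub_self]
  have hnn : 0 ≤ᵐ[μ] fun t => 1 - f t := hb.mono fun t ht => by simp only [Pi.zero_apply]; linarith
  have := (integral_eq_zero_iff_of_nonneg_ae hnn hg).1 hzero
  exact this.mono fun t ht => by
    have h0 : 1 - f t = 0 := ht
    linarith

lemma aux_antideriv {lam : ℝ} (hl : lam ≠ 0) (c d p q : ℝ) :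
    ∫ t in p..q, Real.exp (-(lam * t)) * (c + d * t)
      = (Real.exp (-(lam * q)) * (-((c + d / lam) / lam) - d / lam * q))
        - (Real.exp (-(lam * p)) * (-((c + d / lam) / lam) - d / lam * p)) := by
  have key : ∀ t : ℝ, HasDerivAt
      (fun t => Real.exp (-(lam * t)) * (-((c + d / lam) / lam) - d / lam * t))
      (Real.exp (-(lam * t)) * (c + d * t)) t := by
    intro t
    have h1 : HasDerivAt (fun t : ℝ => -(lam * t)) (-lam) t := by
      have := ((hasDerivAt_id t).const_mul lam).neg; simp only [mul_one] at this; exact this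
    have hE : HasDerivAt (fun t : ℝ => Real.exp (-(lam * t)))
        (Real.exp (-(lam * t)) * (-lam)) t := h1.exp
    have hg : HasDerivAt (fun t : ℝ => -((c + d / lam) / lam) - d / lam * t)
        (-(d / lam)) t := by
      simpa using (((hasDerivAt_id t).const_mul (d / lam)).const_sub
        (-((c + d / lam) / lam)))
    have := hE.mul hg
    refine this.congr_deriv ?_
    field_simp
    ring
  refine intervalIntegral.integral_eq_sub_of_hasDerivAt (fun t _ => key t) ?_
  apply Continuous.intervalIntegrable
  continuity

lemma aux_integral_formula {a t0 T : ℝ} (ha : a ≠ 0) {x u : ℝ → ℝ} {x0 : ℝ}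
    (hx : ∀ t ∈ Icc t0 T, x t = x0 + ∫ s in t0..t, -(a * u s))
    (hu : AEStronglyMeasurable u (volume.restrict (Icc t0 T)))
    (hb : ∀ᵐ t ∂(volume.restrict (Icc t0 T)), u t ∈ Icc (-1 : ℝ) 1)
    {α β : ℝ} (hα : α ∈ Icc t0 T) (hβ : β ∈ Icc t0 T) :
    ∫ t in α..β, u t = (x α - x β) / a := by
  have hiu : ∀ γ, γ ∈ Icc t0 T → IntervalIntegrable u volume t0 γ := fun γ hγ => by
    rw [intervalIntegrable_iff_integrableOn_Ioc_of_le hγ.1]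
    exact aux_integrableOn hu hb (fun t ht => ⟨ht.1.le, ht.2.trans hγ.2⟩)
  have hif : ∀ γ, γ ∈ Icc t0 T → IntervalIntegrable (fun s => -(a * u s)) volume t0 γ :=
    fun γ hγ => ((hiu γ hγ).const_mul a).neg
  have h2 := intervalIntegral.integral_interval_sub_left (hif β hβ) (hif α hα)
  have h3 : (∫ s in α..β, -(a * u s)) = -(a * ∫ s in α..β, u s) := by
    rw [intervalIntegral.integral_neg, intervalIntegral.integral_const_mul]
  have h4 : x α - x β = a * ∫ t in α..β, u t := by
    rw [h3] at h2
    rw [hx β hβ, hx α hα]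
    linarith
  rw [h4]
  field_simp

/-- A feasible process for problem (FP3): `x` is the (absolutely continuous) state
trajectory, represented as the indefinite integral of its a.e. derivative `-a*u`,
`u` is a measurable control with values in `[-1,1]` a.e., the initial condition is
`x t0 = x0`, and the bilateral state constraint `-1 ≤ x t ≤ 1` holds on `[t0,T]`. -/
def FP3Feasible (a t0 T x0 : ℝ) (x u : ℝ → ℝ) : Prop :=
  AEStronglyMeasurable u (volume.restrict (Icc t0 T)) ∧
  (∀ᵐ t ∂(volume.restrict (Icc t0 T)), u t ∈ Icc (-1 : ℝ) 1) ∧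
  (∀ t ∈ Icc t0 T, x t = x0 + ∫ s in t0..t, -(a * u s)) ∧
  (∀ t ∈ Icc t0 T, x t ∈ Icc (-1 : ℝ) 1)

/-- The cost functional of (FP3) on the interval `[t1,t2]`. -/
def FP3Cost (lam t1 t2 : ℝ) (x u : ℝ → ℝ) : ℝ :=
  ∫ t in t1..t2, -(Real.exp (-(lam * t)) * (x t + u t))

/-- `(x,u)` is a `W^{1,1}` local minimizer of (FP3). -/
def FP3LocalMin (a lam t0 T x0 : ℝ) (x u : ℝ → ℝ) : Prop :=
  FP3Feasible a t0 T x0 x u ∧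
  ∃ δ > (0 : ℝ), ∀ y v, FP3Feasible a t0 T x0 y v →
    (∫ t in t0..T, |(-(a * v t)) - (-(a * u t))|) ≤ δ →
    FP3Cost lam t0 T x u ≤ FP3Cost lam t0 T y v

/-- `(x,u)` is a `W^{1,1}` global minimizer of (FP3). -/
def FP3GlobalMin (a lam t0 T x0 : ℝ) (x u : ℝ → ℝ) : Prop :=
  FP3Feasible a t0 T x0 x u ∧
  ∀ y v, FP3Feasible a t0 T x0 y v → FP3Cost lam t0 T x u ≤ FP3Cost lam t0 T y v

/-- The function `Δ(t1,t2) = e^{-λ t1} - 2 e^{-λ (t1+t2)/2} + e^{-λ t2}`. -/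
def FP3Delta (lam t1 t2 : ℝ) : ℝ :=
  Real.exp (-(lam * t1)) - 2 * Real.exp (-(lam * (t1 + t2) / 2)) + Real.exp (-(lam * t2))

/-- The characteristic constant `ρ = (1/λ) ln (a/(a-λ))` of (FP3). -/
def FP3rho (a lam : ℝ) : ℝ := (1 / lam) * Real.log (a / (a - lam))

set_option maxHeartbeats 1000000 in
/-- Lemma 3.5: comparison of the restricted costs of a process
staying at the level `ξ > 0` and of the corresponding "valley" process on `[t1,t2]`. -/
theorem fp3_lemma_technical4
    (a lam t0 T x0 : ℝ) (hal : lam < a) (hlam : 0 < lam)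
    (ht0 : 0 ≤ t0) (htT : t0 < T) (hx0 : x0 ∈ Icc (-1 : ℝ) 1)
    (t1 t2 ξ : ℝ) (h01 : t0 ≤ t1) (h12 : t1 < t2) (h2T : t2 ≤ T) (hξ : 0 < ξ)
    (xt ut xc uc : ℝ → ℝ)
    (hft : FP3Feasible a t0 T x0 xt ut) (hfc : FP3Feasible a t0 T x0 xc uc)
    (hxt : ∀ t ∈ Icc t1 t2, xt t = ξ)
    (hxc1 : ∀ t ∈ Icc t1 ((t1 + t2) / 2), xc t = ξ - a * (t - t1))
    (hxc2 : ∀ t ∈ Ioc ((t1 + t2) / 2) t2, xc t = ξ + a * (t - t2)) :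
    FP3Cost lam t1 t2 xc uc - FP3Cost lam t1 t2 xt ut
      = (1 / lam) * (a / lam - 1) * FP3Delta lam t1 t2 ∧
    FP3Cost lam t1 t2 xt ut < FP3Cost lam t1 t2 xc uc := by
  obtain ⟨hmt, hbt, hxtI, -⟩ := hft
  obtain ⟨hmc, hbc, hxcI, -⟩ := hfc
  have ha : (0:ℝ) < a := hlam.trans hal
  set tm := (t1 + t2) / 2 with htm
  have h1m : t1 < tm := by rw [htm]; linarith
  have hm2 : tm < t2 := by rw [htm]; linarith
  have ht1M : t1 ∈ Icc t0 T := ⟨h01, h12.le.trans h2T⟩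
  have htmM : tm ∈ Icc t0 T := ⟨h01.trans h1m.le, hm2.le.trans h2T⟩
  have ht2M : t2 ∈ Icc t0 T := ⟨h01.trans h12.le, h2T⟩
  have hsub12 : Ioc t1 t2 ⊆ Icc t0 T := fun t ht => ⟨h01.trans ht.1.le, ht.2.trans h2T⟩
  have hsub1m : Ioc t1 tm ⊆ Icc t0 T := fun t ht =>
    ⟨h01.trans ht.1.le, (ht.2.trans hm2.le).trans h2T⟩
  have hsubm2 : Ioc tm t2 ⊆ Icc t0 T := fun t ht =>
    ⟨h01.trans (h1m.le.trans ht.1.le), ht.2.trans h2T⟩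
  -- value of uc on the first half
  have hI1 : ∫ t in Ioc t1 tm, uc t = tm - t1 := by
    rw [← intervalIntegral.integral_of_le h1m.le,
      aux_integral_formula ha.ne' hxcI hmc hbc ht1M htmM,
      hxc1 t1 ⟨le_rfl, h1m.le⟩, hxc1 tm ⟨h1m.le, le_rfl⟩]
    field_simp
    ring
  have huc1 : ∀ᵐ t ∂(volume.restrict (Ioc t1 tm)), uc t = 1 := by
    refine aux_ae_one h1m.le (aux_integrableOn hmc hbc hsub1m) ?_ hI1
    exact (hbc.filter_mono (ae_mono (Measure.restrict_mono hsub1m le_rfl))).mono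
      fun t ht => ht.2
  -- value of uc on the second half
  have hI2 : ∫ t in Ioc tm t2, (-uc t) = t2 - tm := by
    rw [← intervalIntegral.integral_of_le hm2.le, intervalIntegral.integral_neg,
      aux_integral_formula ha.ne' hxcI hmc hbc htmM ht2M,
      hxc1 tm ⟨h1m.le, le_rfl⟩, hxc2 t2 ⟨hm2, le_rfl⟩, htm]
    field_simp
    ring
  have huc2 : ∀ᵐ t ∂(volume.restrict (Ioc tm t2)), uc t = -1 := by
    have := aux_ae_one hm2.le (aux_integrableOn hmc hbc hsubm2).neg
      ((hbc.filter_mono (ae_mono (Measure.restrict_mono hsubm2 le_rfl))).mono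
        fun t ht => by simpa using neg_le_neg ht.1) hI2
    refine this.mono fun t ht => ?_
    have h' : -uc t = 1 := ht
    linarith
  -- value of ut
  have hut0 : ∀ᵐ t ∂(volume.restrict (Ioc t1 t2)), ut t = 0 := by
    refine aux_ae_zero h12.le (aux_integrableOn hmt hbt hsub12) fun t ht => ?_
    rw [aux_integral_formula ha.ne' hxtI hmt hbt ht1M
        ⟨h01.trans ht.1, ht.2.trans h2T⟩,
      hxt t1 ⟨le_rfl, h12.le⟩, hxt t ht]
    simp
  -- ae facts w.r.t. volume
  have hut0' : ∀ᵐ t : ℝ, t ∈ Ioc t1 t2 → ut t = 0 :=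
    (ae_restrict_iff' measurableSet_Ioc).1 hut0
  have huc1' : ∀ᵐ t : ℝ, t ∈ Ioc t1 tm → uc t = 1 :=
    (ae_restrict_iff' measurableSet_Ioc).1 huc1
  have huc2' : ∀ᵐ t : ℝ, t ∈ Ioc tm t2 → uc t = -1 :=
    (ae_restrict_iff' measurableSet_Ioc).1 huc2
  -- cost of the constant process
  have hct : FP3Cost lam t1 t2 xt ut
      = ∫ t in t1..t2, Real.exp (-(lam * t)) * (-ξ + 0 * t) := by
    simp only [FP3Cost]
    refine intervalIntegral.integral_congr_ae ?_
    filter_upwards [hut0'] with t h ht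
    rw [uIoc_of_le h12.le] at ht
    rw [hxt t ⟨ht.1.le, ht.2⟩, h ht]
    ring
  set f1 : ℝ → ℝ := fun t => Real.exp (-(lam * t)) * ((-(ξ + 1) - a * t1) + a * t) with hf1
  set f2 : ℝ → ℝ := fun t => Real.exp (-(lam * t)) * ((1 - ξ + a * t2) + -a * t) with hf2
  set F : ℝ → ℝ := fun t => if t ≤ tm then f1 t else f2 t with hF
  have hcc1 : FP3Cost lam t1 t2 xc uc = ∫ t in t1..t2, F t := by
    simp only [FP3Cost]
    refine intervalIntegral.integral_congr_ae ?_
    filter_upwards [huc1', huc2'] with t h1 h2 ht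
    rw [uIoc_of_le h12.le] at ht
    by_cases htt : t ≤ tm
    · rw [hxc1 t ⟨ht.1.le, htt⟩, h1 ⟨ht.1, htt⟩, hF]
      simp only [if_pos htt, hf1]
      ring
    · rw [hxc2 t ⟨not_le.1 htt, ht.2⟩, h2 ⟨not_le.1 htt, ht.2⟩, hF]
      simp only [if_neg htt, hf2]
      ring
  have hcont1 : Continuous f1 := by rw [hf1]; fun_prop
  have hcont2 : Continuous f2 := by rw [hf2]; fun_prop
  have hint1 : IntervalIntegrable F volume t1 tm := by
    rw [intervalIntegrable_iff_integrableOn_Ioc_of_le h1m.le]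
    refine (hcont1.integrableOn_Ioc).congr_fun (fun t ht => ?_) measurableSet_Ioc
    rw [hF]; simp only [if_pos ht.2]
  have hint2 : IntervalIntegrable F volume tm t2 := by
    rw [intervalIntegrable_iff_integrableOn_Ioc_of_le hm2.le]
    refine (hcont2.integrableOn_Ioc).congr_fun (fun t ht => ?_) measurableSet_Ioc
    rw [hF]; simp only [if_neg (not_le.2 ht.1)]
  have hsplit : (∫ t in t1..t2, F t) = (∫ t in t1..tm, F t) + ∫ t in tm..t2, F t :=
    (intervalIntegral.integral_add_adjacent_intervals hint1 hint2).symm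
  have hP1 : (∫ t in t1..tm, F t) = ∫ t in t1..tm, f1 t := by
    refine intervalIntegral.integral_congr fun t ht => ?_
    rw [uIcc_of_le h1m.le] at ht
    rw [hF]; simp only [if_pos ht.2]
  have hP2 : (∫ t in tm..t2, F t) = ∫ t in tm..t2, f2 t := by
    refine intervalIntegral.integral_congr_ae (Filter.Eventually.of_forall fun t ht => ?_)
    rw [uIoc_of_le hm2.le] at ht
    rw [hF]; simp only [if_neg (not_le.2 ht.1)]
  have e1 := aux_antideriv hlam.ne' (-ξ) 0 t1 t2
  have e2 := aux_antideriv hlam.ne' (-(ξ + 1) - a * t1) a t1 tm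
  have e3 := aux_antideriv hlam.ne' (1 - ξ + a * t2) (-a) tm t2
  have hkey : FP3Cost lam t1 t2 xc uc - FP3Cost lam t1 t2 xt ut
      = (1 / lam) * (a / lam - 1) * FP3Delta lam t1 t2 := by
    rw [hcc1, hsplit, hP1, hP2, hct, hf1, hf2, e1, e2, e3]
    simp only [FP3Delta]
    rw [show -(lam * (t1 + t2) / 2) = -(lam * tm) by rw [htm]; ring]
    rw [htm]
    field_simp
    ring
  refine ⟨hkey, ?_⟩
  have hA : Real.exp (-(lam * t1)) = Real.exp (-(lam * t1) / 2) * Real.exp (-(lam * t1) / 2) := by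
    rw [← Real.exp_add]; congr 1; ring
  have hB : Real.exp (-(lam * t2)) = Real.exp (-(lam * t2) / 2) * Real.exp (-(lam * t2) / 2) := by
    rw [← Real.exp_add]; congr 1; ring
  have hAB : Real.exp (-(lam * (t1 + t2) / 2))
      = Real.exp (-(lam * t1) / 2) * Real.exp (-(lam * t2) / 2) := by
    rw [← Real.exp_add]; congr 1; ring
  have hne : Real.exp (-(lam * t1) / 2) ≠ Real.exp (-(lam * t2) / 2) := by
    intro h
    have h' := Real.exp_eq_exp.1 h
    nlinarith
  have hsq : 0 < (Real.exp (-(lam * t1) / 2) - Real.exp (-(lam * t2) / 2)) ^ 2 :=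
    lt_of_le_of_ne (sq_nonneg _) (Ne.symm (pow_ne_zero 2 (sub_ne_zero.2 hne)))
  have hΔ : 0 < FP3Delta lam t1 t2 := by
    simp only [FP3Delta]
    rw [hA, hB, hAB]
    nlinarith [hsq]
  have hpre : 0 < (1 / lam) * (a / lam - 1) := by
    have h1 : (1:ℝ) < a / lam := (one_lt_div hlam).2 hal
    have h2 : (0:ℝ) < 1 / lam := by positivity
    nlinarith
  linarith [mul_pos hpre hΔ, hkey]
end
end

section
/- Let (x̄,ū) be a W^{1,1} local minimizer for (FP3). Then there is no subsegment [t1,t2] ⊆ [t0,T] with t1 < t2 such that x̄(t) = −1 for all t ∈ [t1,t2]. -/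
open MeasureTheory Set


lemma fp3_integral_exp_linear (lam α β : ℝ) (hlam : lam ≠ 0) (c d : ℝ) :
    ∫ t in c..d, Real.exp (-(lam*t)) * (α + β*t)
      = (Real.exp (-(lam*d)) * ((-β/lam - α)/lam + (-β/lam) * d))
        - (Real.exp (-(lam*c)) * ((-β/lam - α)/lam + (-β/lam) * c)) := by
  have hderiv : ∀ t : ℝ, HasDerivAt
      (fun t => Real.exp (-(lam*t)) * ((-β/lam - α)/lam + (-β/lam) * t))
      (Real.exp (-(lam*t)) * (α + β*t)) t := by
    intro t
    have h1 : HasDerivAt (fun t : ℝ => -(lam*t)) (-lam) t := by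
      simpa using (hasDerivAt_id t).const_mul (-lam)
    have h2 : HasDerivAt (fun t : ℝ => Real.exp (-(lam*t))) (Real.exp (-(lam*t)) * (-lam)) t :=
      (Real.hasDerivAt_exp _).comp t h1
    have h3 : HasDerivAt (fun t : ℝ => (-β/lam - α)/lam + (-β/lam) * t) (-β/lam) t := by
      simpa using ((hasDerivAt_id t).const_mul (-β/lam)).const_add ((-β/lam - α)/lam)
    have := h2.mul h3
    refine this.congr_deriv ?_
    simp only [div_eq_mul_inv]
    linear_combination (Real.exp (-(lam*t)) * (β*lam⁻¹ + α + β*t)) * mul_inv_cancel₀ hlam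
  have hcont : IntervalIntegrable (fun t => Real.exp (-(lam*t)) * (α + β*t)) volume c d := by
    apply Continuous.intervalIntegrable
    continuity
  exact intervalIntegral.integral_eq_sub_of_hasDerivAt (fun t _ => hderiv t) hcont


lemma fp3_ae_zero (t1 t2 : ℝ) (h12 : t1 < t2) (u : ℝ → ℝ)
    (hmeas : AEStronglyMeasurable u (volume.restrict (Ioc t1 t2)))
    (hmem : ∀ᵐ t ∂(volume.restrict (Ioc t1 t2)), u t ∈ Icc (-1:ℝ) 1)
    (hint : ∀ c d : ℝ, t1 ≤ c → c ≤ d → d ≤ t2 → ∫ t in Ioc c d, u t = 0) :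
    ∀ᵐ t ∂(volume.restrict (Ioc t1 t2)), u t = 0 := by
  set ν := volume.restrict (Ioc t1 t2) with hν
  set f : ℝ → ENNReal := fun t => ENNReal.ofReal (u t + 1) with hf
  have hnn : 0 ≤ᵐ[ν] fun t => u t + 1 := hmem.mono (fun t ht => by
    simp only [Pi.zero_apply]; linarith [ht.1])
  have hone : Integrable (fun _ : ℝ => (1:ℝ)) ν := by
    refine integrableOn_const ?_
    exact measure_Ioc_lt_top.ne
  have hIu : Integrable u ν := by
    refine Integrable.mono' hone hmeas (hmem.mono fun t ht => ?_)
    rw [Real.norm_eq_abs, abs_le]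
    exact ⟨ht.1, ht.2⟩
  have hI : Integrable (fun t => u t + 1) ν := hIu.add hone
  have hf_aem : AEMeasurable f ν :=
    ENNReal.measurable_ofReal.comp_aemeasurable (hmeas.aemeasurable.add_const 1)
  have hintν : ∫ t, u t ∂ν = 0 := hint t1 t2 le_rfl h12.le le_rfl
  have hconst : ∫ _t, (1:ℝ) ∂ν = t2 - t1 := by
    rw [integral_const]
    simp [hν, Real.volume_Ioc, ENNReal.toReal_ofReal (by linarith : (0:ℝ) ≤ t2 - t1), h12.le]
  have hlint : ∫⁻ t, f t ∂ν = ENNReal.ofReal (t2 - t1) := by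
    rw [← ofReal_integral_eq_lintegral_ofReal hI hnn, integral_add hIu hone, hintν, hconst,
      zero_add]
  have hwd : ν.withDensity f = ν.withDensity 1 := by
    rw [withDensity_one]
    have hfin : IsFiniteMeasure (ν.withDensity f) := by
      constructor
      rw [withDensity_apply _ MeasurableSet.univ, Measure.restrict_univ, hlint]
      exact ENNReal.ofReal_lt_top
    refine Measure.ext_of_Ioc_finite _ _ ?_ ?_
    · rw [withDensity_apply _ MeasurableSet.univ, Measure.restrict_univ, hlint, hν,
        Measure.restrict_apply_univ, Real.volume_Ioc]
    · intro c d hcd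
      set c' := max c t1 with hc'
      set d' := min d t2 with hd'
      have hrr : ν.restrict (Ioc c d) = volume.restrict (Ioc c' d') := by
        rw [hν, Measure.restrict_restrict measurableSet_Ioc, Ioc_inter_Ioc]
      have hrhs : ν (Ioc c d) = volume (Ioc c' d') := by
        rw [hν, Measure.restrict_apply measurableSet_Ioc, Ioc_inter_Ioc]
      rw [withDensity_apply _ measurableSet_Ioc]
      have hch : ∫⁻ t in Ioc c d, f t ∂ν = ∫⁻ t, f t ∂(volume.restrict (Ioc c' d')) := by
        rw [← hrr]
      rw [hch, hrhs]
      rcases le_or_gt d' c' with h | h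
      · rw [Ioc_eq_empty (not_lt.2 h)]
        simp
      · have hsub : Ioc c' d' ⊆ Ioc t1 t2 := Ioc_subset_Ioc (le_max_right _ _) (min_le_right _ _)
        have hle : volume.restrict (Ioc c' d') ≤ ν := by
          rw [hν]; exact Measure.restrict_mono hsub le_rfl
        have hI' : Integrable (fun t => u t + 1) (volume.restrict (Ioc c' d')) :=
          hI.mono_measure hle
        have hIu' : Integrable u (volume.restrict (Ioc c' d')) := hIu.mono_measure hle
        have hone' : Integrable (fun _ : ℝ => (1:ℝ)) (volume.restrict (Ioc c' d')) :=
          hone.mono_measure hle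
        have hnn' : 0 ≤ᵐ[volume.restrict (Ioc c' d')] fun t => u t + 1 :=
          hnn.filter_mono (ae_mono hle)
        rw [← ofReal_integral_eq_lintegral_ofReal hI' hnn', integral_add hIu' hone']
        have h0 : ∫ t, u t ∂(volume.restrict (Ioc c' d')) = 0 :=
          hint c' d' (le_max_right _ _) h.le (min_le_right _ _)
        rw [h0, zero_add, integral_const, Real.volume_Ioc]
        simp [ENNReal.toReal_ofReal (by linarith : (0:ℝ) ≤ d' - c')]
  have hfeq : f =ᵐ[ν] 1 :=
    (withDensity_eq_iff_of_sigmaFinite hf_aem aemeasurable_const).mp hwd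
  filter_upwards [hfeq, hnn] with t h1 h2
  have : ENNReal.ofReal (u t + 1) = 1 := h1
  rw [ENNReal.ofReal_eq_one] at this
  linarith

noncomputable section

set_option maxHeartbeats 2000000 in
/-- Proposition 3.6: the trajectory of a local minimizer cannot
stay at the lower boundary `-1` on any nondegenerate subsegment of `[t0,T]`. -/
theorem fp3_no_lower_boundary_segment
    (a lam t0 T x0 : ℝ) (hal : lam < a) (hlam : 0 < lam)
    (ht0 : 0 ≤ t0) (htT : t0 < T) (hx0 : x0 ∈ Icc (-1 : ℝ) 1)
    (xb ub : ℝ → ℝ) (hmin : FP3LocalMin a lam t0 T x0 xb ub) :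
    ¬ ∃ t1 t2 : ℝ, t0 ≤ t1 ∧ t1 < t2 ∧ t2 ≤ T ∧ ∀ t ∈ Icc t1 t2, xb t = -1 := by
  rintro ⟨t1, t2, ht1, h12, ht2, hflat⟩
  obtain ⟨⟨hu_meas, hu_mem, hx_eq, hx_mem⟩, δ, hδ, hloc⟩ := hmin
  have ha : (0:ℝ) < a := hlam.trans hal
  set m : ℝ := (t1 + t2)/2 with hm
  have hm1 : t1 < m := by rw [hm]; linarith
  have hm2 : m < t2 := by rw [hm]; linarith
  have h1T : t1 ∈ Icc t0 T := ⟨ht1, le_trans h12.le ht2⟩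
  -- interval integrability of ub on subintervals of [t0,T]
  have huInt : ∀ c d : ℝ, t0 ≤ c → c ≤ d → d ≤ T → IntervalIntegrable ub volume c d := by
    intro c d hc hcd hd
    rw [intervalIntegrable_iff]
    have hsub : Set.uIoc c d ⊆ Icc t0 T := by
      rw [uIoc_of_le hcd]
      exact (Ioc_subset_Icc_self).trans (Icc_subset_Icc hc hd)
    have hle : volume.restrict (Set.uIoc c d) ≤ volume.restrict (Icc t0 T) :=
      Measure.restrict_mono hsub le_rfl
    refine Integrable.mono' (g := fun _ => (1:ℝ)) (integrableOn_const ?_)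
      (hu_meas.mono_measure hle)
      ((hu_mem.filter_mono (ae_mono hle)).mono fun t ht => ?_)
    · rw [uIoc_of_le hcd]; exact measure_Ioc_lt_top.ne
    · rw [Real.norm_eq_abs, abs_le]; exact ⟨ht.1, ht.2⟩
  -- the mean of ub vanishes on subintervals of [t1,t2]
  have hzero : ∀ t ∈ Icc t1 t2, ∫ s in t1..t, ub s = 0 := by
    intro t ht
    have htT' : t ∈ Icc t0 T := ⟨le_trans ht1 ht.1, le_trans ht.2 ht2⟩
    have h1 := hx_eq t htT'
    have h2 := hx_eq t1 h1T
    rw [hflat t ht] at h1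
    rw [hflat t1 ⟨le_rfl, h12.le⟩] at h2
    have hIab : IntervalIntegrable (fun s => -(a * ub s)) volume t0 t :=
      ((huInt t0 t le_rfl htT'.1 htT'.2).const_mul a).neg
    have hIac : IntervalIntegrable (fun s => -(a * ub s)) volume t0 t1 :=
      ((huInt t0 t1 le_rfl ht1 h1T.2).const_mul a).neg
    have hkey := intervalIntegral.integral_interval_sub_left hIab hIac
    have hsub0 : ∫ s in t1..t, -(a * ub s) = 0 := by
      rw [← hkey]; linarith
    have hconst : ∫ s in t1..t, -(a * ub s) = (-a) * ∫ s in t1..t, ub s := by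
      rw [← intervalIntegral.integral_const_mul]
      exact intervalIntegral.integral_congr fun s _ => by ring
    rw [hconst] at hsub0
    have := mul_eq_zero.1 hsub0
    rcases this with h | h
    · exact absurd h (by intro hh; nlinarith)
    · exact h
  -- hence ub = 0 a.e. on (t1, t2]
  have hU0 : ∀ᵐ t ∂(volume.restrict (Ioc t1 t2)), ub t = 0 := by
    have hsub : Ioc t1 t2 ⊆ Icc t0 T := fun x hx => ⟨le_trans ht1 hx.1.le, le_trans hx.2 ht2⟩
    have hle : volume.restrict (Ioc t1 t2) ≤ volume.restrict (Icc t0 T) :=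
      Measure.restrict_mono hsub le_rfl
    refine fp3_ae_zero t1 t2 h12 ub (hu_meas.mono_measure hle)
      (hu_mem.filter_mono (ae_mono hle)) ?_
    intro c d h1 h2 h3
    rw [← intervalIntegral.integral_of_le h2]
    have hc' := hzero c ⟨h1, le_trans h2 h3⟩
    have hd' := hzero d ⟨le_trans h1 h2, h3⟩
    have hIab : IntervalIntegrable ub volume t1 d :=
      huInt t1 d ht1 (le_trans h1 h2) (le_trans h3 ht2)
    have hIac : IntervalIntegrable ub volume t1 c :=
      huInt t1 c ht1 h1 (le_trans (le_trans h2 h3) ht2)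
    rw [← intervalIntegral.integral_interval_sub_left hIab hIac, hc', hd', sub_zero]
  -- the step function g and its primitive G
  set g : ℝ → ℝ := fun t => if t ∈ Ioc t1 m then (-1:ℝ) else if t ∈ Ioc m t2 then 1 else 0
    with hgdef
  have hg0 : ∀ t, t ∉ Ioc t1 t2 → g t = 0 := by
    intro t ht
    rw [hgdef]
    dsimp only
    rw [if_neg (fun h => ht ⟨h.1, le_trans h.2 hm2.le⟩),
      if_neg (fun h => ht ⟨lt_trans hm1 h.1, h.2⟩)]
  have hgbd : ∀ t, |g t| ≤ 1 := by
    intro t; rw [hgdef]; dsimp only; split_ifs <;> norm_num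
  have hgmeas : Measurable g := by
    rw [hgdef]
    exact Measurable.ite measurableSet_Ioc measurable_const
      (Measurable.ite measurableSet_Ioc measurable_const measurable_const)
  have hgInt : ∀ c d : ℝ, IntervalIntegrable g volume c d := by
    intro c d
    rw [intervalIntegrable_iff]
    refine Integrable.mono' (g := fun _ => (1:ℝ)) (integrableOn_const ?_)
      (hgmeas.aestronglyMeasurable.restrict) (ae_of_all _ fun t => ?_)
    · exact measure_Ioc_lt_top.ne
    · rw [Real.norm_eq_abs]; exact hgbd t
  set G : ℝ → ℝ := fun t => ∫ s in t0..t, g s with hGdef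
  have hGcont : Continuous G := by
    rw [hGdef]; exact intervalIntegral.continuous_primitive hgInt t0
  have hG1 : ∀ t, t ≤ t1 → G t = 0 := by
    intro t ht
    rw [hGdef]
    dsimp only
    have heq : EqOn g (fun _ => (0:ℝ)) (uIcc t0 t) := by
      intro x hx
      have hx1 : x ≤ t1 := by
        rcases mem_uIcc.1 hx with h | h
        · exact le_trans h.2 ht
        · exact le_trans h.2 ht1
      exact hg0 x (fun h => absurd hx1 (not_le.2 h.1))
    rw [intervalIntegral.integral_congr heq]
    simp
  have hGsplit : ∀ p q r : ℝ, G r = G q + ∫ s in q..r, g s := by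
    intro p q r
    rw [hGdef]
    dsimp only
    rw [intervalIntegral.integral_add_adjacent_intervals (hgInt t0 q) (hgInt q r)]
  have hG2 : ∀ t ∈ Icc t1 m, G t = -(t - t1) := by
    intro t ht
    rw [hGsplit t0 t1 t, hG1 t1 le_rfl, zero_add]
    have hcg : ∀ᵐ x ∂(volume : Measure ℝ), x ∈ Set.uIoc t1 t → g x = -1 := by
      refine ae_of_all _ fun x hx => ?_
      rw [uIoc_of_le ht.1] at hx
      rw [hgdef]
      dsimp only
      rw [if_pos ⟨hx.1, le_trans hx.2 ht.2⟩]
    rw [intervalIntegral.integral_congr_ae hcg, intervalIntegral.integral_const]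
    simp [smul_eq_mul]
  have hG3 : ∀ t ∈ Icc m t2, G t = t - t2 := by
    intro t ht
    rw [hGsplit t0 m t, hG2 m ⟨hm1.le, le_rfl⟩]
    have hcg : ∀ᵐ x ∂(volume : Measure ℝ), x ∈ Set.uIoc m t → g x = 1 := by
      refine ae_of_all _ fun x hx => ?_
      rw [uIoc_of_le ht.1] at hx
      rw [hgdef]
      dsimp only
      rw [if_neg (fun h => absurd hx.1 (not_lt.2 h.2)), if_pos ⟨hx.1, le_trans hx.2 ht.2⟩]
    rw [intervalIntegral.integral_congr_ae hcg, intervalIntegral.integral_const]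
    rw [hm]; simp [smul_eq_mul]; ring
  have hG4 : ∀ t, t2 ≤ t → G t = 0 := by
    intro t ht
    rw [hGsplit t0 t2 t, hG3 t2 ⟨hm2.le, le_rfl⟩]
    have hcg : ∀ᵐ x ∂(volume : Measure ℝ), x ∈ Set.uIoc t2 t → g x = 0 := by
      refine ae_of_all _ fun x hx => ?_
      rw [uIoc_of_le ht] at hx
      exact hg0 x (fun h => absurd hx.1 (not_lt.2 h.2))
    rw [intervalIntegral.integral_congr_ae hcg]
    simp
  have hGrange : ∀ t, -(t2 - t1) ≤ G t ∧ G t ≤ 0 := by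
    intro t
    rcases le_total t t1 with h | h
    · rw [hG1 t h]; constructor <;> linarith
    rcases le_total t m with h' | h'
    · rw [hG2 t ⟨h, h'⟩]; constructor <;> [linarith; linarith]
    rcases le_total t t2 with h'' | h''
    · rw [hG3 t ⟨h', h''⟩]; constructor <;> [linarith; linarith]
    · rw [hG4 t h'']; constructor <;> linarith
  -- choice of the perturbation size
  set c : ℝ := min (min 1 (2 / (a * (t2 - t1)))) (δ / (a * (T - t0) + 1)) with hcdef
  have hA1 : (0:ℝ) < a * (t2 - t1) := by nlinarith
  have hA2 : (0:ℝ) < a * (T - t0) + 1 := by nlinarith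
  have hc0 : 0 < c := by
    refine lt_min (lt_min one_pos (div_pos two_pos hA1)) (div_pos hδ hA2)
  have hc1 : c ≤ 1 := le_trans (min_le_left _ _) (min_le_left _ _)
  have hc2 : a * c * (t2 - t1) ≤ 2 := by
    have h := le_trans (min_le_left (min 1 (2 / (a * (t2 - t1)))) (δ / (a * (T - t0) + 1)))
      (min_le_right 1 (2 / (a * (t2 - t1))))
    have := (le_div_iff₀ hA1).1 h
    nlinarith
  have hc3 : a * c * (T - t0) ≤ δ := by
    have h := min_le_right (min 1 (2 / (a * (t2 - t1)))) (δ / (a * (T - t0) + 1))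
    have h' := (le_div_iff₀ hA2).1 h
    nlinarith
  -- the perturbed process
  set v : ℝ → ℝ := fun t => ub t + c * g t with hvdef
  set y : ℝ → ℝ := fun t => xb t - a * c * G t with hydef
  have hfeas : FP3Feasible a t0 T x0 y v := by
    refine ⟨?_, ?_, ?_, ?_⟩
    · exact hu_meas.add ((hgmeas.const_mul c).aestronglyMeasurable.restrict)
    · have hU0' : ∀ᵐ t ∂(volume.restrict (Icc t0 T)), t ∈ Ioc t1 t2 → ub t = 0 :=
        ae_restrict_of_ae (ae_imp_of_ae_restrict hU0)
      filter_upwards [hu_mem, hU0'] with t htu himp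
      by_cases htI : t ∈ Ioc t1 t2
      · have h0 : ub t = 0 := himp htI
        have hbd : |c * g t| ≤ c := by
          rw [abs_mul, abs_of_pos hc0]
          nlinarith [hgbd t, abs_nonneg (g t)]
        rw [abs_le] at hbd
        rw [hvdef]
        dsimp only
        rw [h0, zero_add]
        exact ⟨by linarith, by linarith⟩
      · rw [hvdef]
        dsimp only
        rw [hg0 t htI, mul_zero, add_zero]
        exact htu
    · intro t ht
      have heq : EqOn (fun s => -(a * v s)) (fun s => -(a * ub s) + (-(a*c)) * g s)
          (uIcc t0 t) := by
        intro s _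
        rw [hvdef]
        dsimp only
        ring
      rw [hydef]
      dsimp only
      have hIa : IntervalIntegrable (fun s => -(a * ub s)) volume t0 t :=
        ((huInt t0 t le_rfl ht.1 ht.2).const_mul a).neg
      have hIb : IntervalIntegrable (fun s => (-(a*c)) * g s) volume t0 t :=
        (hgInt t0 t).const_mul _
      rw [intervalIntegral.integral_congr heq,
        intervalIntegral.integral_add hIa hIb,
        intervalIntegral.integral_const_mul, hx_eq t ht, hGdef]
      dsimp only
      ring
    · intro t ht
      rw [hydef]
      dsimp only
      by_cases htI : t ∈ Icc t1 t2
      · rw [hflat t htI]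
        have h1 := (hGrange t).1
        have h2 := (hGrange t).2
        have hac : 0 < a * c := mul_pos ha hc0
        constructor
        · nlinarith
        · nlinarith
      · have hG0 : G t = 0 := by
          rcases not_and_or.1 (fun hh : t1 ≤ t ∧ t ≤ t2 => htI ⟨hh.1, hh.2⟩) with h | h
          · exact hG1 t (le_of_not_ge h)
          · exact hG4 t (le_of_not_ge h)
        rw [hG0, mul_zero, sub_zero]
        exact hx_mem t ht
  -- the W^{1,1} distance is at most δ
  have hW : (∫ t in t0..T, |(-(a * v t)) - (-(a * ub t))|) ≤ δ := by
    have heq : EqOn (fun t => |(-(a * v t)) - (-(a * ub t))|) (fun t => a * c * |g t|)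
        (uIcc t0 T) := by
      intro t _
      show |(-(a * v t)) - (-(a * ub t))| = a * c * |g t|
      have h1 : (-(a * v t)) - (-(a * ub t)) = -(a * c * g t) := by
        rw [hvdef]; dsimp only; ring
      rw [h1, abs_neg, abs_mul, abs_of_pos (mul_pos ha hc0)]
    rw [intervalIntegral.integral_congr heq]
    have hmono : ∫ t in t0..T, a * c * |g t| ≤ ∫ _t in t0..T, a * c := by
      refine intervalIntegral.integral_mono_on htT.le (((hgInt t0 T).abs).const_mul _)
        intervalIntegrable_const fun t _ => ?_
      nlinarith [hgbd t, abs_nonneg (g t), mul_pos ha hc0]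
    have hconst : ∫ _t in t0..T, a * c = a * c * (T - t0) := by
      rw [intervalIntegral.integral_const, smul_eq_mul]; ring
    rw [hconst] at hmono
    linarith
  -- integrability of the cost integrands
  have hIOc : volume.restrict (Ioc t0 T) ≤ volume.restrict (Icc t0 T) :=
    Measure.restrict_mono Ioc_subset_Icc_self le_rfl
  have hexp : Continuous fun t : ℝ => Real.exp (-(lam * t)) :=
    Real.continuous_exp.comp ((continuous_const.mul continuous_id).neg)
  have hCint : IntegrableOn (fun s => -(a * ub s)) (uIcc t0 T) volume := by
    rw [uIcc_of_le htT.le]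
    refine Integrable.mono' (g := fun _ => a) (integrableOn_const measure_Icc_lt_top.ne)
      ((hu_meas.const_mul a).neg) (hu_mem.mono fun t ht => ?_)
    rw [Real.norm_eq_abs, abs_neg, abs_mul, abs_of_pos ha]
    nlinarith [abs_le.2 ⟨ht.1, ht.2⟩, abs_nonneg (ub t)]
  have hCcont : ContinuousOn (fun t => x0 + ∫ s in t0..t, -(a * ub s)) (Icc t0 T) := by
    have h := intervalIntegral.continuousOn_primitive_interval hCint
    rw [uIcc_of_le htT.le] at h
    exact continuousOn_const.add h
  have hxb_aesm : AEStronglyMeasurable xb (volume.restrict (Ioc t0 T)) := by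
    have hCm : AEStronglyMeasurable (fun t => x0 + ∫ s in t0..t, -(a * ub s))
        (volume.restrict (Ioc t0 T)) :=
      (hCcont.aestronglyMeasurable measurableSet_Icc).mono_measure hIOc
    refine hCm.congr ?_
    refine (ae_restrict_iff' measurableSet_Ioc).2 (ae_of_all _ fun x hx => ?_)
    exact (hx_eq x (Ioc_subset_Icc_self hx)).symm
  have hI1 : IntervalIntegrable (fun t => -(Real.exp (-(lam * t)) * (xb t + ub t)))
      volume t0 T := by
    rw [intervalIntegrable_iff, uIoc_of_le htT.le]
    refine Integrable.mono' (g := fun _ => (2:ℝ))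
      (integrableOn_const measure_Ioc_lt_top.ne)
      (((hexp.aestronglyMeasurable.restrict).mul
        (hxb_aesm.add (hu_meas.mono_measure hIOc))).neg) ?_
    filter_upwards [hu_mem.filter_mono (ae_mono hIOc), ae_restrict_mem measurableSet_Ioc]
      with t htu htI
    have hxbt := hx_mem t (Ioc_subset_Icc_self htI)
    have het : Real.exp (-(lam * t)) ≤ 1 := by
      rw [Real.exp_le_one_iff]
      nlinarith [htI.1]
    have hpos : (0:ℝ) < Real.exp (-(lam * t)) := Real.exp_pos _
    rw [Real.norm_eq_abs, abs_neg, abs_mul, abs_of_pos hpos]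
    have habs : |xb t + ub t| ≤ 2 := by
      rw [abs_le]
      exact ⟨by nlinarith [hxbt.1, htu.1], by nlinarith [hxbt.2, htu.2]⟩
    nlinarith [abs_nonneg (xb t + ub t)]
  have hI2 : IntervalIntegrable (fun t => -(Real.exp (-(lam * t)) * (c * g t - a*c*G t)))
      volume t0 T := by
    rw [intervalIntegrable_iff, uIoc_of_le htT.le]
    have hmeas2 : Measurable (fun t => -(Real.exp (-(lam * t)) * (c * g t - a*c*G t))) :=
      (hexp.measurable.mul ((hgmeas.const_mul c).sub
        (hGcont.measurable.const_mul (a*c)))).neg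
    refine Integrable.mono' (g := fun _ => c + a*c*(t2-t1))
      (integrableOn_const measure_Ioc_lt_top.ne)
      (hmeas2.aestronglyMeasurable.restrict) ?_
    filter_upwards [ae_restrict_mem measurableSet_Ioc] with t htI
    have het : Real.exp (-(lam * t)) ≤ 1 := by
      rw [Real.exp_le_one_iff]
      nlinarith [htI.1]
    have hpos : (0:ℝ) < Real.exp (-(lam * t)) := Real.exp_pos _
    rw [Real.norm_eq_abs, abs_neg, abs_mul, abs_of_pos hpos]
    have hg' := abs_le.1 (hgbd t)
    have h2 := (hGrange t).1
    have h3 := (hGrange t).2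
    have hac : 0 < a * c := mul_pos ha hc0
    have habs : |c * g t - a*c*G t| ≤ c + a*c*(t2-t1) := by
      rw [abs_le]
      exact ⟨by nlinarith, by nlinarith⟩
    nlinarith [abs_nonneg (c * g t - a*c*G t)]
  -- cost decomposition
  have hcosteq : FP3Cost lam t0 T y v
      = FP3Cost lam t0 T xb ub
        + ∫ t in t0..T, -(Real.exp (-(lam * t)) * (c * g t - a*c*G t)) := by
    simp only [FP3Cost]
    rw [← intervalIntegral.integral_add hI1 hI2]
    refine intervalIntegral.integral_congr fun t _ => ?_
    show -(Real.exp (-(lam * t)) * (y t + v t)) = _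
    rw [hydef, hvdef]
    dsimp only
    ring
  -- piecewise evaluation of the correction integral
  have hsubI : ∀ p q : ℝ, t0 ≤ p → q ≤ T → p ≤ q → IntervalIntegrable
      (fun t => -(Real.exp (-(lam * t)) * (c * g t - a*c*G t))) volume p q := by
    intro p q hp hq hpq
    refine hI2.mono_set ?_
    rw [uIcc_of_le hpq, uIcc_of_le htT.le]
    exact Icc_subset_Icc hp hq
  have e01 : ∫ t in t0..t1, -(Real.exp (-(lam * t)) * (c * g t - a*c*G t)) = 0 := by
    have heq : EqOn (fun t => -(Real.exp (-(lam * t)) * (c * g t - a*c*G t)))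
        (fun _ => (0:ℝ)) (uIcc t0 t1) := by
      intro x hx
      rw [uIcc_of_le ht1] at hx
      show -(Real.exp (-(lam * x)) * (c * g x - a*c*G x)) = 0
      rw [hg0 x (fun h => absurd hx.2 (not_le.2 h.1)), hG1 x hx.2]
      ring
    rw [intervalIntegral.integral_congr heq]
    simp
  have e12 : ∫ t in t1..m, -(Real.exp (-(lam * t)) * (c * g t - a*c*G t))
      = (Real.exp (-(lam*m)) * ((-(-(a*c))/lam - (c + a*c*t1))/lam + (-(-(a*c))/lam) * m))
        - (Real.exp (-(lam*t1)) * ((-(-(a*c))/lam - (c + a*c*t1))/lam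
            + (-(-(a*c))/lam) * t1)) := by
    have heq : ∀ᵐ x ∂(volume : Measure ℝ), x ∈ Set.uIoc t1 m →
        -(Real.exp (-(lam * x)) * (c * g x - a*c*G x))
          = Real.exp (-(lam*x)) * ((c + a*c*t1) + (-(a*c))*x) := by
      refine ae_of_all _ fun x hx => ?_
      rw [uIoc_of_le hm1.le] at hx
      rw [hgdef]
      dsimp only
      rw [if_pos hx, hG2 x ⟨hx.1.le, hx.2⟩]
      ring
    rw [intervalIntegral.integral_congr_ae heq,
      fp3_integral_exp_linear lam _ _ (ne_of_gt hlam) t1 m]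
  have e23 : ∫ t in m..t2, -(Real.exp (-(lam * t)) * (c * g t - a*c*G t))
      = (Real.exp (-(lam*t2)) * ((-(a*c)/lam - (-c - a*c*t2))/lam + (-(a*c)/lam) * t2))
        - (Real.exp (-(lam*m)) * ((-(a*c)/lam - (-c - a*c*t2))/lam + (-(a*c)/lam) * m)) := by
    have heq : ∀ᵐ x ∂(volume : Measure ℝ), x ∈ Set.uIoc m t2 →
        -(Real.exp (-(lam * x)) * (c * g x - a*c*G x))
          = Real.exp (-(lam*x)) * ((-c - a*c*t2) + (a*c)*x) := by
      refine ae_of_all _ fun x hx => ?_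
      rw [uIoc_of_le hm2.le] at hx
      rw [hgdef]
      dsimp only
      rw [if_neg (fun h => absurd hx.1 (not_lt.2 h.2)), if_pos hx,
        hG3 x ⟨hx.1.le, hx.2⟩]
      ring
    rw [intervalIntegral.integral_congr_ae heq,
      fp3_integral_exp_linear lam _ _ (ne_of_gt hlam) m t2]
  have e2T : ∫ t in t2..T, -(Real.exp (-(lam * t)) * (c * g t - a*c*G t)) = 0 := by
    have heq : ∀ᵐ x ∂(volume : Measure ℝ), x ∈ Set.uIoc t2 T →
        -(Real.exp (-(lam * x)) * (c * g x - a*c*G x)) = 0 := by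
      refine ae_of_all _ fun x hx => ?_
      rw [uIoc_of_le ht2] at hx
      rw [hg0 x (fun h => absurd hx.1 (not_lt.2 h.2)), hG4 x hx.1.le]
      ring
    rw [intervalIntegral.integral_congr_ae heq]
    simp
  have hs1 := intervalIntegral.integral_add_adjacent_intervals
    (hsubI t0 t1 le_rfl (le_trans h12.le ht2) ht1)
    (hsubI t1 m ht1 (le_trans hm2.le ht2) hm1.le)
  have hs2 := intervalIntegral.integral_add_adjacent_intervals
    (hsubI t0 m le_rfl (le_trans hm2.le ht2) (le_trans ht1 hm1.le))
    (hsubI m t2 (le_trans ht1 hm1.le) ht2 hm2.le)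
  have hs3 := intervalIntegral.integral_add_adjacent_intervals
    (hsubI t0 t2 le_rfl ht2 (le_trans ht1 h12.le))
    (hsubI t2 T (le_trans ht1 h12.le) le_rfl ht2)
  have htot : ∫ t in t0..T, -(Real.exp (-(lam * t)) * (c * g t - a*c*G t))
      = -(c*(a-lam)/lam^2) * (Real.exp (-(lam*t1)) - 2*Real.exp (-(lam*m))
          + Real.exp (-(lam*t2))) := by
    rw [← hs3, ← hs2, ← hs1, e01, e12, e23, e2T, zero_add, add_zero]
    have hl2 : lam ≠ 0 := ne_of_gt hlam
    rw [hm]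
    field_simp
    ring
  have hΔ : 0 < Real.exp (-(lam*t1)) - 2*Real.exp (-(lam*m)) + Real.exp (-(lam*t2)) := by
    have hA : Real.exp (-(lam*t1)) = Real.exp (-(lam*t1)/2) * Real.exp (-(lam*t1)/2) := by
      rw [← Real.exp_add]; congr 1; ring
    have hB : Real.exp (-(lam*t2)) = Real.exp (-(lam*t2)/2) * Real.exp (-(lam*t2)/2) := by
      rw [← Real.exp_add]; congr 1; ring
    have hAB : Real.exp (-(lam*m)) = Real.exp (-(lam*t1)/2) * Real.exp (-(lam*t2)/2) := by
      rw [← Real.exp_add]; congr 1; rw [hm]; ring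
    have hlt : Real.exp (-(lam*t2)/2) < Real.exp (-(lam*t1)/2) := by
      apply Real.exp_lt_exp.2
      nlinarith
    rw [hA, hB, hAB]
    nlinarith [mul_pos (sub_pos.2 hlt) (sub_pos.2 hlt)]
  have hS : ∫ t in t0..T, -(Real.exp (-(lam * t)) * (c * g t - a*c*G t)) < 0 := by
    rw [htot]
    have h1 : 0 < c*(a-lam)/lam^2 :=
      div_pos (mul_pos hc0 (by linarith)) (by positivity)
    nlinarith
  have hcomp := hloc y v hfeas hW
  rw [hcosteq] at hcomp
  linarith





end
end

section
/- Let λ > 0 and define Δ(t1,t2) := e^{−λt1} − 2e^{−λ(t1+t2)/2} + e^{−λt2}. Let s < t be reals and let m ≥ 2 be an integer, and let s < τ1^{(2)} < τ2^{(2)} < τ1^{(3)} < τ2^{(3)} < … < τ1^{(m)} < τ2^{(m)} < t be points partitioning (s,t) by m−1 disjoint subintervals. Then Σ_{i=2}^{m} Δ(τ1^{(i)}, τ2^{(i)}) < Δ(s, t). -/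
open MeasureTheory Set

noncomputable section

/-- finitely many ordered disjoint subintervals of `(s,t)` give a
strict inequality for the partial sums of `Δ`. -/
theorem fp3_delta_partial_sum
    (lam : ℝ) (hlam : 0 < lam) (s t : ℝ) (hst : s < t)
    (m : ℕ) (hm : 2 ≤ m) (τ1 τ2 : ℕ → ℝ)
    (hs : s < τ1 2) (ht : τ2 m < t)
    (hord : ∀ i, 2 ≤ i → i ≤ m → τ1 i < τ2 i)
    (hsep : ∀ i, 2 ≤ i → i < m → τ2 i < τ1 (i + 1)) :
    ∑ i ∈ Finset.Icc 2 m, FP3Delta lam (τ1 i) (τ2 i) < FP3Delta lam s t := by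
  set f : ℝ → ℝ := fun x => Real.exp (-(lam * x) / 2) with hf
  have hfmono : ∀ a b : ℝ, a < b → f b < f a := by
    intro a b hab
    simp only [hf]
    apply Real.exp_lt_exp.2
    nlinarith
  have hd : ∀ a b : ℝ, FP3Delta lam a b = (f a - f b) ^ 2 := by
    intro a b
    have h1 : f a * f a = Real.exp (-(lam * a)) := by
      simp only [hf]; rw [← Real.exp_add]; congr 1; ring
    have h2 : f b * f b = Real.exp (-(lam * b)) := by
      simp only [hf]; rw [← Real.exp_add]; congr 1; ring
    have h3 : f a * f b = Real.exp (-(lam * (a + b) / 2)) := by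
      simp only [hf]; rw [← Real.exp_add]; congr 1; ring
    simp only [FP3Delta]
    nlinarith [h1, h2, h3]
  -- telescoping strict bound
  have key : ∀ n, 2 ≤ n → ∀ t' : ℝ, τ2 n < t' →
      (∀ i, 2 ≤ i → i ≤ n → τ1 i < τ2 i) →
      (∀ i, 2 ≤ i → i < n → τ2 i < τ1 (i + 1)) →
      ∑ i ∈ Finset.Icc 2 n, (f (τ1 i) - f (τ2 i)) < f s - f t' := by
    intro n hn
    induction n, hn using Nat.le_induction with
    | base =>
      intro t' ht' hord' _
      rw [show Finset.Icc 2 2 = {2} by rfl, Finset.sum_singleton]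
      have h1 := hfmono s (τ1 2) hs
      have h2 := hfmono (τ2 2) t' ht'
      linarith
    | succ n hn ih =>
      intro t' ht' hord' hsep'
      rw [Finset.sum_Icc_succ_top (by omega : 2 ≤ n + 1)]
      have h1 : ∑ i ∈ Finset.Icc 2 n, (f (τ1 i) - f (τ2 i)) < f s - f (τ1 (n + 1)) := by
        apply ih (τ1 (n + 1)) (hsep' n hn (by omega))
        · intro i h2i hin; exact hord' i h2i (by omega)
        · intro i h2i hin; exact hsep' i h2i (by omega)
      have h2 := hfmono (τ2 (n + 1)) t' ht'
      linarith
  set g : ℕ → ℝ := fun i => f (τ1 i) - f (τ2 i) with hg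
  have hpos : ∀ i ∈ Finset.Icc 2 m, 0 < g i := by
    intro i hi
    rw [Finset.mem_Icc] at hi
    have := hfmono (τ1 i) (τ2 i) (hord i hi.1 hi.2)
    simp only [hg]; linarith
  set S := ∑ i ∈ Finset.Icc 2 m, g i with hS
  have hSlt : S < f s - f t := key m hm t ht hord hsep
  have hSpos : 0 < S := by
    apply Finset.sum_pos hpos
    exact ⟨2, Finset.mem_Icc.2 ⟨le_refl 2, hm⟩⟩
  have hsum : ∑ i ∈ Finset.Icc 2 m, FP3Delta lam (τ1 i) (τ2 i)
      = ∑ i ∈ Finset.Icc 2 m, g i ^ 2 := by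
    apply Finset.sum_congr rfl
    intro i _
    rw [hd]
  have hsq : ∑ i ∈ Finset.Icc 2 m, g i ^ 2 ≤ S * S := by
    calc ∑ i ∈ Finset.Icc 2 m, g i ^ 2
        ≤ ∑ i ∈ Finset.Icc 2 m, g i * S := by
          apply Finset.sum_le_sum
          intro i hi
          have hle : g i ≤ S :=
            Finset.single_le_sum (fun j hj => (hpos j hj).le) hi
          have := (hpos i hi).le
          nlinarith
      _ = S * S := by rw [← Finset.sum_mul, ← hS, mul_comm]
  rw [hsum, hd]
  have hft := hfmono s t hst
  nlinarith
end
end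

section
/- Let λ > 0 and define Δ(t1,t2) := e^{−λt1} − 2e^{−λ(t1+t2)/2} + e^{−λt2}. Let s < t be reals and let (τ1^{(i)}, τ2^{(i)})_{i≥2} be a countable family of pairwise disjoint nonempty open intervals contained in (s,t). Then the series Σ_{i=2}^{∞} Δ(τ1^{(i)}, τ2^{(i)}) converges and Σ_{i=2}^{∞} Δ(τ1^{(i)}, τ2^{(i)}) ≤ Δ(s, t). -/
open MeasureTheory Set

noncomputable section

/-- for a countable family of pairwise disjoint nonempty open
subintervals of `(s,t)`, the series of the `Δ`-values converges and its sum is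
at most `Δ(s,t)`. -/
theorem fp3_delta_series
    (lam : ℝ) (hlam : 0 < lam) (s t : ℝ) (hst : s < t)
    (τ1 τ2 : ℕ → ℝ)
    (hord : ∀ i, τ1 i < τ2 i)
    (hsub : ∀ i, Ioo (τ1 i) (τ2 i) ⊆ Ioo s t)
    (hdisj : ∀ i j, i ≠ j → Disjoint (Ioo (τ1 i) (τ2 i)) (Ioo (τ1 j) (τ2 j))) :
    Summable (fun i => FP3Delta lam (τ1 i) (τ2 i)) ∧
    ∑' i, FP3Delta lam (τ1 i) (τ2 i) ≤ FP3Delta lam s t := by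

  classical
  set f : ℝ → ℝ := fun r => Real.exp (-(lam * r) / 2) with hf
  have hfpos : ∀ r, 0 < f r := fun r => Real.exp_pos _
  have key : ∀ t1 t2 : ℝ, FP3Delta lam t1 t2 = (f t1 - f t2) ^ 2 := by
    intro t1 t2
    have e1 : f t1 * f t1 = Real.exp (-(lam * t1)) := by
      rw [hf]; rw [← Real.exp_add]; congr 1; ring
    have e2 : f t2 * f t2 = Real.exp (-(lam * t2)) := by
      rw [hf]; rw [← Real.exp_add]; congr 1; ring
    have e3 : f t1 * f t2 = Real.exp (-(lam * (t1 + t2) / 2)) := by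
      rw [hf]; rw [← Real.exp_add]; congr 1; ring
    unfold FP3Delta
    rw [← e1, ← e2, ← e3]; ring
  have hanti : StrictAnti f := by
    intro a b hab
    apply Real.exp_lt_exp.mpr
    nlinarith
  have hbounds : ∀ i, s ≤ τ1 i ∧ τ2 i ≤ t := by
    intro i
    exact (Set.Ioo_subset_Ioo_iff (hord i)).mp (hsub i)
  set a : ℕ → ℝ := fun i => f (τ1 i) - f (τ2 i) with ha
  have hapos : ∀ i, 0 < a i := fun i => sub_pos.mpr (hanti (hord i))
  set A : ℝ := f s - f t with hA
  have hApos : 0 < A := sub_pos.mpr (hanti hst)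
  -- images in f-space
  set I : ℕ → Set ℝ := fun i => Ioo (f (τ2 i)) (f (τ1 i)) with hI
  have hIsub : ∀ i, I i ⊆ Ioo (f t) (f s) := by
    intro i
    apply Set.Ioo_subset_Ioo
    · exact hanti.antitone (hbounds i).2
    · exact hanti.antitone (hbounds i).1
  -- explicit left-inverse of f on positives
  set g : ℝ → ℝ := fun x => -(2 * Real.log x) / lam with hg
  have hfg : ∀ x : ℝ, 0 < x → f (g x) = x := by
    intro x hx
    show Real.exp (-(lam * (-(2 * Real.log x) / lam)) / 2) = x
    have : -(lam * (-(2 * Real.log x) / lam)) / 2 = Real.log x := by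
      field_simp
    rw [this, Real.exp_log hx]
  have hIdisj : Pairwise (Function.onFun Disjoint I) := by
    intro i j hij
    rw [Function.onFun, Set.disjoint_left]
    intro x hxi hxj
    have hx : 0 < x := lt_trans (hfpos _) hxi.1
    have hgx : f (g x) = x := hfg x hx
    have h1 : g x ∈ Ioo (τ1 i) (τ2 i) := by
      constructor
      · have := hxi.2; rw [← hgx] at this; exact (hanti.lt_iff_gt.mp this)
      · have := hxi.1; rw [← hgx] at this; exact (hanti.lt_iff_gt.mp this)
    have h2 : g x ∈ Ioo (τ1 j) (τ2 j) := by
      constructor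
      · have := hxj.2; rw [← hgx] at this; exact (hanti.lt_iff_gt.mp this)
      · have := hxj.1; rw [← hgx] at this; exact (hanti.lt_iff_gt.mp this)
    exact Set.disjoint_left.mp (hdisj i j hij) h1 h2
  have hmeas : ∑' i, volume (I i) ≤ volume (Ioo (f t) (f s)) := by
    rw [← measure_iUnion hIdisj (fun i => measurableSet_Ioo)]
    exact measure_mono (Set.iUnion_subset hIsub)
  have hvol : ∀ i, volume (I i) = ENNReal.ofReal (a i) := by
    intro i; rw [hI]; simp [Real.volume_Ioo, ha]
  have hvolA : volume (Ioo (f t) (f s)) = ENNReal.ofReal A := by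
    simp [Real.volume_Ioo, hA]
  rw [hvolA] at hmeas
  simp only [hvol] at hmeas
  have hne : (∑' i, ENNReal.ofReal (a i)) ≠ ⊤ :=
    ne_top_of_le_ne_top ENNReal.ofReal_ne_top hmeas
  have hsumm : Summable a := by
    have := ENNReal.summable_toReal hne
    refine this.congr (fun i => ?_)
    exact ENNReal.toReal_ofReal (hapos i).le
  have htsum : ∑' i, a i ≤ A := by
    have h1 : (∑' i, ENNReal.ofReal (a i)).toReal ≤ (ENNReal.ofReal A).toReal :=
      ENNReal.toReal_mono ENNReal.ofReal_ne_top hmeas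
    rw [ENNReal.tsum_toReal_eq (fun i => ENNReal.ofReal_ne_top)] at h1
    simp only [ENNReal.toReal_ofReal (hapos _).le, ENNReal.toReal_ofReal hApos.le] at h1
    exact h1
  have haleA : ∀ i, a i ≤ A := by
    intro i
    calc a i ≤ ∑' j, a j := Summable.le_tsum hsumm i (fun j _ => (hapos j).le)
      _ ≤ A := htsum
  have hsq_le : ∀ i, a i ^ 2 ≤ A * a i := by
    intro i
    have : a i * a i ≤ A * a i := mul_le_mul_of_nonneg_right (haleA i) (hapos i).le
    nlinarith
  have hsumm2 : Summable (fun i => a i ^ 2) :=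
    Summable.of_nonneg_of_le (fun i => sq_nonneg _) hsq_le (hsumm.mul_left A)
  have htsum2 : ∑' i, a i ^ 2 ≤ A ^ 2 := by
    calc ∑' i, a i ^ 2 ≤ ∑' i, A * a i := Summable.tsum_le_tsum hsq_le hsumm2 (hsumm.mul_left A)
      _ = A * ∑' i, a i := tsum_mul_left
      _ ≤ A * A := mul_le_mul_of_nonneg_left htsum hApos.le
      _ = A ^ 2 := by ring
  constructor
  · refine hsumm2.congr (fun i => ?_)
    exact (key (τ1 i) (τ2 i)).symm
  · calc ∑' i, FP3Delta lam (τ1 i) (τ2 i) = ∑' i, a i ^ 2 :=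
          tsum_congr (fun i => key (τ1 i) (τ2 i))
      _ ≤ A ^ 2 := htsum2
      _ = FP3Delta lam s t := (key s t).symm
end
end

section
/- Suppose ρ := (1/λ)·ln(a/(a−λ)) satisfies ρ ≥ 2/a. Then problem (FP3) has a W^{1,1} local minimizer, every W^{1,1} local minimizer is a global minimizer, any two W^{1,1} local minimizers (x̄,ū) and (x̃,ũ) satisfy x̄ = x̃ on [t0,T] and ū = ũ a.e. on [t0,T], and the optimal trajectory x̄ is given by: (a) if T − t0 ≤ (1+x0)/a, then x̄(t) = x0 − a(t−t0) for all t ∈ [t0,T]; (b) if (1+x0)/a < T − t0 < (3−x0)/a, then, with t_ζ := (T + t0 − (1+x0)/a)/2, x̄(t) = x0 + a(t−t0) for t ∈ [t0, t_ζ] and x̄(t) = −1 − a(t−T) for t ∈ (t_ζ, T]; (c) if T − t0 ≥ (3−x0)/a, then x̄(t) = x0 + a(t−t0) for t ∈ [t0, t0+(1−x0)/a], x̄(t) = 1 for t ∈ (t0+(1−x0)/a, T−2/a], and x̄(t) = −1 − a(t−T) for t ∈ (T−2/a, T]. -/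
open MeasureTheory Set

noncomputable section

namespace FP3A

open scoped Interval

variable {a lam t0 T x0 : ℝ}

def Ee (a t0 T x0 : ℝ) : ℝ := max (x0 - a * (T - t0)) (-1)

def S1 (a t0 T x0 : ℝ) : ℝ :=
  min (t0 + (1 - x0) / a) ((T + t0) / 2 + (Ee a t0 T x0 - x0) / (2 * a))

def S2 (a t0 T x0 : ℝ) : ℝ := max (S1 a t0 T x0) (T - (1 - Ee a t0 T x0) / a)

def ub (a t0 T x0 : ℝ) : ℝ → ℝ := fun s =>
  if s ≤ S1 a t0 T x0 then -1 else if s ≤ S2 a t0 T x0 then (0 : ℝ) else 1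

def xb (a t0 T x0 : ℝ) : ℝ → ℝ := fun t =>
  x0 + a * (min t (S1 a t0 T x0) - t0) - a * (max t (S2 a t0 T x0) - S2 a t0 T x0)

section algebra

set_option linter.unusedSectionVars false

variable (ha : 0 < a) (htT : t0 ≤ T) (hx0l : -1 ≤ x0) (hx0r : x0 ≤ 1)
include ha htT hx0l hx0r

lemma neg_one_le_Ee : -1 ≤ Ee a t0 T x0 := le_max_right _ _

lemma Ee_lt : Ee a t0 T x0 < x0 + a * (T - t0) ∨ T = t0 := by
  rcases eq_or_lt_of_le htT with h | h
  · right; exact h.symm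
  · left
    apply max_lt <;> nlinarith

lemma Ee_le_one : Ee a t0 T x0 ≤ 1 := by
  apply max_le _ (by norm_num); nlinarith

lemma Ee_ge : x0 - a * (T - t0) ≤ Ee a t0 T x0 := le_max_left _ _

-- multiplied-out identities
omit htT hx0l hx0r in
lemma sz_id : 2 * a * ((T + t0) / 2 + (Ee a t0 T x0 - x0) / (2 * a)) =
    a * (T + t0) + (Ee a t0 T x0 - x0) := by field_simp [ha.ne']

omit htT hx0l hx0r in
lemma t1_id : a * ((t0 + (1 - x0) / a) - t0) = 1 - x0 := by field_simp [ha.ne']; ring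

omit htT hx0l hx0r in
lemma s2'_id : a * (T - (T - (1 - Ee a t0 T x0) / a)) = 1 - Ee a t0 T x0 := by field_simp [ha.ne']; ring

lemma t0_le_S1 : t0 ≤ S1 a t0 T x0 := by
  have h1 : t0 ≤ t0 + (1 - x0) / a := by
    have : 0 ≤ (1 - x0) / a := div_nonneg (by linarith) ha.le
    linarith
  have h2 := Ee_ge ha htT hx0l hx0r
  have h3 : t0 ≤ (T + t0) / 2 + (Ee a t0 T x0 - x0) / (2 * a) := by
    have hz := sz_id (t0 := t0) (T := T) (x0 := x0) ha
    rw [← mul_le_mul_iff_right₀ (by positivity : (0:ℝ) < 2 * a), hz]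
    nlinarith
  exact le_min h1 h3

lemma S1_le_S2 : S1 a t0 T x0 ≤ S2 a t0 T x0 := le_max_left _ _

lemma S1_lt_T : S1 a t0 T x0 < T ∨ T = t0 := by
  rcases Ee_lt ha htT hx0l hx0r with h | h
  · left
    have hz := sz_id (t0 := t0) (T := T) (x0 := x0) ha
    have : (T + t0) / 2 + (Ee a t0 T x0 - x0) / (2 * a) < T := by
      rw [← mul_lt_mul_iff_right₀ (by positivity : (0:ℝ) < 2 * a), hz]
      nlinarith
    exact lt_of_le_of_lt (min_le_right _ _) this
  · right; exact h

lemma Ee_lt_one (h : t0 < T) : Ee a t0 T x0 < 1 := by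
  apply max_lt _ (by norm_num); nlinarith

lemma S2_lt_T (h : t0 < T) : S2 a t0 T x0 < T := by
  apply max_lt
  · rcases S1_lt_T ha htT hx0l hx0r with h' | h'
    · exact h'
    · exact absurd h' h.ne'
  · have h0 := Ee_lt_one ha htT hx0l hx0r h
    have : 0 < (1 - Ee a t0 T x0) / a := div_pos (by linarith) ha
    linarith

lemma T_sub_S2 : T - S2 a t0 T x0 ≤ 2 / a := by
  have h1 : T - (1 - Ee a t0 T x0) / a ≤ S2 a t0 T x0 := le_max_right _ _
  have hE := neg_one_le_Ee ha htT hx0l hx0r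
  have h2 : (1 - Ee a t0 T x0) / a ≤ 2 / a := by
    gcongr
    linarith
  linarith

lemma A1 : x0 + a * (S1 a t0 T x0 - t0) ≤ 1 := by
  have h : S1 a t0 T x0 ≤ t0 + (1 - x0) / a := min_le_left _ _
  have h2 : a * (S1 a t0 T x0 - t0) ≤ a * ((t0 + (1 - x0) / a) - t0) := by
    apply mul_le_mul_of_nonneg_left _ ha.le; linarith
  rw [t1_id ha] at h2
  linarith

lemma key : x0 + a * (S1 a t0 T x0 - t0) = Ee a t0 T x0 + a * (T - S2 a t0 T x0) := by
  have hz := sz_id (t0 := t0) (T := T) (x0 := x0) ha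
  have ht1 := t1_id (t0 := t0) (x0 := x0) ha
  have hs2 := s2'_id (t0 := t0) (T := T) (x0 := x0) ha
  set E := Ee a t0 T x0 with hE
  set t1 := t0 + (1 - x0) / a with ht1d
  set sz := (T + t0) / 2 + (E - x0) / (2 * a) with hszd
  set s2' := T - (1 - E) / a with hs2d
  have hzero : x0 + a * (sz - t0) = E + a * (T - sz) := by nlinarith
  rcases le_total t1 sz with h | h
  · have hS1 : S1 a t0 T x0 = t1 := min_eq_left h
    have h4 : t1 ≤ s2' := by
      rw [← mul_le_mul_iff_right₀ ha]
      nlinarith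
    have hS2 : S2 a t0 T x0 = s2' := by rw [S2, hS1]; exact max_eq_right h4
    rw [hS1, hS2]
    nlinarith
  · have hS1 : S1 a t0 T x0 = sz := min_eq_right h
    have h3 : s2' ≤ sz := by
      rw [← mul_le_mul_iff_right₀ ha]
      nlinarith
    have hS2 : S2 a t0 T x0 = sz := by rw [S2, hS1]; exact max_eq_left h3
    rw [hS1, hS2]; exact hzero

lemma plateau (h : S1 a t0 T x0 < S2 a t0 T x0) : x0 + a * (S1 a t0 T x0 - t0) = 1 := by
  have hz := sz_id (t0 := t0) (T := T) (x0 := x0) ha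
  have ht1 := t1_id (t0 := t0) (x0 := x0) ha
  have hs2 := s2'_id (t0 := t0) (T := T) (x0 := x0) ha
  set E := Ee a t0 T x0 with hE
  set t1 := t0 + (1 - x0) / a with ht1d
  set sz := (T + t0) / 2 + (E - x0) / (2 * a) with hszd
  set s2' := T - (1 - E) / a with hs2d
  have hzero : x0 + a * (sz - t0) = E + a * (T - sz) := by nlinarith
  rcases le_total t1 sz with hc | hc
  · have hS1 : S1 a t0 T x0 = t1 := min_eq_left hc
    rw [hS1]; nlinarith
  · -- then S1 = sz and S2 = sz, contradiction with h
    have hS1 : S1 a t0 T x0 = sz := min_eq_right hc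
    have h3 : s2' ≤ sz := by
      rw [← mul_le_mul_iff_right₀ ha]
      nlinarith
    have hS2 : S2 a t0 T x0 = sz := by rw [S2, hS1]; exact max_eq_left h3
    rw [hS1, hS2] at h; exact absurd h (lt_irrefl _)

end algebra


lemma ub_meas : Measurable (ub a t0 T x0) := by
  unfold ub
  exact Measurable.ite measurableSet_Iic measurable_const
    (Measurable.ite measurableSet_Iic measurable_const measurable_const)

lemma ub_abs_le (s : ℝ) : |ub a t0 T x0 s| ≤ 1 := by
  unfold ub
  split_ifs <;> norm_num

/-- bounded measurable functions are interval integrable -/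
lemma bdd_intervalIntegrable {f : ℝ → ℝ} {C p q : ℝ}
    (hm : AEStronglyMeasurable f (volume.restrict (Ι p q)))
    (hb : ∀ᵐ s ∂(volume.restrict (Ι p q)), |f s| ≤ C) :
    IntervalIntegrable f volume p q := by
  rw [intervalIntegrable_iff]
  haveI : IsFiniteMeasure (volume.restrict (Ι p q)) :=
    ⟨by rw [Measure.restrict_apply_univ]; exact measure_Ioc_lt_top⟩
  refine Integrable.mono' (integrable_const C) hm ?_
  simpa [Real.norm_eq_abs] using hb

lemma ub_intInt (p q : ℝ) : IntervalIntegrable (fun s => -(a * ub a t0 T x0 s)) volume p q := by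
  apply bdd_intervalIntegrable (C := |a| * 1)
  · exact ((ub_meas.const_mul a).neg).aestronglyMeasurable
  · filter_upwards with s
    rw [abs_neg, abs_mul]
    exact mul_le_mul_of_nonneg_left (ub_abs_le s) (abs_nonneg a)

/-- value of the primitive of the optimal control -/
lemma ub_integral (h01 : t0 ≤ S1 a t0 T x0) (h12 : S1 a t0 T x0 ≤ S2 a t0 T x0)
    {t : ℝ} (ht : t0 ≤ t) :
    ∫ s in t0..t, -(a * ub a t0 T x0 s) =
      a * (min t (S1 a t0 T x0) - t0) - a * (max t (S2 a t0 T x0) - S2 a t0 T x0) := by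
  set σ1 := S1 a t0 T x0
  set σ2 := S2 a t0 T x0
  have case1 : ∀ r, t0 ≤ r → r ≤ σ1 → ∫ s in t0..r, -(a * ub a t0 T x0 s) = a * (r - t0) := by
    intro r h0 h1
    have : EqOn (fun s => -(a * ub a t0 T x0 s)) (fun _ => a) (uIcc t0 r) := by
      intro s hs
      rw [uIcc_of_le h0, mem_Icc] at hs
      have : s ≤ σ1 := le_trans hs.2 h1
      simp only [show ub a t0 T x0 s = -1 from if_pos this]
      ring
    rw [intervalIntegral.integral_congr this, intervalIntegral.integral_const, smul_eq_mul]
    ring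
  have case2 : ∀ r, t0 ≤ r → r ≤ σ2 → ∫ s in t0..r, -(a * ub a t0 T x0 s) =
      a * (min r σ1 - t0) := by
    intro r h0 h2
    rcases le_total r σ1 with h | h
    · rw [case1 r h0 h, min_eq_left h]
    · rw [← intervalIntegral.integral_add_adjacent_intervals (b := σ1)
        (ub_intInt t0 σ1) (ub_intInt σ1 r), case1 σ1 h01 le_rfl]
      have : ∫ s in σ1..r, -(a * ub a t0 T x0 s) = 0 := by
        rw [intervalIntegral.integral_congr_ae (g := fun _ => (0:ℝ))]
        · simp
        · filter_upwards with s hs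
          rw [uIoc_of_le h, mem_Ioc] at hs
          have h1 : ¬ s ≤ σ1 := not_le.mpr hs.1
          have h2' : s ≤ σ2 := le_trans hs.2 h2
          rw [show ub a t0 T x0 s = 0 from (if_neg h1).trans (if_pos h2')]
          ring
      rw [this, min_eq_right h]
      ring
  rcases le_total t σ2 with h | h
  · rw [case2 t ht h, max_eq_right h, sub_self, mul_zero, sub_zero]
  · have h2 : t0 ≤ σ2 := le_trans h01 h12
    rw [← intervalIntegral.integral_add_adjacent_intervals (b := σ2)
      (ub_intInt t0 σ2) (ub_intInt σ2 t), case2 σ2 h2 le_rfl]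
    have : ∫ s in σ2..t, -(a * ub a t0 T x0 s) = -(a * (t - σ2)) := by
      have he : EqOn (fun s => -(a * ub a t0 T x0 s)) (fun _ => -a) (Ι σ2 t) := by
        intro s hs
        rw [uIoc_of_le h, mem_Ioc] at hs
        have h1 : ¬ s ≤ σ1 := not_le.mpr (lt_of_le_of_lt h12 hs.1)
        have h2' : ¬ s ≤ σ2 := not_le.mpr hs.1
        simp only [show ub a t0 T x0 s = 1 from (if_neg h1).trans (if_neg h2')]
        ring
      rw [intervalIntegral.integral_congr_ae (Filter.Eventually.of_forall (fun s hs => he hs)),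
        intervalIntegral.integral_const, smul_eq_mul]
      ring
    rw [this, min_eq_right h12, min_eq_right (le_trans h12 h), max_eq_left h]
    ring

lemma uIoc_subset_Icc {p q : ℝ} (hp : p ∈ Icc t0 T) (hq : q ∈ Icc t0 T) :
    Ι p q ⊆ Icc t0 T := by
  rw [uIoc]
  intro s hs
  rw [mem_Ioc] at hs
  exact ⟨le_trans (le_min hp.1 hq.1) hs.1.le, le_trans hs.2 (max_le hp.2 hq.2)⟩

lemma ub_mem (s : ℝ) : ub a t0 T x0 s ∈ Icc (-1:ℝ) 1 := by
  unfold ub; split_ifs <;> norm_num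

lemma xb_feasible (ha : 0 < a) (htT : t0 < T) (hx0l : -1 ≤ x0) (hx0r : x0 ≤ 1) :
    FP3Feasible a t0 T x0 (xb a t0 T x0) (ub a t0 T x0) := by
  have h01 := t0_le_S1 ha htT.le hx0l hx0r
  have h12 := S1_le_S2 (a := a) (t0 := t0) (T := T) (x0 := x0) ha htT.le hx0l hx0r
  have hS2T := (S2_lt_T ha htT.le hx0l hx0r htT).le
  refine ⟨ub_meas.aestronglyMeasurable, ?_, ?_, ?_⟩
  · filter_upwards with s using ub_mem s
  · intro t ht
    rw [ub_integral h01 h12 ht.1]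
    simp only [xb]; ring
  · intro t ht
    have hmin1 : min t (S1 a t0 T x0) ≤ S1 a t0 T x0 := min_le_right _ _
    have hmax1 : S2 a t0 T x0 ≤ max t (S2 a t0 T x0) := le_max_right _ _
    have hA := A1 ha htT.le hx0l hx0r
    constructor
    · rcases le_total t (S1 a t0 T x0) with h | h
      · have h1 : min t (S1 a t0 T x0) = t := min_eq_left h
        have h2 : max t (S2 a t0 T x0) = S2 a t0 T x0 := max_eq_right (le_trans h h12)
        simp only [xb, h1, h2]
        nlinarith [ht.1]
      · have h1 : min t (S1 a t0 T x0) = S1 a t0 T x0 := min_eq_right h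
        have h2 : max t (S2 a t0 T x0) ≤ T := max_le ht.2 hS2T
        have hk := key ha htT.le hx0l hx0r
        have hE := neg_one_le_Ee ha htT.le hx0l hx0r
        simp only [xb, h1]
        nlinarith
    · simp only [xb]
      nlinarith

lemma feas_v_intInt {y v : ℝ → ℝ} (hf : FP3Feasible a t0 T x0 y v) {p q : ℝ}
    (hp : p ∈ Icc t0 T) (hq : q ∈ Icc t0 T) {c : ℝ} :
    IntervalIntegrable (fun s => c * v s) volume p q := by
  obtain ⟨hm, hbv, -, -⟩ := hf
  have hsub := uIoc_subset_Icc hp hq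
  apply bdd_intervalIntegrable (C := |c|)
  · exact (hm.mono_measure (Measure.restrict_mono hsub le_rfl)).const_mul c
  · have := ae_restrict_of_ae_restrict_of_subset hsub hbv
    filter_upwards [this] with s hs
    rw [abs_mul]
    have h1 : |v s| ≤ 1 := abs_le.mpr ⟨hs.1, hs.2⟩
    nlinarith [abs_nonneg c, abs_nonneg (v s)]

lemma feas_diff (ha : 0 < a) {y v : ℝ → ℝ} (hf : FP3Feasible a t0 T x0 y v) :
    ∀ ⦃s t : ℝ⦄, s ∈ Icc t0 T → t ∈ Icc t0 T → s ≤ t → |y t - y s| ≤ a * (t - s) := by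
  intro s t hs ht hst
  have h0 : t0 ∈ Icc t0 T := ⟨le_rfl, le_trans hs.1 hs.2⟩
  have hI1 : IntervalIntegrable (fun r => -(a * v r)) volume t0 t :=
    (feas_v_intInt hf h0 ht (c := a)).neg
  have hI2 : IntervalIntegrable (fun r => -(a * v r)) volume t0 s :=
    (feas_v_intInt hf h0 hs (c := a)).neg
  have e1 : y t - y s = ∫ r in s..t, -(a * v r) := by
    rw [hf.2.2.1 t ht, hf.2.2.1 s hs]
    rw [add_sub_add_left_eq_sub]
    exact intervalIntegral.integral_interval_sub_left hI1 hI2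
  rw [e1]
  have hbd : ∀ᵐ r ∂(volume.restrict (Ι s t)), ‖-(a * v r)‖ ≤ a := by
    have := ae_restrict_of_ae_restrict_of_subset (uIoc_subset_Icc hs ht) hf.2.1
    filter_upwards [this] with r hr
    rw [Real.norm_eq_abs, abs_neg, abs_mul, abs_of_pos ha]
    have h1 : |v r| ≤ 1 := abs_le.mpr ⟨hr.1, hr.2⟩
    nlinarith
  have := intervalIntegral.norm_integral_le_abs_of_norm_le hbd (intervalIntegrable_const (c := a))
  rw [Real.norm_eq_abs] at this
  apply this.trans
  rw [intervalIntegral.integral_const, smul_eq_mul, abs_mul, abs_of_pos ha,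
    abs_of_nonneg (by linarith : (0:ℝ) ≤ t - s)]
  ring_nf
  exact le_rfl

lemma feas_cont (ha : 0 < a) {y v : ℝ → ℝ} (hf : FP3Feasible a t0 T x0 y v) :
    ContinuousOn y (Icc t0 T) := by
  have hl := feas_diff ha hf
  apply LipschitzOnWith.continuousOn (K := Real.toNNReal a)
  apply LipschitzOnWith.of_dist_le_mul
  intro p hp q hq
  rw [Real.dist_eq, Real.dist_eq, Real.coe_toNNReal a ha.le]
  rcases le_total p q with h | h
  · rw [abs_sub_comm p q, abs_of_nonneg (by linarith : 0 ≤ q - p)]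
    have := hl hp hq h
    rw [abs_sub_comm] at this
    linarith [this]
  · rw [abs_of_nonneg (by linarith : 0 ≤ p - q)]
    have := hl hq hp h
    linarith [this]

lemma exp_integral (hlam : 0 < lam) (p q : ℝ) :
    ∫ t in p..q, Real.exp (-(lam * t)) =
      (Real.exp (-(lam * p)) - Real.exp (-(lam * q))) / lam := by
  have hd : ∀ t : ℝ, HasDerivAt (fun t => -Real.exp (-(lam * t)) / lam)
      (Real.exp (-(lam * t))) t := by
    intro t
    have h1 : HasDerivAt (fun t : ℝ => -(lam * t)) (-lam) t := by
      exact (((hasDerivAt_id t).const_mul lam).neg).congr_deriv (by ring)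
    have h2 := h1.exp
    have h3 := h2.neg.div_const lam
    exact h3.congr_deriv (by rw [mul_neg, neg_neg, mul_div_assoc, div_self hlam.ne', mul_one])
  rw [intervalIntegral.integral_eq_sub_of_hasDerivAt (fun t _ => hd t)]
  · field_simp
    ring
  · apply Continuous.intervalIntegrable
    have : Continuous fun t : ℝ => -(lam * t) := by continuity
    exact Real.continuous_exp.comp this

lemma fubini_id (hlam : 0 < lam) (htT : t0 ≤ T) {f : ℝ → ℝ}
    (hm : AEStronglyMeasurable f (volume.restrict (Ioc t0 T)))
    (hb : ∀ᵐ s ∂(volume.restrict (Ioc t0 T)), |f s| ≤ 2) :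
    ∫ t in t0..T, Real.exp (-(lam * t)) * f t
      = Real.exp (-(lam * T)) * (∫ s in t0..T, f s)
        + lam * ∫ t in t0..T, Real.exp (-(lam * t)) * (∫ s in t0..t, f s) := by
  haveI : IsFiniteMeasure (volume.restrict (Ioc t0 T)) :=
    ⟨by rw [Measure.restrict_apply_univ]; exact measure_Ioc_lt_top⟩
  set e : ℝ → ℝ := fun t => Real.exp (-(lam * t)) with he
  have hecont : Continuous e := by
    have : Continuous fun t : ℝ => -(lam * t) := by continuity
    exact Real.continuous_exp.comp this
  have hfint : Integrable f (volume.restrict (Ioc t0 T)) := by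
    refine Integrable.mono' (integrable_const 2) hm ?_
    simpa [Real.norm_eq_abs] using hb
  have heint : Integrable e (volume.restrict (Ioc t0 T)) := by
    rw [← IntegrableOn]
    exact hecont.integrableOn_Ioc
  have hebd : ∀ᵐ t ∂(volume.restrict (Ioc t0 T)), ‖e t‖ ≤ Real.exp (-(lam * t0)) := by
    rw [ae_restrict_iff' measurableSet_Ioc]
    filter_upwards with t ht
    rw [Real.norm_eq_abs, abs_of_pos (Real.exp_pos _)]
    apply Real.exp_le_exp.mpr
    nlinarith [ht.1]
  have hefint : Integrable (fun t => e t * f t) (volume.restrict (Ioc t0 T)) :=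
    Integrable.bdd_mul hfint hecont.aestronglyMeasurable hebd
  -- step A
  have stepA : ∀ t ∈ Ioc t0 T, (∫ s in t0..t, f s)
      = ∫ s in Ioc t0 T, (Iic t).indicator f s := by
    intro t ht
    have hset : Ioc t0 T ∩ Iic t = Ioc t0 t := by
      ext s
      simp only [mem_inter_iff, mem_Ioc, mem_Iic]
      constructor
      · rintro ⟨⟨h1, _⟩, h3⟩; exact ⟨h1, h3⟩
      · rintro ⟨h1, h2⟩; exact ⟨⟨h1, le_trans h2 ht.2⟩, h2⟩
    rw [intervalIntegral.integral_of_le ht.1.le,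
      MeasureTheory.setIntegral_indicator measurableSet_Iic, hset]
  -- the triangle swap
  have hswap : ∫ t in Ioc t0 T, ∫ s in Ioc t0 T, e t * (Iic t).indicator f s
      = ∫ s in Ioc t0 T, ∫ t in Ioc t0 T, e t * (Iic t).indicator f s := by
    apply MeasureTheory.integral_integral_swap
    have hfun : (Function.uncurry fun t s => e t * (Iic t).indicator f s)
        = ({p : ℝ × ℝ | p.2 ≤ p.1}).indicator (fun p => e p.1 * f p.2) := by
      funext p
      by_cases h : p.2 ≤ p.1 <;>
        simp [Function.uncurry, Set.indicator_apply, mem_Iic, h]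
    rw [hfun]
    exact (MeasureTheory.Integrable.mul_prod heint hfint).indicator
      (measurableSet_le measurable_snd measurable_fst)
  -- inner integral computation
  have inner : ∀ s ∈ Ioc t0 T, (∫ t in Ioc t0 T, e t * (Iic t).indicator f s)
      = ((e s - e T) / lam) * f s := by
    intro s hs
    have h1 : (fun t => e t * (Iic t).indicator f s)
        = (Ici s).indicator (fun t => e t * f s) := by
      funext t
      by_cases h : s ≤ t <;>
        simp [Set.indicator_apply, mem_Iic, mem_Ici, h]
    rw [h1, MeasureTheory.setIntegral_indicator measurableSet_Ici]
    have h2 : Ioc t0 T ∩ Ici s = Icc s T := by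
      ext x
      simp only [mem_inter_iff, mem_Ioc, mem_Icc, mem_Ici]
      constructor
      · rintro ⟨⟨_, h3⟩, h4⟩; exact ⟨h4, h3⟩
      · rintro ⟨h3, h4⟩; exact ⟨⟨lt_of_lt_of_le hs.1 h3, h4⟩, h3⟩
    rw [h2, MeasureTheory.integral_mul_const, integral_Icc_eq_integral_Ioc,
      ← intervalIntegral.integral_of_le (le_trans hs.2 le_rfl : s ≤ T)]
    rw [exp_integral hlam]
  -- assemble
  rw [intervalIntegral.integral_of_le htT, intervalIntegral.integral_of_le htT,
    intervalIntegral.integral_of_le htT]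
  have e2 : ∫ t in Ioc t0 T, e t * (∫ s in t0..t, f s)
      = ∫ s in Ioc t0 T, ((e s - e T) / lam) * f s := by
    rw [MeasureTheory.setIntegral_congr_fun measurableSet_Ioc
      (fun t ht => by rw [stepA t ht, ← MeasureTheory.integral_const_mul]), hswap]
    exact MeasureTheory.setIntegral_congr_fun measurableSet_Ioc fun s hs => inner s hs
  rw [e2]
  have e3 : lam * ∫ s in Ioc t0 T, ((e s - e T) / lam) * f s
      = ∫ s in Ioc t0 T, (e s - e T) * f s := by
    rw [← MeasureTheory.integral_const_mul]
    congr 1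
    funext s
    field_simp
  rw [e3]
  have e4 : ∫ s in Ioc t0 T, (e s - e T) * f s
      = (∫ s in Ioc t0 T, e s * f s) - e T * ∫ s in Ioc t0 T, f s := by
    have : (fun s => (e s - e T) * f s) = fun s => e s * f s - e T * f s := by
      funext s; ring
    rw [this, MeasureTheory.integral_sub hefint (hfint.const_mul (e T)),
      MeasureTheory.integral_const_mul]
  rw [e4]
  ring

section cost

variable (ha : 0 < a) (hlam : 0 < lam) (htT : t0 < T) (hx0l : -1 ≤ x0) (hx0r : x0 ≤ 1)
include ha hlam htT hx0l hx0r

set_option linter.unusedSectionVars false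

omit ha htT hx0l hx0r in
/-- interval integrability of `e^{-λt} * h t` for a.e.-bounded measurable `h` -/
lemma exp_mul_intInt (htT' : t0 ≤ T) {h : ℝ → ℝ} {C : ℝ}
    (hm : AEStronglyMeasurable h (volume.restrict (Ioc t0 T)))
    (hb : ∀ᵐ s ∂(volume.restrict (Ioc t0 T)), |h s| ≤ C) :
    IntervalIntegrable (fun t => Real.exp (-(lam * t)) * h t) volume t0 T := by
  apply bdd_intervalIntegrable (C := Real.exp (-(lam * t0)) * C)
  · rw [uIoc_of_le htT']
    have : Continuous fun t : ℝ => Real.exp (-(lam * t)) := by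
      have : Continuous fun t : ℝ => -(lam * t) := by continuity
      exact Real.continuous_exp.comp this
    exact (this.aestronglyMeasurable).mul hm
  · rw [uIoc_of_le htT']
    rw [ae_restrict_iff' measurableSet_Ioc] at hb ⊢
    filter_upwards [hb] with s hs hs'
    have h1 : Real.exp (-(lam * s)) ≤ Real.exp (-(lam * t0)) := by
      apply Real.exp_le_exp.mpr
      nlinarith [(hs' : s ∈ Ioc t0 T).1]
    have h2 := hs hs'
    rw [abs_mul, abs_of_pos (Real.exp_pos _)]
    have h3 : 0 ≤ |h s| := abs_nonneg _
    nlinarith [Real.exp_pos (-(lam * s))]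

omit ha hlam htT hx0l hx0r in
lemma feas_y_aesm {y v : ℝ → ℝ} (hf : FP3Feasible a t0 T x0 y v) (ha : 0 < a) :
    AEStronglyMeasurable y (volume.restrict (Ioc t0 T)) :=
  ((feas_cont ha hf).aestronglyMeasurable measurableSet_Icc).mono_measure
    (Measure.restrict_mono Ioc_subset_Icc_self le_rfl)

omit ha hlam htT hx0l hx0r in
lemma feas_v_aesm {y v : ℝ → ℝ} (hf : FP3Feasible a t0 T x0 y v) :
    AEStronglyMeasurable v (volume.restrict (Ioc t0 T)) :=
  hf.1.mono_measure (Measure.restrict_mono Ioc_subset_Icc_self le_rfl)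

omit ha hlam htT hx0l hx0r in
lemma feas_v_bd {y v : ℝ → ℝ} (hf : FP3Feasible a t0 T x0 y v) :
    ∀ᵐ s ∂(volume.restrict (Ioc t0 T)), |v s| ≤ 1 := by
  have := ae_restrict_of_ae_restrict_of_subset Ioc_subset_Icc_self hf.2.1
  filter_upwards [this] with s hs
  exact abs_le.mpr ⟨hs.1, hs.2⟩

omit ha hlam htT hx0l hx0r in
lemma feas_y_bd {y v : ℝ → ℝ} (hf : FP3Feasible a t0 T x0 y v) :
    ∀ᵐ s ∂(volume.restrict (Ioc t0 T)), |y s| ≤ 1 := by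
  rw [ae_restrict_iff' measurableSet_Ioc]
  filter_upwards with s hs
  have := hf.2.2.2 s (Ioc_subset_Icc_self hs)
  exact abs_le.mpr ⟨this.1, this.2⟩

lemma cost_intInt {y v : ℝ → ℝ} (hf : FP3Feasible a t0 T x0 y v) :
    IntervalIntegrable (fun t => -(Real.exp (-(lam * t)) * (y t + v t))) volume t0 T := by
  apply IntervalIntegrable.neg
  apply exp_mul_intInt hlam htT.le ((feas_y_aesm hf ha).add (feas_v_aesm hf)) (C := 2)
  filter_upwards [feas_v_bd hf, feas_y_bd hf] with s h1 h2
  calc |y s + v s| ≤ |y s| + |v s| := abs_add_le _ _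
  _ ≤ 2 := by linarith

lemma cost_diff {y v : ℝ → ℝ} (hf : FP3Feasible a t0 T x0 y v) :
    FP3Cost lam t0 T y v - FP3Cost lam t0 T (xb a t0 T x0) (ub a t0 T x0)
      = (a - lam) * (∫ t in t0..T,
            Real.exp (-(lam * t)) * (∫ s in t0..t, (v s - ub a t0 T x0 s)))
        - Real.exp (-(lam * T)) * (∫ s in t0..T, (v s - ub a t0 T x0 s)) := by
  have hfx := xb_feasible ha htT hx0l hx0r
  set g : ℝ → ℝ := fun s => v s - ub a t0 T x0 s with hg
  have hgm : AEStronglyMeasurable g (volume.restrict (Ioc t0 T)) :=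
    (feas_v_aesm hf).sub (ub_meas.aestronglyMeasurable)
  have hgb : ∀ᵐ s ∂(volume.restrict (Ioc t0 T)), |g s| ≤ 2 := by
    filter_upwards [feas_v_bd hf] with s h1
    have h2 : |ub a t0 T x0 s| ≤ 1 := ub_abs_le s
    calc |v s - ub a t0 T x0 s| ≤ |v s| + |ub a t0 T x0 s| := abs_sub _ _
    _ ≤ 2 := by linarith
  have fub := fubini_id hlam htT.le hgm hgb
  have hI1 := cost_intInt ha hlam htT hx0l hx0r hf
  have hI2 := cost_intInt ha hlam htT hx0l hx0r hfx
  -- difference of costs as a single integral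
  have h1 : FP3Cost lam t0 T y v - FP3Cost lam t0 T (xb a t0 T x0) (ub a t0 T x0)
      = ∫ t in t0..T, (Real.exp (-(lam * t)) * (xb a t0 T x0 t - y t)
          + Real.exp (-(lam * t)) * (ub a t0 T x0 t - v t)) := by
    simp only [FP3Cost]
    rw [← intervalIntegral.integral_sub hI1 hI2]
    congr 1
    funext t
    ring
  -- identify xb - y with a * ζ on Ioc
  have hzrep : ∀ t ∈ Icc t0 T, xb a t0 T x0 t - y t = a * ∫ s in t0..t, g s := by
    intro t ht
    rw [hf.2.2.1 t ht, hfx.2.2.1 t ht]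
    have hIu : IntervalIntegrable (fun s => -(a * ub a t0 T x0 s)) volume t0 t := ub_intInt t0 t
    have hIv : IntervalIntegrable (fun s => -(a * v s)) volume t0 t :=
      (feas_v_intInt hf ⟨le_rfl, htT.le⟩ ht (c := a)).neg
    rw [add_sub_add_left_eq_sub, ← intervalIntegral.integral_sub hIu hIv]
    rw [← intervalIntegral.integral_const_mul]
    congr 1
    funext s
    simp only [hg]
    ring
  have hζcont : ContinuousOn (fun t => ∫ s in t0..t, g s) (Icc t0 T) := by
    have hyc := feas_cont ha hf
    have hxc : ContinuousOn (xb a t0 T x0) (Icc t0 T) := by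
      apply Continuous.continuousOn
      unfold xb
      fun_prop
    have : ContinuousOn (fun t => (xb a t0 T x0 t - y t) / a) (Icc t0 T) :=
      ((hxc.sub hyc).div_const a)
    apply this.congr
    intro t ht
    show (∫ s in t0..t, g s) = (xb a t0 T x0 t - y t) / a
    rw [hzrep t ht]
    field_simp
  have hI3 : IntervalIntegrable
      (fun t => Real.exp (-(lam * t)) * (∫ s in t0..t, g s)) volume t0 T := by
    apply exp_mul_intInt hlam htT.le (C := 2 / a)
    · exact (hζcont.aestronglyMeasurable measurableSet_Icc).mono_measure
        (Measure.restrict_mono Ioc_subset_Icc_self le_rfl)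
    · rw [ae_restrict_iff' measurableSet_Ioc]
      filter_upwards with t ht
      have htI : t ∈ Icc t0 T := Ioc_subset_Icc_self ht
      have hby := hf.2.2.2 t htI
      have hbx := hfx.2.2.2 t htI
      rw [show (∫ s in t0..t, g s) = (xb a t0 T x0 t - y t) / a by
        rw [hzrep t htI]; field_simp]
      rw [abs_div, abs_of_pos ha]
      gcongr
      rw [abs_le]
      constructor <;> linarith [hby.1, hby.2, hbx.1, hbx.2]
  have hI4 : IntervalIntegrable
      (fun t => Real.exp (-(lam * t)) * (ub a t0 T x0 t - v t)) volume t0 T := by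
    apply exp_mul_intInt hlam htT.le (C := 2)
    · exact (ub_meas.aestronglyMeasurable).sub (feas_v_aesm hf)
    · filter_upwards [feas_v_bd hf] with s h1
      calc |ub a t0 T x0 s - v s| ≤ |ub a t0 T x0 s| + |v s| := abs_sub _ _
      _ ≤ 2 := by linarith [ub_abs_le (a := a) (t0 := t0) (T := T) (x0 := x0) s]
  rw [h1]
  have hcongr : ∀ᵐ t ∂(volume : Measure ℝ), t ∈ Ι t0 T →
      (Real.exp (-(lam * t)) * (xb a t0 T x0 t - y t)
        + Real.exp (-(lam * t)) * (ub a t0 T x0 t - v t))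
      = a * (Real.exp (-(lam * t)) * (∫ s in t0..t, g s))
        + Real.exp (-(lam * t)) * (ub a t0 T x0 t - v t) := by
    filter_upwards with t ht
    rw [uIoc_of_le htT.le] at ht
    rw [hzrep t (Ioc_subset_Icc_self ht)]
    ring
  rw [intervalIntegral.integral_congr_ae hcongr,
    intervalIntegral.integral_add (hI3.const_mul a) hI4,
    intervalIntegral.integral_const_mul]
  have h5 : (fun t => Real.exp (-(lam * t)) * (ub a t0 T x0 t - v t))
      = fun t => -(Real.exp (-(lam * t)) * g t) := by
    funext t; simp only [hg]; ring
  rw [h5, intervalIntegral.integral_neg, fub]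
  ring

end cost

lemma cont_nonneg_eqzero {f : ℝ → ℝ} {p q : ℝ} (hpq : p < q) (hc : ContinuousOn f (Icc p q))
    (hnn : ∀ t ∈ Icc p q, 0 ≤ f t) (hz : (∫ t in p..q, f t) = 0) :
    ∀ t ∈ Icc p q, f t = 0 := by
  have hint : IntervalIntegrable f volume p q := by
    apply ContinuousOn.intervalIntegrable
    rwa [uIcc_of_le hpq.le]
  have hio : IntegrableOn f (Ioc p q) volume := by
    rw [intervalIntegrable_iff, uIoc_of_le hpq.le] at hint
    exact hint
  have h1 : (∫ t in Ioc p q, f t) = 0 := by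
    rwa [intervalIntegral.integral_of_le hpq.le] at hz
  have h2' : ∀ᵐ t ∂(volume.restrict (Ioc p q)), 0 ≤ f t := by
    rw [ae_restrict_iff' measurableSet_Ioc]
    filter_upwards with t ht
    exact hnn t (Ioc_subset_Icc_self ht)
  have h2 : 0 ≤ᵐ[volume.restrict (Ioc p q)] f := h2'
  have h3 : f =ᵐ[volume.restrict (Ioc p q)] 0 :=
    (MeasureTheory.integral_eq_zero_iff_of_nonneg_ae h2 hio).mp h1
  have h4 : f =ᵐ[volume.restrict (Icc p q)] 0 := by
    rwa [Measure.restrict_congr_set Ioc_ae_eq_Icc] at h3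
  exact Measure.eqOn_Icc_of_ae_eq volume hpq.ne h4 hc continuousOn_const

section main

variable (ha : 0 < a) (hal : lam < a) (hlam : 0 < lam) (htT : t0 < T)
  (hx0l : -1 ≤ x0) (hx0r : x0 ≤ 1)
  (hrho : lam * (2 / a) ≤ Real.log (a / (a - lam)))
include ha hal hlam htT hx0l hx0r hrho

set_option linter.unusedSectionVars false

set_option maxHeartbeats 2000000 in
lemma main_ineq {y v : ℝ → ℝ} (hf : FP3Feasible a t0 T x0 y v) :
    FP3Cost lam t0 T (xb a t0 T x0) (ub a t0 T x0) ≤ FP3Cost lam t0 T y v ∧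
      (FP3Cost lam t0 T y v = FP3Cost lam t0 T (xb a t0 T x0) (ub a t0 T x0) →
        ∀ t ∈ Icc t0 T, y t = xb a t0 T x0 t) := by
  have hfx := xb_feasible ha htT hx0l hx0r
  have h01 := t0_le_S1 ha htT.le hx0l hx0r
  have h12 := S1_le_S2 (a := a) (t0 := t0) (T := T) (x0 := x0) ha htT.le hx0l hx0r
  have hS2T := S2_lt_T ha htT.le hx0l hx0r htT
  have hkey := key ha htT.le hx0l hx0r
  have hEl := neg_one_le_Ee ha htT.le hx0l hx0r
  set s2 := S2 a t0 T x0 with hs2def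
  set g : ℝ → ℝ := fun s => v s - ub a t0 T x0 s with hg
  set ζ : ℝ → ℝ := fun t => ∫ s in t0..t, g s with hζ
  set e : ℝ → ℝ := fun t => Real.exp (-(lam * t)) with he
  have hepos : ∀ t, 0 < e t := fun t => Real.exp_pos _
  have hy0 : y t0 = x0 := by
    have := hf.2.2.1 t0 ⟨le_rfl, htT.le⟩
    simpa using this
  have hlip := feas_diff ha hf
  -- ζ in terms of trajectories
  have hzrep : ∀ t ∈ Icc t0 T, xb a t0 T x0 t - y t = a * ζ t := by
    intro t ht
    rw [hf.2.2.1 t ht, hfx.2.2.1 t ht]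
    have hIu : IntervalIntegrable (fun s => -(a * ub a t0 T x0 s)) volume t0 t := ub_intInt t0 t
    have hIv : IntervalIntegrable (fun s => -(a * v s)) volume t0 t :=
      (feas_v_intInt hf ⟨le_rfl, htT.le⟩ ht (c := a)).neg
    rw [add_sub_add_left_eq_sub, ← intervalIntegral.integral_sub hIu hIv,
      hζ, ← intervalIntegral.integral_const_mul]
    congr 1
    funext s
    simp only [hg]
    ring
  have hζcont : ContinuousOn ζ (Icc t0 T) := by
    have hyc := feas_cont ha hf
    have hxc : ContinuousOn (xb a t0 T x0) (Icc t0 T) := by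
      apply Continuous.continuousOn
      unfold xb
      fun_prop
    have h2 : ContinuousOn (fun t => (xb a t0 T x0 t - y t) / a) (Icc t0 T) :=
      ((hxc.sub hyc).div_const a)
    apply h2.congr
    intro t ht
    show ζ t = (xb a t0 T x0 t - y t) / a
    rw [hzrep t ht]
    field_simp
  have hecont : Continuous e := by
    have : Continuous fun t : ℝ => -(lam * t) := by continuity
    exact Real.continuous_exp.comp this
  -- pointwise bounds on ζ
  have hζ_nonneg : ∀ t ∈ Icc t0 s2, 0 ≤ ζ t := by
    intro t ht
    have htI : t ∈ Icc t0 T := ⟨ht.1, le_trans ht.2 hS2T.le⟩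
    have hyx : y t ≤ xb a t0 T x0 t := by
      rcases le_total t (S1 a t0 T x0) with h | h
      · have h1 : min t (S1 a t0 T x0) = t := min_eq_left h
        have h2 : max t s2 = s2 := max_eq_right ht.2
        have h3 := hlip ⟨le_rfl, htT.le⟩ htI ht.1
        have h4 : y t - y t0 ≤ a * (t - t0) := (abs_le.mp h3).2
        simp only [xb, h1, h2]
        rw [hy0] at h4
        simp only [hs2def] at *
        nlinarith
      · have hpl : x0 + a * (S1 a t0 T x0 - t0) = 1 ∨ t = S1 a t0 T x0 := by
          rcases lt_or_eq_of_le h with h' | h'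
          · left
            exact plateau ha htT.le hx0l hx0r (lt_of_lt_of_le h' ht.2)
          · right; exact h'.symm
        have h1 : min t (S1 a t0 T x0) = S1 a t0 T x0 := min_eq_right h
        have h2 : max t s2 = s2 := max_eq_right ht.2
        rcases hpl with h3 | h3
        · have h4 := (hf.2.2.2 t htI).2
          simp only [xb, h1, h2]
          nlinarith
        · have h5 := hlip ⟨le_rfl, htT.le⟩ htI ht.1
          have h4 : y t - y t0 ≤ a * (t - t0) := (abs_le.mp h5).2
          simp only [xb, h1, h2]
          rw [hy0] at h4
          rw [← h3]
          nlinarith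
    have := hzrep t htI
    nlinarith
  set Mz : ℝ := (y T - xb a t0 T x0 T) / a with hMz
  have hMz_nonneg : 0 ≤ Mz := by
    have h1 : y t0 - a * (T - t0) ≤ y T := by
      have := hlip ⟨le_rfl, htT.le⟩ ⟨htT.le, le_rfl⟩ htT.le
      have := (abs_le.mp this).1
      linarith
    have h2 : -1 ≤ y T := (hf.2.2.2 T ⟨htT.le, le_rfl⟩).1
    have h3 : xb a t0 T x0 T = Ee a t0 T x0 := by
      have hmin : min T (S1 a t0 T x0) = S1 a t0 T x0 :=
        min_eq_right (le_trans h12 hS2T.le)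
      have hmax : max T s2 = T := max_eq_left hS2T.le
      simp only [xb, hmin, hmax]
      simp only [hs2def] at *
      nlinarith [hkey]
    rw [hMz, h3]
    apply div_nonneg _ ha.le
    rw [hy0] at h1
    rcases le_or_gt (x0 - a * (T - t0)) (-1) with h | h
    · have : Ee a t0 T x0 = -1 := max_eq_right h
      rw [this]; linarith
    · have : Ee a t0 T x0 = x0 - a * (T - t0) := max_eq_left h.le
      rw [this]; linarith
  have hζT : ζ T = -Mz := by
    have := hzrep T ⟨htT.le, le_rfl⟩
    rw [hMz]
    field_simp
    linarith
  have hζ_ge : ∀ t ∈ Icc s2 T, -Mz ≤ ζ t := by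
    intro t ht
    have htI : t ∈ Icc t0 T := ⟨le_trans (le_trans h01 h12) ht.1, ht.2⟩
    have hxbt : xb a t0 T x0 t - xb a t0 T x0 T = a * (T - t) := by
      have hmin1 : min t (S1 a t0 T x0) = S1 a t0 T x0 := min_eq_right (le_trans h12 ht.1)
      have hmin2 : min T (S1 a t0 T x0) = S1 a t0 T x0 := min_eq_right (le_trans h12 hS2T.le)
      have hmax1 : max t s2 = t := max_eq_left ht.1
      have hmax2 : max T s2 = T := max_eq_left hS2T.le
      simp only [xb, hmin1, hmin2, hmax1, hmax2]
      rw [show max t (S2 a t0 T x0) = t from hmax1, show max T (S2 a t0 T x0) = T from hmax2]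
      ring
    have h5 := hlip htI ⟨htT.le, le_rfl⟩ ht.2
    have h4 : y t - y T ≤ a * (T - t) := by
      have := (abs_le.mp h5).1
      linarith
    have hz1 := hzrep t htI
    have hz2 := hzrep T ⟨htT.le, le_rfl⟩
    have h6 : xb a t0 T x0 T - y T ≤ a * ζ t := by nlinarith
    calc -Mz = (xb a t0 T x0 T - y T) / a := by rw [hMz]; ring
    _ ≤ ζ t := by rw [div_le_iff₀ ha]; nlinarith [h6]
  -- integrability and integrals
  have hsub : 0 < a - lam := sub_pos.mpr hal
  have hζe_cont : ContinuousOn (fun t => e t * ζ t) (Icc t0 T) :=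
    (hecont.continuousOn).mul hζcont
  have hs2I : s2 ∈ Icc t0 T := ⟨le_trans h01 h12, hS2T.le⟩
  have hP_int : IntervalIntegrable (fun t => e t * ζ t) volume t0 s2 := by
    apply ContinuousOn.intervalIntegrable
    rw [uIcc_of_le hs2I.1]
    exact hζe_cont.mono (Icc_subset_Icc le_rfl hS2T.le)
  have hR_int : IntervalIntegrable (fun t => e t * ζ t) volume s2 T := by
    apply ContinuousOn.intervalIntegrable
    rw [uIcc_of_le hS2T.le]
    exact hζe_cont.mono (Icc_subset_Icc hs2I.1 le_rfl)
  have he_int : IntervalIntegrable e volume s2 T := hecont.intervalIntegrable _ _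
  set P := ∫ t in t0..s2, e t * ζ t with hPdef
  set R := ∫ t in s2..T, e t * ζ t with hRdef
  set Q := ∫ t in s2..T, (e t * ζ t + Mz * e t) with hQdef
  have hQsplit : Q = R + Mz * ∫ t in s2..T, e t := by
    rw [hQdef, intervalIntegral.integral_add hR_int (he_int.const_mul Mz),
      intervalIntegral.integral_const_mul]
  have hEint : (∫ t in s2..T, e t) = (e s2 - e T) / lam := exp_integral hlam s2 T
  have hPpos : 0 ≤ P :=
    intervalIntegral.integral_nonneg hs2I.1
      (fun u hu => mul_nonneg (hepos u).le (hζ_nonneg u hu))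
  have hQpos : 0 ≤ Q := by
    apply intervalIntegral.integral_nonneg hS2T.le
    intro u hu
    have h1 := hζ_ge u hu
    have h2 := mul_le_mul_of_nonneg_left h1 (hepos u).le
    linarith [h2]
  -- the bracket is nonnegative
  have hBr : 0 ≤ e T - (a - lam) * ((e s2 - e T) / lam) := by
    have hTs2 := T_sub_S2 ha htT.le hx0l hx0r
    have h1 : lam * (T - s2) ≤ Real.log (a / (a - lam)) := by
      have h2 : lam * (T - s2) ≤ lam * (2 / a) :=
        mul_le_mul_of_nonneg_left hTs2 hlam.le
      linarith [hrho]
    have h2 : Real.exp (lam * (T - s2)) ≤ a / (a - lam) := by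
      rw [← Real.exp_log (show (0:ℝ) < a / (a - lam) from div_pos ha hsub)]
      exact Real.exp_le_exp.mpr h1
    have h3 : (a - lam) * Real.exp (lam * (T - s2)) ≤ a := by
      have h4 : (a - lam) * Real.exp (lam * (T - s2)) ≤ (a - lam) * (a / (a - lam)) :=
        mul_le_mul_of_nonneg_left h2 hsub.le
      have h5 : (a - lam) * (a / (a - lam)) = a := by field_simp
      linarith
    have hes2 : e s2 = e T * Real.exp (lam * (T - s2)) := by
      show Real.exp (-(lam * s2)) = Real.exp (-(lam * T)) * Real.exp (lam * (T - s2))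
      rw [← Real.exp_add]
      ring_nf
    have h6 : (a - lam) * (e s2 - e T) ≤ lam * e T := by
      rw [hes2]
      nlinarith [Real.exp_pos (-(lam * T)), hepos T]
    have h7 : (a - lam) * ((e s2 - e T) / lam) ≤ e T := by
      rw [mul_div_assoc', div_le_iff₀ hlam]
      nlinarith [h6]
    linarith
  -- the cost difference identity, in abstract form
  have hdiff : FP3Cost lam t0 T y v - FP3Cost lam t0 T (xb a t0 T x0) (ub a t0 T x0)
      = (a - lam) * (∫ t in t0..T, e t * ζ t) - e T * ζ T :=
    cost_diff ha hlam htT hx0l hx0r hf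
  have hIsplit : (∫ t in t0..T, e t * ζ t) = P + R :=
    (intervalIntegral.integral_add_adjacent_intervals hP_int hR_int).symm
  have hdif2 : FP3Cost lam t0 T y v - FP3Cost lam t0 T (xb a t0 T x0) (ub a t0 T x0)
      = (a - lam) * P + (a - lam) * Q + Mz * (e T - (a - lam) * ((e s2 - e T) / lam)) := by
    have hReq : R = Q - Mz * ((e s2 - e T) / lam) := by
      rw [hQsplit, hEint]
      ring
    rw [hdiff, hIsplit, hReq, hζT]
    ring
  constructor
  · nlinarith [mul_nonneg hMz_nonneg hBr, mul_nonneg hsub.le hPpos, mul_nonneg hsub.le hQpos]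
  · intro heq
    have hzero : (a - lam) * P + (a - lam) * Q
        + Mz * (e T - (a - lam) * ((e s2 - e T) / lam)) = 0 := by
      rw [← hdif2, heq]
      ring
    have hP0 : P = 0 := by
      nlinarith [mul_nonneg hMz_nonneg hBr, mul_nonneg hsub.le hPpos, mul_nonneg hsub.le hQpos]
    have hQ0 : Q = 0 := by
      nlinarith [mul_nonneg hMz_nonneg hBr, mul_nonneg hsub.le hPpos, mul_nonneg hsub.le hQpos]
    -- ζ vanishes on [t0, s2]
    have hz1 : ∀ t ∈ Icc t0 s2, ζ t = 0 := by
      rcases eq_or_lt_of_le hs2I.1 with heq2 | hlt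
      · intro t ht
        have ht0 : t = t0 := le_antisymm (heq2 ▸ ht.2) ht.1
        rw [ht0]
        show (∫ s in t0..t0, g s) = 0
        exact intervalIntegral.integral_same
      · have hcc : ContinuousOn (fun t => e t * ζ t) (Icc t0 s2) :=
          hζe_cont.mono (Icc_subset_Icc le_rfl hS2T.le)
        have hnn : ∀ t ∈ Icc t0 s2, 0 ≤ e t * ζ t :=
          fun u hu => mul_nonneg (hepos u).le (hζ_nonneg u hu)
        have := cont_nonneg_eqzero hlt hcc hnn hP0
        intro t ht
        have h2 := this t ht
        have := (hepos t).ne'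
        exact (mul_eq_zero.mp h2).resolve_left this
    have hζs2 : ζ s2 = 0 := hz1 s2 ⟨hs2I.1, le_rfl⟩
    -- ζ + Mz vanishes on [s2, T]
    have hz2 : ∀ t ∈ Icc s2 T, ζ t + Mz = 0 := by
      have hcc : ContinuousOn (fun t => e t * ζ t + Mz * e t) (Icc s2 T) := by
        apply ContinuousOn.add (hζe_cont.mono (Icc_subset_Icc hs2I.1 le_rfl))
        exact (hecont.continuousOn).const_smul Mz
      have hnn : ∀ t ∈ Icc s2 T, 0 ≤ e t * ζ t + Mz * e t := by
        intro u hu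
        have h1 := hζ_ge u hu
        have h2 := mul_le_mul_of_nonneg_left h1 (hepos u).le
        linarith [h2]
      have := cont_nonneg_eqzero hS2T hcc hnn hQ0
      intro t ht
      have h2 := this t ht
      have h3 : e t * (ζ t + Mz) = 0 := by linarith [h2]
      exact (mul_eq_zero.mp h3).resolve_left (hepos t).ne'
    have hMz0 : Mz = 0 := by
      have := hz2 s2 ⟨le_rfl, hS2T.le⟩
      rw [hζs2] at this
      linarith
    intro t ht
    have hζt0 : ζ t = 0 := by
      rcases le_total t s2 with h | h
      · exact hz1 t ⟨ht.1, h⟩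
      · have := hz2 t ⟨h, ht.2⟩
        rw [hMz0] at this
        linarith
    have := hzrep t ht
    rw [hζt0] at this
    linarith


end main

/-- a function whose primitive vanishes identically is a.e. zero -/
lemma integral_zero_ae (htT : t0 ≤ T) {f : ℝ → ℝ}
    (hm : AEStronglyMeasurable f (volume.restrict (Ioc t0 T)))
    (hb : ∀ᵐ s ∂(volume.restrict (Ioc t0 T)), |f s| ≤ 2)
    (hz : ∀ t ∈ Icc t0 T, (∫ s in t0..t, f s) = 0) :
    f =ᵐ[volume.restrict (Icc t0 T)] 0 := by
  have hμ : volume.restrict (Icc t0 T) = volume.restrict (Ioc t0 T) :=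
    (Measure.restrict_congr_set Ioc_ae_eq_Icc).symm
  rw [hμ]
  haveI : IsFiniteMeasure (volume.restrict (Ioc t0 T)) :=
    ⟨by rw [Measure.restrict_apply_univ]; exact measure_Ioc_lt_top⟩
  have hint : Integrable f (volume.restrict (Ioc t0 T)) := by
    refine Integrable.mono' (integrable_const 2) hm ?_
    simpa [Real.norm_eq_abs] using hb
  have hii : ∀ p q : ℝ, p ∈ Icc t0 T → q ∈ Icc t0 T → IntervalIntegrable f volume p q := by
    intro p q hp hq
    rw [intervalIntegrable_iff]
    have hio : IntegrableOn f (Ioc t0 T) volume := hint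
    apply hio.mono_set
    exact fun s hs => ⟨lt_of_le_of_lt (le_min hp.1 hq.1) hs.1, le_trans hs.2 (max_le hp.2 hq.2)⟩
  have hz2 : ∀ p q : ℝ, p ∈ Icc t0 T → q ∈ Icc t0 T → p ≤ q →
      (∫ s in Ioc p q, f s) = 0 := by
    intro p q hp hq hpq
    have h0 : t0 ∈ Icc t0 T := ⟨le_rfl, htT⟩
    have e1 : (∫ s in t0..q, f s) - (∫ s in t0..p, f s) = ∫ s in p..q, f s :=
      intervalIntegral.integral_interval_sub_left (hii t0 q h0 hq) (hii t0 p h0 hp)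
    rw [hz q hq, hz p hp, intervalIntegral.integral_of_le hpq] at e1
    linarith
  have htotal : (∫ s, f s ∂(volume.restrict (Ioc t0 T))) = 0 := by
    have := hz2 t0 T ⟨le_rfl, htT⟩ ⟨htT, le_rfl⟩ htT
    simpa using this
  have hall : ∀ S : Set ℝ, MeasurableSet S → (∫ s in S, f s ∂(volume.restrict (Ioc t0 T))) = 0 := by
    have h_eq : (inferInstance : MeasurableSpace ℝ)
        = MeasurableSpace.generateFrom { S : Set ℝ | ∃ l u, l < u ∧ Ioc l u = S } :=
      BorelSpace.measurable_eq.trans (borel_eq_generateFrom_Ioc ℝ)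
    have h_pi : IsPiSystem { S : Set ℝ | ∃ l u, l < u ∧ Ioc l u = S } := by
      simpa using isPiSystem_Ioc (id : ℝ → ℝ) (id : ℝ → ℝ)
    refine MeasurableSpace.induction_on_inter
      (C := fun S _ => (∫ s in S, f s ∂(volume.restrict (Ioc t0 T))) = 0) h_eq h_pi
      (by simp) ?_ ?_ ?_
    · rintro S ⟨l, u, hlu, rfl⟩
      rw [Measure.restrict_restrict measurableSet_Ioc, Ioc_inter_Ioc]
      rcases le_or_gt (min u T) (max l t0) with h | h
      · rw [Ioc_eq_empty (not_lt.mpr h)]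
        simp
      · have hp : max l t0 ∈ Icc t0 T := ⟨le_max_right _ _, le_trans h.le (min_le_right _ _)⟩
        have hq : min u T ∈ Icc t0 T := ⟨le_trans hp.1 h.le, min_le_right _ _⟩
        exact hz2 _ _ hp hq h.le
    · intro S hS ih
      have h2 := MeasureTheory.integral_add_compl hS hint
      rw [ih, zero_add] at h2
      rw [h2, htotal]
    · intro g hdisj hmeas ih
      rw [MeasureTheory.integral_iUnion hmeas hdisj hint.integrableOn]
      simp [ih]
  exact hint.ae_eq_zero_of_forall_setIntegral_eq_zero fun S hS _ => hall S hS

section unique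

variable (ha : 0 < a) (htT : t0 < T) (hx0l : -1 ≤ x0) (hx0r : x0 ≤ 1)
include ha htT hx0l hx0r

set_option linter.unusedSectionVars false

lemma control_ae_eq {y v : ℝ → ℝ} (hf : FP3Feasible a t0 T x0 y v)
    (hyx : ∀ t ∈ Icc t0 T, y t = xb a t0 T x0 t) :
    v =ᵐ[volume.restrict (Icc t0 T)] ub a t0 T x0 := by
  have hfx := xb_feasible ha htT hx0l hx0r
  have hz : ∀ t ∈ Icc t0 T, (∫ s in t0..t, (v s - ub a t0 T x0 s)) = 0 := by
    intro t ht
    have h1 := hf.2.2.1 t ht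
    have h2 := hfx.2.2.1 t ht
    rw [hyx t ht, h2] at h1
    have h3 : (∫ s in t0..t, -(a * v s)) = ∫ s in t0..t, -(a * ub a t0 T x0 s) := by
      linarith
    have hIu : IntervalIntegrable (fun s => -(a * ub a t0 T x0 s)) volume t0 t := ub_intInt t0 t
    have hIv : IntervalIntegrable (fun s => -(a * v s)) volume t0 t :=
      (feas_v_intInt hf ⟨le_rfl, htT.le⟩ ht (c := a)).neg
    have h4 : (∫ s in t0..t, (-(a * v s) - -(a * ub a t0 T x0 s))) = 0 := by
      rw [intervalIntegral.integral_sub hIv hIu, h3]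
      ring
    have h5 : (∫ s in t0..t, (-a) * (v s - ub a t0 T x0 s)) = 0 := by
      rw [← h4]
      congr 1
      funext s
      ring
    rw [intervalIntegral.integral_const_mul] at h5
    rcases mul_eq_zero.mp h5 with h | h
    · exact absurd h (by simpa using ha.ne')
    · exact h
  have hm : AEStronglyMeasurable (fun s => v s - ub a t0 T x0 s)
      (volume.restrict (Ioc t0 T)) :=
    (feas_v_aesm hf).sub ub_meas.aestronglyMeasurable
  have hb : ∀ᵐ s ∂(volume.restrict (Ioc t0 T)), |v s - ub a t0 T x0 s| ≤ 2 := by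
    filter_upwards [feas_v_bd hf] with s h1
    have h2 := ub_abs_le (a := a) (t0 := t0) (T := T) (x0 := x0) s
    calc |v s - ub a t0 T x0 s| ≤ |v s| + |ub a t0 T x0 s| := abs_sub _ _
    _ ≤ 2 := by linarith
  have := integral_zero_ae htT.le hm hb hz
  filter_upwards [this] with s hs
  have : v s - ub a t0 T x0 s = 0 := hs
  linarith

end unique

section conv

variable (ha : 0 < a) (hal : lam < a) (hlam : 0 < lam) (htT : t0 < T)
  (hx0l : -1 ≤ x0) (hx0r : x0 ≤ 1)
  (hrho : lam * (2 / a) ≤ Real.log (a / (a - lam)))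
include ha hal hlam htT hx0l hx0r hrho

set_option linter.unusedSectionVars false

set_option maxHeartbeats 1000000 in
/-- every W^{1,1} local minimizer attains the optimal cost -/
lemma local_min_cost {x u : ℝ → ℝ} (h : FP3LocalMin a lam t0 T x0 x u) :
    FP3Cost lam t0 T x u = FP3Cost lam t0 T (xb a t0 T x0) (ub a t0 T x0) := by
  obtain ⟨hfeas, δ, hδ, hmin⟩ := h
  have hfx := xb_feasible ha htT hx0l hx0r
  set θ : ℝ := min 1 (δ / (2 * a * (T - t0) + 1)) with hθdef
  have hθpos : 0 < θ := by
    apply lt_min one_pos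
    apply div_pos hδ
    nlinarith
  have hθ1 : θ ≤ 1 := min_le_left _ _
  set vθ : ℝ → ℝ := fun s => (1 - θ) * u s + θ * ub a t0 T x0 s with hvθ
  set yθ : ℝ → ℝ := fun t => (1 - θ) * x t + θ * xb a t0 T x0 t with hyθ
  have hIu : ∀ t ∈ Icc t0 T, IntervalIntegrable (fun s => -(a * u s)) volume t0 t :=
    fun t ht => (feas_v_intInt hfeas ⟨le_rfl, htT.le⟩ ht (c := a)).neg
  have hfeasθ : FP3Feasible a t0 T x0 yθ vθ := by
    refine ⟨?_, ?_, ?_, ?_⟩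
    · exact ((hfeas.1.const_mul (1 - θ)).add
        ((ub_meas.aestronglyMeasurable.mono_measure le_rfl).const_mul θ))
    · filter_upwards [hfeas.2.1] with s hs
      have h2 := ub_mem (a := a) (t0 := t0) (T := T) (x0 := x0) s
      constructor
      · simp only [hvθ]
        nlinarith [hs.1, h2.1, hs.2, h2.2]
      · simp only [hvθ]
        nlinarith [hs.1, h2.1, hs.2, h2.2]
    · intro t ht
      have e1 : (∫ s in t0..t, -(a * vθ s))
          = (1 - θ) * (∫ s in t0..t, -(a * u s)) + θ * ∫ s in t0..t, -(a * ub a t0 T x0 s) := by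
        rw [← intervalIntegral.integral_const_mul, ← intervalIntegral.integral_const_mul,
          ← intervalIntegral.integral_add (((hIu t ht)).const_mul _)
            ((ub_intInt t0 t).const_mul _)]
        congr 1
        funext s
        simp only [hvθ]
        ring
      rw [e1]
      have h1 := hfeas.2.2.1 t ht
      have h2 := hfx.2.2.1 t ht
      simp only [hyθ]
      rw [h1, h2]
      ring
    · intro t ht
      have h1 := hfeas.2.2.2 t ht
      have h2 := hfx.2.2.2 t ht
      constructor
      · simp only [hyθ]; nlinarith [h1.1, h2.1]
      · simp only [hyθ]; nlinarith [h1.2, h2.2]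
  have hdist : (∫ t in t0..T, |(-(a * vθ t)) - (-(a * u t))|) ≤ δ := by
    have hptle : ∀ᵐ t ∂(volume.restrict (Icc t0 T)),
        |(-(a * vθ t)) - (-(a * u t))| ≤ θ * (2 * a) := by
      filter_upwards [hfeas.2.1] with t h1
      have h2 := ub_mem (a := a) (t0 := t0) (T := T) (x0 := x0) t
      have e1 : (-(a * vθ t)) - (-(a * u t)) = θ * a * (u t - ub a t0 T x0 t) := by
        simp only [hvθ]; ring
      rw [e1, abs_mul, abs_of_nonneg (by positivity : (0:ℝ) ≤ θ * a)]
      have h3 : |u t - ub a t0 T x0 t| ≤ 2 := by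
        calc |u t - ub a t0 T x0 t| ≤ |u t| + |ub a t0 T x0 t| := abs_sub _ _
        _ ≤ 2 := by
          have := abs_le.mpr ⟨h1.1, h1.2⟩
          have := abs_le.mpr ⟨h2.1, h2.2⟩
          linarith
      have h4 := mul_le_mul_of_nonneg_left h3 (mul_nonneg hθpos.le ha.le)
      nlinarith [h4]
    have hint : IntervalIntegrable (fun t => |(-(a * vθ t)) - (-(a * u t))|) volume t0 T := by
      apply bdd_intervalIntegrable (C := θ * (2 * a))
      · simp only [← Real.norm_eq_abs]
        apply AEStronglyMeasurable.norm
        apply AEStronglyMeasurable.sub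
        · exact (hfeasθ.1.mono_measure
            (Measure.restrict_mono (uIoc_subset_Icc ⟨le_rfl, htT.le⟩ ⟨htT.le, le_rfl⟩) le_rfl)).const_mul (-a)
            |>.congr (by filter_upwards with s; ring)
        · exact (hfeas.1.mono_measure
            (Measure.restrict_mono (uIoc_subset_Icc ⟨le_rfl, htT.le⟩ ⟨htT.le, le_rfl⟩) le_rfl)).const_mul (-a)
            |>.congr (by filter_upwards with s; ring)
      · have := ae_restrict_of_ae_restrict_of_subset
          (uIoc_subset_Icc (⟨le_rfl, htT.le⟩ : t0 ∈ Icc t0 T) ⟨htT.le, le_rfl⟩) hptle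
        filter_upwards [this] with s hs
        simpa [Real.norm_eq_abs, abs_abs] using hs
    have h5 : (∫ t in t0..T, |(-(a * vθ t)) - (-(a * u t))|)
        ≤ ∫ t in t0..T, θ * (2 * a) := by
      apply intervalIntegral.integral_mono_ae_restrict htT.le hint intervalIntegrable_const
      exact hptle
    rw [intervalIntegral.integral_const, smul_eq_mul] at h5
    have h6 : (T - t0) * (θ * (2 * a)) ≤ δ := by
      have h7 : θ ≤ δ / (2 * a * (T - t0) + 1) := min_le_right _ _
      rw [le_div_iff₀ (by nlinarith)] at h7
      nlinarith
    linarith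
  have hle := hmin yθ vθ hfeasθ hdist
  have hlin : FP3Cost lam t0 T yθ vθ
      = (1 - θ) * FP3Cost lam t0 T x u + θ * FP3Cost lam t0 T (xb a t0 T x0) (ub a t0 T x0) := by
    simp only [FP3Cost]
    rw [← intervalIntegral.integral_const_mul, ← intervalIntegral.integral_const_mul,
      ← intervalIntegral.integral_add
        ((cost_intInt ha hlam htT hx0l hx0r hfeas).const_mul _)
        ((cost_intInt ha hlam htT hx0l hx0r hfx).const_mul _)]
    congr 1
    funext t
    simp only [hyθ, hvθ]
    ring
  have hge := (main_ineq ha hal hlam htT hx0l hx0r hrho hfeas).1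
  rw [hlin] at hle
  nlinarith

lemma local_min_classify {x u : ℝ → ℝ} (h : FP3LocalMin a lam t0 T x0 x u) :
    (∀ t ∈ Icc t0 T, x t = xb a t0 T x0 t)
      ∧ u =ᵐ[volume.restrict (Icc t0 T)] ub a t0 T x0 := by
  have hc := local_min_cost ha hal hlam htT hx0l hx0r hrho h
  have h2 := (main_ineq ha hal hlam htT hx0l hx0r hrho h.1).2 hc
  exact ⟨h2, control_ae_eq ha htT hx0l hx0r h.1 h2⟩

lemma local_min_global {x u : ℝ → ℝ} (h : FP3LocalMin a lam t0 T x0 x u) :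
    FP3GlobalMin a lam t0 T x0 x u := by
  refine ⟨h.1, fun y v hyv => ?_⟩
  rw [local_min_cost ha hal hlam htT hx0l hx0r hrho h]
  exact (main_ineq ha hal hlam htT hx0l hx0r hrho hyv).1

end conv

section regimes

variable (ha : 0 < a) (htT : t0 < T) (hx0l : -1 ≤ x0) (hx0r : x0 ≤ 1)
include ha htT hx0l hx0r

set_option linter.unusedSectionVars false

lemma regimeA (hA : T - t0 ≤ (1 + x0) / a) :
    ∀ t ∈ Icc t0 T, xb a t0 T x0 t = x0 - a * (t - t0) := by
  have hA' : a * (T - t0) ≤ 1 + x0 := by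
    rw [le_div_iff₀ ha] at hA
    linarith
  have hE : Ee a t0 T x0 = x0 - a * (T - t0) := max_eq_left (by linarith)
  have hsz : (T + t0) / 2 + (Ee a t0 T x0 - x0) / (2 * a) = t0 := by
    rw [hE]
    field_simp
    ring
  have hS1 : S1 a t0 T x0 = t0 := by
    rw [S1, hsz]
    apply min_eq_right
    have : 0 ≤ (1 - x0) / a := div_nonneg (by linarith) ha.le
    linarith
  have hS2 : S2 a t0 T x0 = t0 := by
    rw [S2, hS1]
    apply max_eq_left
    have h2 : T - t0 ≤ (1 - Ee a t0 T x0) / a := by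
      rw [le_div_iff₀ ha, hE]
      nlinarith
    linarith
  intro t ht
  show x0 + a * (min t (S1 a t0 T x0) - t0) - a * (max t (S2 a t0 T x0) - S2 a t0 T x0)
      = x0 - a * (t - t0)
  rw [hS1, hS2, min_eq_right ht.1, max_eq_left ht.1]
  ring

lemma regimeB (hB1 : (1 + x0) / a < T - t0) (hB2 : T - t0 < (3 - x0) / a) :
    (∀ t ∈ Icc t0 ((T + t0 - (1 + x0) / a) / 2), xb a t0 T x0 t = x0 + a * (t - t0)) ∧
    (∀ t ∈ Ioc ((T + t0 - (1 + x0) / a) / 2) T, xb a t0 T x0 t = -1 - a * (t - T)) := by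
  have hB1' : 1 + x0 < a * (T - t0) := by
    rw [div_lt_iff₀ ha] at hB1
    linarith
  have hB2' : a * (T - t0) < 3 - x0 := by
    rw [lt_div_iff₀ ha] at hB2
    linarith
  have hE : Ee a t0 T x0 = -1 := max_eq_right (by nlinarith)
  set tz : ℝ := (T + t0 - (1 + x0) / a) / 2 with htz
  have hsz : (T + t0) / 2 + (Ee a t0 T x0 - x0) / (2 * a) = tz := by
    rw [hE, htz]
    field_simp
    ring
  have hS1 : S1 a t0 T x0 = tz := by
    rw [S1, hsz]
    apply min_eq_right
    rw [htz, ← sub_nonneg]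
    have e1 : t0 + (1 - x0) / a - (T + t0 - (1 + x0) / a) / 2
        = ((3 - x0) - a * (T - t0)) / (2 * a) := by
      field_simp
      ring
    rw [e1]
    apply div_nonneg (by linarith) (by positivity)
  have hS2 : S2 a t0 T x0 = tz := by
    rw [S2, hS1]
    apply max_eq_left
    rw [hE, htz, ← sub_nonneg]
    have e1 : (T + t0 - (1 + x0) / a) / 2 - (T - (1 - (-1:ℝ)) / a)
        = ((3 - x0) - a * (T - t0)) / (2 * a) := by
      field_simp
      ring
    rw [e1]
    apply div_nonneg (by linarith) (by positivity)
  have hkey := key ha htT.le hx0l hx0r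
  rw [hS1, hS2, hE] at hkey
  constructor
  · intro t ht
    show x0 + a * (min t (S1 a t0 T x0) - t0) - a * (max t (S2 a t0 T x0) - S2 a t0 T x0)
        = x0 + a * (t - t0)
    rw [hS1, hS2, min_eq_left ht.2, max_eq_right ht.2]
    ring
  · intro t ht
    show x0 + a * (min t (S1 a t0 T x0) - t0) - a * (max t (S2 a t0 T x0) - S2 a t0 T x0)
        = -1 - a * (t - T)
    rw [hS1, hS2, min_eq_right ht.1.le, max_eq_left ht.1.le]
    nlinarith [hkey]

lemma regimeC (hC : (3 - x0) / a ≤ T - t0) :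
    (∀ t ∈ Icc t0 (t0 + (1 - x0) / a), xb a t0 T x0 t = x0 + a * (t - t0)) ∧
    (∀ t ∈ Ioc (t0 + (1 - x0) / a) (T - 2 / a), xb a t0 T x0 t = 1) ∧
    (∀ t ∈ Ioc (T - 2 / a) T, xb a t0 T x0 t = -1 - a * (t - T)) := by
  have hC' : 3 - x0 ≤ a * (T - t0) := by
    rw [div_le_iff₀ ha] at hC
    linarith
  have hE : Ee a t0 T x0 = -1 := max_eq_right (by nlinarith)
  set t1 : ℝ := t0 + (1 - x0) / a with ht1
  have hS1 : S1 a t0 T x0 = t1 := by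
    rw [S1, hE]
    apply min_eq_left
    rw [← sub_nonneg]
    have e1 : (T + t0) / 2 + (-1 - x0) / (2 * a) - (t0 + (1 - x0) / a)
        = (a * (T - t0) - (3 - x0)) / (2 * a) := by
      field_simp
      ring
    rw [e1]
    apply div_nonneg (by linarith) (by positivity)
  have hS2 : S2 a t0 T x0 = T - 2 / a := by
    rw [S2, hS1, hE]
    have e0 : T - (1 - (-1:ℝ)) / a = T - 2 / a := by norm_num
    rw [e0]
    apply max_eq_right
    rw [← sub_nonneg]
    have e1 : T - 2 / a - (t0 + (1 - x0) / a) = (a * (T - t0) - (3 - x0)) / a := by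
      field_simp
      ring
    rw [e1]
    apply div_nonneg (by linarith) ha.le
  have hA1 : x0 + a * (t1 - t0) = 1 := by
    have := t1_id (t0 := t0) (x0 := x0) ha
    rw [ht1]
    linarith [this]
  have h12 : t1 ≤ T - 2 / a := by
    rw [← hS1, ← hS2]
    exact S1_le_S2 (a := a) (t0 := t0) (T := T) (x0 := x0) ha htT.le hx0l hx0r
  refine ⟨?_, ?_, ?_⟩
  · intro t ht
    show x0 + a * (min t (S1 a t0 T x0) - t0) - a * (max t (S2 a t0 T x0) - S2 a t0 T x0)
        = x0 + a * (t - t0)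
    rw [hS1, hS2, min_eq_left ht.2, max_eq_right (le_trans ht.2 h12)]
    ring
  · intro t ht
    show x0 + a * (min t (S1 a t0 T x0) - t0) - a * (max t (S2 a t0 T x0) - S2 a t0 T x0)
        = 1
    rw [hS1, hS2, min_eq_right ht.1.le, max_eq_right ht.2]
    linear_combination hA1
  · intro t ht
    show x0 + a * (min t (S1 a t0 T x0) - t0) - a * (max t (S2 a t0 T x0) - S2 a t0 T x0)
        = -1 - a * (t - T)
    rw [hS1, hS2, min_eq_right (le_trans h12 ht.1.le), max_eq_left ht.1.le]
    have e2 : a * (2 / a) = 2 := by field_simp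
    linear_combination hA1 - e2

end regimes

end FP3A

open FP3A in
/-- Theorem 3.8: if the characteristic constant satisfies
ρ ≥ 2/a, then (FP3) has a local minimizer, every local minimizer is a global
minimizer, local minimizers are unique (the trajectories coincide on [t0,T] and
the controls coincide a.e.), and the optimal trajectory has the indicated form
in each of the three parameter regimes. -/
theorem fp3_thm3a
    (a lam t0 T x0 : ℝ) (hal : lam < a) (hlam : 0 < lam)
    (ht0 : 0 ≤ t0) (htT : t0 < T) (hx0 : x0 ∈ Icc (-1 : ℝ) 1)
    (hrho : 2 / a ≤ FP3rho a lam) :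
    (∃ x u : ℝ → ℝ, FP3LocalMin a lam t0 T x0 x u) ∧
    (∀ x u, FP3LocalMin a lam t0 T x0 x u → FP3GlobalMin a lam t0 T x0 x u) ∧
    (∀ x u y v, FP3LocalMin a lam t0 T x0 x u → FP3LocalMin a lam t0 T x0 y v →
      (∀ t ∈ Icc t0 T, x t = y t) ∧
      (∀ᵐ t ∂(volume.restrict (Icc t0 T)), u t = v t)) ∧
    (∀ x u, FP3LocalMin a lam t0 T x0 x u →
      (T - t0 ≤ (1 + x0) / a →
        ∀ t ∈ Icc t0 T, x t = x0 - a * (t - t0)) ∧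
      ((1 + x0) / a < T - t0 → T - t0 < (3 - x0) / a →
        (∀ t ∈ Icc t0 ((T + t0 - (1 + x0) / a) / 2), x t = x0 + a * (t - t0)) ∧
        (∀ t ∈ Ioc ((T + t0 - (1 + x0) / a) / 2) T, x t = -1 - a * (t - T))) ∧
      ((3 - x0) / a ≤ T - t0 →
        (∀ t ∈ Icc t0 (t0 + (1 - x0) / a), x t = x0 + a * (t - t0)) ∧
        (∀ t ∈ Ioc (t0 + (1 - x0) / a) (T - 2 / a), x t = 1) ∧
        (∀ t ∈ Ioc (T - 2 / a) T, x t = -1 - a * (t - T)))) := by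
  obtain ⟨hx0l, hx0r⟩ := hx0
  have ha : 0 < a := lt_trans hlam hal
  have hrho' : lam * (2 / a) ≤ Real.log (a / (a - lam)) := by
    have h1 := mul_le_mul_of_nonneg_left hrho hlam.le
    rw [FP3rho] at h1
    calc lam * (2 / a) ≤ lam * (1 / lam * Real.log (a / (a - lam))) := h1
    _ = Real.log (a / (a - lam)) := by field_simp
  have h2a : 0 ≤ 2 / a := by positivity
  have h1xm : 0 ≤ (1 - x0) / a := div_nonneg (by linarith) ha.le
  have h1xp : 0 ≤ (1 + x0) / a := div_nonneg (by linarith) ha.le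
  refine ⟨?_, ?_, ?_, ?_⟩
  · exact ⟨xb a t0 T x0, ub a t0 T x0, xb_feasible ha htT hx0l hx0r, 1, one_pos,
      fun y v hyv _ => (main_ineq ha hal hlam htT hx0l hx0r hrho' hyv).1⟩
  · intro x u h
    exact local_min_global ha hal hlam htT hx0l hx0r hrho' h
  · intro x u y v hx hy
    obtain ⟨hx1, hx2⟩ := local_min_classify ha hal hlam htT hx0l hx0r hrho' hx
    obtain ⟨hy1, hy2⟩ := local_min_classify ha hal hlam htT hx0l hx0r hrho' hy
    refine ⟨fun t ht => by rw [hx1 t ht, hy1 t ht], ?_⟩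
    filter_upwards [hx2, hy2] with s h1 h2
    rw [h1, h2]
  · intro x u h
    obtain ⟨hx1, -⟩ := local_min_classify ha hal hlam htT hx0l hx0r hrho' h
    refine ⟨?_, ?_, ?_⟩
    · intro hA t ht
      rw [hx1 t ht]
      exact regimeA ha htT hx0l hx0r hA t ht
    · intro hB1 hB2
      obtain ⟨r1, r2⟩ := regimeB ha htT hx0l hx0r hB1 hB2
      have htz0 : t0 ≤ (T + t0 - (1 + x0) / a) / 2 := by linarith [hB1]
      have htzT : (T + t0 - (1 + x0) / a) / 2 ≤ T := by linarith
      constructor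
      · intro t ht
        have htI : t ∈ Icc t0 T := ⟨ht.1, le_trans ht.2 htzT⟩
        rw [hx1 t htI]
        exact r1 t ht
      · intro t ht
        have htI : t ∈ Icc t0 T := ⟨le_trans htz0 ht.1.le, ht.2⟩
        rw [hx1 t htI]
        exact r2 t ht
    · intro hC
      obtain ⟨r1, r2, r3⟩ := regimeC ha htT hx0l hx0r hC
      have h13 : (1 - x0) / a + 2 / a = (3 - x0) / a := by
        rw [← add_div]
        congr 1
        ring
      have ht1T2 : t0 + (1 - x0) / a ≤ T - 2 / a := by linarith
      have hT2T : T - 2 / a ≤ T := by linarith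
      refine ⟨?_, ?_, ?_⟩
      · intro t ht
        have htI : t ∈ Icc t0 T := ⟨ht.1, le_trans ht.2 (le_trans ht1T2 hT2T)⟩
        rw [hx1 t htI]
        exact r1 t ht
      · intro t ht
        have htI : t ∈ Icc t0 T :=
          ⟨le_trans (by linarith : t0 ≤ t0 + (1 - x0) / a) ht.1.le, le_trans ht.2 hT2T⟩
        rw [hx1 t htI]
        exact r2 t ht
      · intro t ht
        have htI : t ∈ Icc t0 T :=
          ⟨le_trans (by linarith : t0 ≤ T - 2 / a) ht.1.le, ht.2⟩
        rw [hx1 t htI]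
        exact r3 t ht
end
end

section
/- Let (x̄,ū) be a W^{1,1} local minimizer for (FP3) such that x̄(T) = −1, x̄(t) > −1 for all t ∈ [t0, T), and x̄(t) < 1 for all t ∈ [t0, T]. Then either (i) T − t0 = (1+x0)/a and x̄(t) = x0 − a(t−t0) for all t ∈ [t0,T], or (ii) (1+x0)/a < T − t0 < (3−x0)/a and, with t_ζ := (T + t0 − (1+x0)/a)/2, x̄(t) = x0 + a(t−t0) for t ∈ [t0, t_ζ] and x̄(t) = −1 − a(t−T) for t ∈ (t_ζ, T]. -/
open MeasureTheory Set

noncomputable section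

namespace FP3Aux




lemma intInt {f : ℝ → ℝ} {C : ℝ} (c d : ℝ) (hf : Measurable f) (hfb : ∀ s, |f s| ≤ C) :
    IntervalIntegrable f volume c d := by
  rw [intervalIntegrable_iff]
  refine Integrable.mono' (g := fun _ => C) ?_ hf.aestronglyMeasurable ?_
  · exact integrableOn_const measure_Ioc_lt_top.ne (by simp)
  · exact Filter.Eventually.of_forall fun s => by simpa [Real.norm_eq_abs] using hfb s

lemma expint (lam : ℝ) (hlam : lam ≠ 0) (c d : ℝ) :
    ∫ t in c..d, Real.exp (-(lam * t)) = (Real.exp (-(lam*c)) - Real.exp (-(lam*d)))/lam := by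
  have h : ∀ t : ℝ, HasDerivAt (fun t => -Real.exp (-(lam*t))/lam) (Real.exp (-(lam*t))) t := by
    intro t
    have h1 : HasDerivAt (fun t : ℝ => -(lam*t)) (-lam) t := by
      have := ((hasDerivAt_id' t).const_mul lam).neg; simp only [mul_one] at this; exact this
    have h2 := (Real.hasDerivAt_exp (-(lam*t))).comp t h1
    have h3 := h2.neg.div_const lam
    refine h3.congr_deriv ?_
    rw [mul_neg, neg_neg, mul_div_assoc, div_self hlam, mul_one]
  rw [intervalIntegral.integral_eq_sub_of_hasDerivAt (fun t _ => h t)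
    ((Real.continuous_exp.comp (by continuity)).intervalIntegrable c d)]
  ring


lemma swap_lemma (lam t0 T : ℝ) (hlam : 0 < lam) (hT : t0 ≤ T)
    (f : ℝ → ℝ) (C : ℝ) (hf : Measurable f) (hfb : ∀ s, |f s| ≤ C) :
    ∫ t in t0..T, Real.exp (-(lam*t)) * ∫ s in t0..t, f s
      = ∫ s in t0..T, f s * ((Real.exp (-(lam*s)) - Real.exp (-(lam*T)))/lam) := by
  set E : ℝ → ℝ := fun t => Real.exp (-(lam*t)) with hE
  set μ := volume.restrict (Ioc t0 T) with hμ
  have hC0 : 0 ≤ C := le_trans (abs_nonneg _) (hfb 0)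
  have hfin : IsFiniteMeasure μ := by
    constructor
    rw [hμ, Measure.restrict_apply_univ]
    exact measure_Ioc_lt_top
  set F : ℝ → ℝ → ℝ := fun t s => if s ≤ t then E t * f s else 0 with hF
  have hFmeas : Measurable (Function.uncurry F) := by
    have hset : MeasurableSet {p : ℝ × ℝ | p.2 ≤ p.1} :=
      measurableSet_le measurable_snd measurable_fst
    have hE1 : Measurable E := by
      exact Real.measurable_exp.comp ((measurable_const.mul measurable_id).neg)
    have hbase : Measurable fun p : ℝ × ℝ => E p.1 * f p.2 :=
      (hE1.comp measurable_fst).mul (hf.comp measurable_snd)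
    exact Measurable.ite hset hbase measurable_const
  have hEmono : ∀ t ∈ Ioc t0 T, E t ≤ E t0 := by
    intro t ht
    exact Real.exp_le_exp.mpr (by nlinarith [ht.1])
  have hFint : Integrable (Function.uncurry F) (μ.prod μ) := by
    refine Integrable.mono' (g := fun _ => E t0 * C) (integrable_const _)
      hFmeas.aestronglyMeasurable ?_
    have hprod : μ.prod μ = (volume.prod volume).restrict ((Ioc t0 T) ×ˢ (Ioc t0 T)) := by
      rw [hμ, Measure.prod_restrict]
    rw [hprod]
    filter_upwards [ae_restrict_mem (measurableSet_Ioc.prod measurableSet_Ioc)] with p hp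
    rcases hp with ⟨hp1, hp2⟩
    simp only [Function.uncurry, hF, Real.norm_eq_abs]
    split_ifs with h
    · rw [abs_mul]
      have h1 : |E p.1| = E p.1 := abs_of_pos (Real.exp_pos _)
      rw [h1]
      have := hEmono p.1 hp1
      have h2 := hfb p.2
      nlinarith [Real.exp_pos (-(lam * p.1)), abs_nonneg (f p.2)]
    · simp
      positivity
  have hswap := MeasureTheory.integral_integral_swap hFint
  have hLHS : (∫ t, ∫ s, F t s ∂μ ∂μ) = ∫ t in t0..T, E t * ∫ s in t0..t, f s := by
    rw [intervalIntegral.integral_of_le hT, hμ]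
    refine setIntegral_congr_fun measurableSet_Ioc ?_
    intro t ht
    have h1 : ∀ s : ℝ, F t s = (Iic t).indicator (fun s => E t * f s) s := by
      intro s
      simp only [hF, Set.indicator_apply, mem_Iic]
    calc (∫ s, F t s ∂μ) = ∫ s in Ioc t0 T, (Iic t).indicator (fun s => E t * f s) s := by
          rw [hμ]; exact setIntegral_congr_fun measurableSet_Ioc (fun s _ => h1 s)
      _ = ∫ s in Ioc t0 T ∩ Iic t, E t * f s := by
          rw [setIntegral_indicator measurableSet_Iic]
      _ = ∫ s in Ioc t0 t, E t * f s := by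
          have hseteq : Ioc t0 T ∩ Iic t = Ioc t0 t := by
            ext s
            simp only [mem_inter_iff, mem_Iic, mem_Ioc]
            constructor
            · rintro ⟨⟨h2, h3⟩, h1⟩; exact ⟨h2, h1⟩
            · rintro ⟨h2, h1⟩; exact ⟨⟨h2, le_trans h1 ht.2⟩, h1⟩
          rw [hseteq]
      _ = E t * ∫ s in Ioc t0 t, f s := by rw [MeasureTheory.integral_const_mul]
      _ = E t * ∫ s in t0..t, f s := by rw [intervalIntegral.integral_of_le ht.1.le]
  have hRHS : (∫ s, ∫ t, F t s ∂μ ∂μ)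
      = ∫ s in t0..T, f s * ((E s - E T)/lam) := by
    rw [intervalIntegral.integral_of_le hT, hμ]
    refine setIntegral_congr_fun measurableSet_Ioc ?_
    intro s hs
    have h1 : ∀ t : ℝ, F t s = (Ici s).indicator (fun t => E t * f s) t := by
      intro t
      simp only [hF, Set.indicator_apply, mem_Ici]
    calc (∫ t, F t s ∂μ) = ∫ t in Ioc t0 T, (Ici s).indicator (fun t => E t * f s) t := by
          rw [hμ]; exact setIntegral_congr_fun measurableSet_Ioc (fun t _ => h1 t)
      _ = ∫ t in Ioc t0 T ∩ Ici s, E t * f s := by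
          rw [setIntegral_indicator measurableSet_Ici]
      _ = ∫ t in Icc s T, E t * f s := by
          have hseteq : Ioc t0 T ∩ Ici s = Icc s T := by
            ext t
            simp only [mem_inter_iff, mem_Ici, mem_Ioc, mem_Icc]
            constructor
            · rintro ⟨⟨_, h3⟩, h1⟩; exact ⟨h1, h3⟩
            · rintro ⟨h1, h3⟩; exact ⟨⟨lt_of_lt_of_le hs.1 h1, h3⟩, h1⟩
          rw [hseteq]
      _ = ∫ t in Ioc s T, E t * f s := MeasureTheory.integral_Icc_eq_integral_Ioc
      _ = (∫ t in Ioc s T, E t) * f s := by rw [MeasureTheory.integral_mul_const]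
      _ = (∫ t in s..T, E t) * f s := by rw [intervalIntegral.integral_of_le hs.2]
      _ = f s * ((E s - E T)/lam) := by
          rw [hE]
          rw [expint lam (ne_of_gt hlam) s T]
          ring
  rw [← hLHS, ← hRHS, hswap]






lemma intIntMul {v : ℝ → ℝ} {C : ℝ} (hv : Measurable v) (hvb : ∀ s, |v s| ≤ C)
    (g : ℝ → ℝ) (hg : Continuous g) (c d : ℝ) :
    IntervalIntegrable (fun t => g t * v t) volume c d := by
  have hC0 : 0 ≤ C := le_trans (abs_nonneg _) (hvb 0)
  refine ((hg.mul continuous_const : Continuous fun t => g t * C).intervalIntegrable c d).mono_fun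
    ?_ ?_
  · exact (hg.measurable.mul hv).aestronglyMeasurable.restrict
  · refine Filter.Eventually.of_forall fun t => ?_
    simp only [Real.norm_eq_abs, Pi.mul_apply, abs_mul, abs_of_nonneg hC0]
    nlinarith [abs_nonneg (g t), abs_nonneg (v t), hvb t]

lemma costid (a lam t0 T x0 : ℝ) (ha : 0 < a) (hlam : 0 < lam) (hT : t0 ≤ T)
    (v : ℝ → ℝ) (hv : Measurable v) (hvb : ∀ s, |v s| ≤ 1) :
    FP3Cost lam t0 T (fun t => x0 + ∫ s in t0..t, -(a * v s)) v
      = (lam/a - 1) * (∫ t in t0..T, Real.exp (-(lam*t)) * (x0 + ∫ s in t0..t, -(a * v s)))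
        + (Real.exp (-(lam*T)) * (x0 + ∫ s in t0..T, -(a * v s))
            - Real.exp (-(lam*t0)) * x0)/a := by
  set E : ℝ → ℝ := fun t => Real.exp (-(lam*t)) with hE
  set f : ℝ → ℝ := fun s => -(a * v s) with hf
  have hfmeas : Measurable f := (measurable_const.mul hv).neg
  have hfb : ∀ s, |f s| ≤ a := by
    intro s
    have := hvb s
    rw [hf]
    rw [abs_neg, abs_mul, abs_of_pos ha]
    nlinarith [abs_nonneg (v s)]
  set P : ℝ → ℝ := fun t => ∫ s in t0..t, f s with hP
  have hPcont : Continuous P :=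
    intervalIntegral.continuous_primitive (fun c d => intInt c d hfmeas hfb) t0
  have hEcont : Continuous E := Real.continuous_exp.comp (continuous_const.mul continuous_id).neg
  have iEX : IntervalIntegrable (fun t => E t * (x0 + P t)) volume t0 T :=
    (hEcont.mul (continuous_const.add hPcont)).intervalIntegrable t0 T
  have iEv : IntervalIntegrable (fun t => E t * v t) volume t0 T := intIntMul hv hvb E hEcont t0 T
  have iEP : IntervalIntegrable (fun t => E t * P t) volume t0 T :=
    (hEcont.mul hPcont).intervalIntegrable t0 T
  have iE : IntervalIntegrable E volume t0 T := hEcont.intervalIntegrable t0 T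
  have ifE : IntervalIntegrable (fun s => f s * E s) volume t0 T := by
    have h := intIntMul hfmeas hfb E hEcont t0 T
    have heq : (fun s => f s * E s) = fun s => E s * f s := by funext s; ring
    rw [heq]; exact h
  have iff' : IntervalIntegrable f volume t0 T := intInt t0 T hfmeas hfb
  set IA := ∫ t in t0..T, E t * v t with hIA
  set IB := ∫ t in t0..T, E t * P t with hIB
  set Q := P T with hQ
  -- step 1
  have step1 : FP3Cost lam t0 T (fun t => x0 + P t) v
      = -(∫ t in t0..T, E t * (x0 + P t)) - IA := by
    rw [FP3Cost]
    have hpt : ∀ t, -(E t * ((x0 + P t) + v t))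
        = -((E t * (x0 + P t)) + (E t * v t)) := by intro t; ring
    rw [intervalIntegral.integral_congr (fun t _ => hpt t)]
    rw [intervalIntegral.integral_neg, intervalIntegral.integral_add iEX iEv]
    ring
  -- step 2 : split
  have step2 : (∫ t in t0..T, E t * (x0 + P t)) = x0 * ((E t0 - E T)/lam) + IB := by
    have hpt : ∀ t, E t * (x0 + P t) = x0 * E t + E t * P t := by intro t; ring
    rw [intervalIntegral.integral_congr (fun t _ => hpt t)]
    rw [intervalIntegral.integral_add (iE.const_mul x0) iEP,
      intervalIntegral.integral_const_mul, expint lam (ne_of_gt hlam) t0 T]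
  -- step 3 : swap
  have step3 : IB = (1/lam) * ((-a) * IA) - (E T/lam) * Q := by
    have h1 : IB = ∫ s in t0..T, f s * ((E s - E T)/lam) := by
      rw [hIB]
      have := swap_lemma lam t0 T hlam hT f a hfmeas hfb
      rw [hE, hP]
      exact this
    have h2 : ∀ s, f s * ((E s - E T)/lam) = (1/lam) * (f s * E s) - (E T/lam) * f s := by
      intro s; field_simp
    rw [h1, intervalIntegral.integral_congr (fun s _ => h2 s),
      intervalIntegral.integral_sub ((ifE.const_mul (1/lam))) (iff'.const_mul (E T/lam)),
      intervalIntegral.integral_const_mul, intervalIntegral.integral_const_mul]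
    have h3 : ∀ s, f s * E s = (-a) * (E s * v s) := by intro s; rw [hf]; ring
    rw [intervalIntegral.integral_congr (fun s _ => h3 s), intervalIntegral.integral_const_mul]
  -- assemble
  have hXT : (fun t => x0 + P t) = fun t => x0 + ∫ s in t0..t, -(a * v s) := rfl
  rw [← hXT]
  rw [step1, step2, step3]
  have hQdef : (∫ s in t0..T, -(a * v s)) = Q := rfl
  rw [hQdef]
  field_simp
  ring




def um (a t0 T x0 : ℝ) : ℝ → ℝ := fun s =>
  if s ≤ min ((T + t0 - (1+x0)/a)/2) (t0 + (1-x0)/a) then -1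
  else if s ≤ max ((T + t0 - (1+x0)/a)/2) (T - 2/a) then 0 else 1

def Mfun (a t0 T x0 : ℝ) : ℝ → ℝ := fun t => min (min (x0 + a*(t-t0)) (-1 + a*(T-t))) 1

lemma um_meas (a t0 T x0 : ℝ) : Measurable (um a t0 T x0) := by
  unfold um
  exact Measurable.ite (measurableSet_le measurable_id measurable_const) measurable_const
    (Measurable.ite (measurableSet_le measurable_id measurable_const) measurable_const
      measurable_const)

lemma um_bd (a t0 T x0 : ℝ) : ∀ s, |um a t0 T x0 s| ≤ 1 := by
  intro s
  unfold um
  split_ifs <;> simp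

lemma stepint {w : ℝ → ℝ} {k : ℝ} {c d : ℝ} (hcd : c ≤ d) (a : ℝ)
    (h : ∀ s ∈ Ioc c d, w s = k) :
    ∫ s in c..d, -(a * w s) = -(a*k) * (d - c) := by
  rw [intervalIntegral.integral_of_le hcd]
  rw [setIntegral_congr_fun measurableSet_Ioc
    (g := fun _ => -(a*k)) (fun s hs => by rw [h s hs])]
  simp [Real.volume_Ioc, ENNReal.toReal_ofReal (sub_nonneg.mpr hcd), smul_eq_mul]
  rw [max_eq_left (sub_nonneg.mpr hcd)]
  ring

set_option maxHeartbeats 2000000 in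
lemma Mprim (a t0 T x0 : ℝ) (ha : 0 < a) (htT : t0 < T)
    (hx0 : -1 ≤ x0) (hx1 : x0 ≤ 1) (h1 : 1 + x0 ≤ a * (T - t0)) :
    ∀ t ∈ Icc t0 T, Mfun a t0 T x0 t = x0 + ∫ s in t0..t, -(a * um a t0 T x0 s) := by
  obtain ⟨tz, htz⟩ : ∃ z : ℝ, z = (T + t0 - (1+x0)/a)/2 := ⟨_, rfl⟩
  obtain ⟨t1', ht1'⟩ : ∃ z : ℝ, z = t0 + (1-x0)/a := ⟨_, rfl⟩
  obtain ⟨q1, hq1⟩ : ∃ z : ℝ, z = min tz t1' := ⟨_, rfl⟩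
  obtain ⟨q2, hq2⟩ : ∃ z : ℝ, z = max tz (T - 2/a) := ⟨_, rfl⟩
  have ha' : a ≠ 0 := ne_of_gt ha
  have e1 : a * ((1+x0)/a) = 1 + x0 := by field_simp
  have e2 : a * ((1-x0)/a) = 1 - x0 := by field_simp
  have e3 : a * (2/a) = 2 := by field_simp
  have hAB : (1+x0)/a + (1-x0)/a = 2/a := by field_simp; ring
  have hA0 : 0 ≤ (1+x0)/a := div_nonneg (by linarith) ha.le
  have hB0 : 0 ≤ (1-x0)/a := div_nonneg (by linarith) ha.le
  have hD0 : 0 < 2/a := by positivity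
  have hdivle : (1+x0)/a ≤ T - t0 := by rw [div_le_iff₀ ha]; linarith
  have htz0 : t0 ≤ tz := by rw [htz]; linarith
  have htzT : tz ≤ T := by rw [htz]; linarith
  have ht10 : t0 ≤ t1' := by rw [ht1']; linarith
  have hq10 : t0 ≤ q1 := by rw [hq1]; exact le_min htz0 ht10
  have hq1z : q1 ≤ tz := by rw [hq1]; exact min_le_left _ _
  have hq1t1 : q1 ≤ t1' := by rw [hq1]; exact min_le_right _ _
  have hq2z : tz ≤ q2 := by rw [hq2]; exact le_max_left _ _
  have hq2d : T - 2/a ≤ q2 := by rw [hq2]; exact le_max_right _ _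
  have hq12 : q1 ≤ q2 := le_trans hq1z hq2z
  have hq2T : q2 ≤ T := by rw [hq2]; exact max_le htzT (by linarith)
  -- collapse facts
  have hcol1 : tz ≤ t1' → T - 2/a ≤ tz := by
    intro h; rw [htz] at h ⊢; rw [ht1'] at h; linarith
  have hcol2 : t1' ≤ tz → tz ≤ T - 2/a := by
    intro h; rw [htz] at h ⊢; rw [ht1'] at h; linarith
  have hq1sum : q1 + q2 = 2 * tz := by
    rcases le_total tz t1' with h | h
    · rw [hq1, hq2, min_eq_left h, max_eq_left (hcol1 h)]; ring
    · rw [hq1, hq2, min_eq_right h, max_eq_right (hcol2 h), htz, ht1']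
      field_simp
      ring
  have hMf : Mfun a t0 T x0 = fun t => min (min (x0 + a*(t-t0)) (-1 + a*(T-t))) 1 := rfl
  obtain ⟨u, hum⟩ : ∃ u : ℝ → ℝ, u = fun s : ℝ =>
      if s ≤ q1 then (-1:ℝ) else if s ≤ q2 then 0 else 1 := ⟨_, rfl⟩
  have hu : um a t0 T x0 = u := by rw [hum, hq1, hq2, htz, ht1']; rfl
  have humeas : Measurable u := by rw [← hu]; exact um_meas a t0 T x0
  have humbd : ∀ s, |u s| ≤ (1:ℝ) := by rw [← hu]; exact um_bd a t0 T x0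
  have hiu : ∀ c d : ℝ, IntervalIntegrable (fun s => -(a * u s)) volume c d := by
    intro c d
    refine intInt c d ((measurable_const.mul humeas).neg) (C := a) ?_
    intro s
    rw [abs_neg, abs_mul, abs_of_pos ha]
    nlinarith [abs_nonneg (u s), humbd s]
  have hI1 : ∫ s in t0..q1, -(a * u s) = a * (q1 - t0) := by
    have := stepint hq10 a (w := u) (k := -1) (fun s hs => by
      rw [hum]; simp only; rw [if_pos hs.2])
    rw [this]; ring
  intro t ht
  rw [hu]
  rcases le_or_gt t q1 with hta | hta
  · have hint : ∫ s in t0..t, -(a * u s) = a * (t - t0) := by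
      have := stepint ht.1 a (w := u) (k := -1) (fun s hs => by
        rw [hum]; simp only; rw [if_pos (le_trans hs.2 hta)])
      rw [this]; ring
    have hud : x0 + a*(t-t0) ≤ -1 + a*(T-t) := by
      have htz' : t ≤ tz := le_trans hta hq1z
      rw [htz] at htz'
      nlinarith
    have hu1 : x0 + a*(t-t0) ≤ 1 := by
      have ht1 : t ≤ t1' := le_trans hta hq1t1
      rw [ht1'] at ht1
      nlinarith
    rw [hMf]
    simp only
    rw [min_eq_left hud, min_eq_left hu1, hint]
  · rcases le_or_gt t q2 with htb | htb
    · have ht1tz : t1' ≤ tz := by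
        by_contra hcon
        push_neg at hcon
        have h2 := hcol1 hcon.le
        have hq1e : q1 = tz := by rw [hq1, min_eq_left hcon.le]
        have hq2e : q2 = tz := by rw [hq2, max_eq_left h2]
        rw [hq1e] at hta
        rw [hq2e] at htb
        linarith
      have hq1e : q1 = t1' := by rw [hq1, min_eq_right ht1tz]
      have hq2e : q2 = T - 2/a := by rw [hq2, max_eq_right (hcol2 ht1tz)]
      have hint : ∫ s in t0..t, -(a * u s) = a * (q1 - t0) := by
        have hadd := intervalIntegral.integral_add_adjacent_intervals (hiu t0 q1) (hiu q1 t)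
        have hz : ∫ s in q1..t, -(a * u s) = 0 := by
          have := stepint hta.le a (w := u) (k := 0) (fun s hs => by
            rw [hum]; simp only
            rw [if_neg (not_le.mpr hs.1), if_pos (le_trans hs.2 htb)])
          rw [this]; ring
        rw [← hadd, hI1, hz]; ring
      have hwall : x0 + a * (q1 - t0) = 1 := by
        rw [hq1e, ht1']
        nlinarith [e2]
      have hup : (1:ℝ) ≤ x0 + a*(t-t0) := by nlinarith [hwall, hta.le]
      have hdn : (1:ℝ) ≤ -1 + a*(T-t) := by
        have hle : t ≤ T - 2/a := by rw [← hq2e]; exact htb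
        nlinarith [e3]
      rw [hMf]
      simp only
      rw [min_eq_right (le_min hup hdn), hint]
      linarith
    · have hint : ∫ s in t0..t, -(a * u s) = a*(q1-t0) - a*(t - q2) := by
        have hadd1 := intervalIntegral.integral_add_adjacent_intervals (hiu t0 q2) (hiu q2 t)
        have hadd0 := intervalIntegral.integral_add_adjacent_intervals (hiu t0 q1) (hiu q1 q2)
        have hz : ∫ s in q1..q2, -(a * u s) = 0 := by
          have := stepint hq12 a (w := u) (k := 0) (fun s hs => by
            rw [hum]; simp only
            rw [if_neg (not_le.mpr hs.1), if_pos hs.2])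
          rw [this]; ring
        have h3 : ∫ s in q2..t, -(a * u s) = -a * (t - q2) := by
          have := stepint htb.le a (w := u) (k := 1) (fun s hs => by
            rw [hum]; simp only
            rw [if_neg (not_le.mpr (lt_of_le_of_lt hq12 hs.1)), if_neg (not_le.mpr hs.1)])
          rw [this]; ring
        rw [← hadd1, ← hadd0, hI1, hz, h3]; ring
      have hdu : -1 + a*(T-t) ≤ x0 + a*(t-t0) := by
        have htz' : tz ≤ t := le_trans hq2z htb.le
        rw [htz] at htz'
        nlinarith
      have hd1 : -1 + a*(T-t) ≤ 1 := by
        have hge : T - 2/a ≤ t := le_trans hq2d htb.le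
        nlinarith [e3]
      rw [hMf]
      simp only
      rw [min_eq_right hdu, min_eq_left hd1, hint]
      have hsum : a*(q1 + q2) = a*(2*tz) := by rw [hq1sum]
      rw [htz] at hsum
      nlinarith [e1, hsum]




lemma zero_of_ae (c d : ℝ) (hcd : c < d) (φ : ℝ → ℝ) (hφ : Continuous φ)
    (hae : ∀ᵐ s ∂(volume.restrict (Ioc c d)), φ s = 0) :
    ∀ t ∈ Icc c d, φ t = 0 := by
  intro t ht
  by_contra hne
  have he : 0 < |φ t| := abs_pos.mpr hne
  obtain ⟨r, hr, hball⟩ := Metric.continuous_iff.mp hφ t |φ t| he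
  set α := max c (t - r) with hα
  set β := min d (t + r) with hβ
  have hαβ : α < β := by
    rw [hα, hβ]
    rcases ht with ⟨h1, h2⟩
    apply max_lt <;> [skip; skip] <;> apply lt_min <;> linarith
  have hsub : Ioo α β ⊆ Ioc c d := fun s hs =>
    ⟨lt_of_le_of_lt (le_max_left _ _) hs.1, le_trans hs.2.le (min_le_left _ _)⟩
  have hne' : Ioo α β ⊆ {s | ¬ φ s = 0} := by
    intro s hs
    have hd : dist s t < r := by
      rw [Real.dist_eq, abs_lt]
      constructor
      · have := lt_of_le_of_lt (le_max_right c (t - r)) hs.1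
        linarith
      · have := lt_of_lt_of_le hs.2 (min_le_right d (t + r))
        linarith
    have := hball s hd
    rw [Real.dist_eq] at this
    intro h0
    rw [h0, zero_sub, abs_neg] at this
    exact lt_irrefl _ this
  have h0 : (volume.restrict (Ioc c d)) {s | ¬ φ s = 0} = 0 := ae_iff.mp hae
  have h2 : (volume.restrict (Ioc c d)) (Ioo α β) = 0 :=
    measure_mono_null hne' h0
  rw [Measure.restrict_apply measurableSet_Ioo, inter_eq_self_of_subset_left hsub,
    Real.volume_Ioo] at h2
  have := ENNReal.ofReal_pos.mpr (sub_pos.mpr hαβ)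
  rw [h2] at this
  exact lt_irrefl _ this


end FP3Aux

set_option maxHeartbeats 4000000 in
/-- Subcase 3a: a local minimizer whose trajectory ends at `-1`,
stays above `-1` on `[t0,T)` and strictly below `1` on `[t0,T]` has one of two
explicit forms. -/
theorem fp3_subcase_3a
    (a lam t0 T x0 : ℝ) (hal : lam < a) (hlam : 0 < lam)
    (ht0 : 0 ≤ t0) (htT : t0 < T) (hx0 : x0 ∈ Icc (-1 : ℝ) 1)
    (xb ub : ℝ → ℝ) (hmin : FP3LocalMin a lam t0 T x0 xb ub)
    (hend : xb T = -1)
    (habove : ∀ t ∈ Ico t0 T, -1 < xb t)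
    (hbelow : ∀ t ∈ Icc t0 T, xb t < 1) :
    (T - t0 = (1 + x0) / a ∧ ∀ t ∈ Icc t0 T, xb t = x0 - a * (t - t0)) ∨
    ((1 + x0) / a < T - t0 ∧ T - t0 < (3 - x0) / a ∧
      (∀ t ∈ Icc t0 ((T + t0 - (1 + x0) / a) / 2), xb t = x0 + a * (t - t0)) ∧
      (∀ t ∈ Ioc ((T + t0 - (1 + x0) / a) / 2) T, xb t = -1 - a * (t - T))) := by
  obtain ⟨⟨hub_meas, hub_bd, hxb_eq, hxb_mem⟩, δ, hδ, Hmin⟩ := hmin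
  have ha : 0 < a := lt_trans hlam hal
  have ha' : a ≠ 0 := ne_of_gt ha
  have hT : t0 ≤ T := htT.le
  obtain ⟨hx0l, hx0r⟩ := hx0
  -- measurable bounded representative of ub
  obtain ⟨w, hw_sm, hw_ae⟩ := hub_meas
  obtain ⟨g, hgdef⟩ : ∃ g : ℝ → ℝ, g = fun s => max (-1) (min 1 (w s)) := ⟨_, rfl⟩
  have hg_meas : Measurable g := by
    rw [hgdef]; exact measurable_const.max (measurable_const.min hw_sm.measurable)
  have hg_lb : ∀ s, -1 ≤ g s := by intro s; rw [hgdef]; exact le_max_left _ _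
  have hg_ub : ∀ s, g s ≤ 1 := by
    intro s; rw [hgdef]; exact max_le (by norm_num) (min_le_left _ _)
  have hg_bd : ∀ s, |g s| ≤ 1 := fun s => abs_le.mpr ⟨hg_lb s, hg_ub s⟩
  have hg_ae : ∀ᵐ s ∂(volume.restrict (Icc t0 T)), ub s = g s := by
    filter_upwards [hub_bd, hw_ae] with s h1 h2
    rw [hgdef]
    simp only
    rw [← h2, min_eq_right h1.2, max_eq_right h1.1]
  have hg_imp : ∀ᵐ s ∂(volume : Measure ℝ), s ∈ Icc t0 T → ub s = g s :=
    ae_imp_of_ae_restrict hg_ae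
  have hEcont : Continuous (fun t => Real.exp (-(lam*t))) :=
    Real.continuous_exp.comp (continuous_const.mul continuous_id).neg
  have hfg_bd : ∀ s, |(-(a * g s))| ≤ a := by
    intro s; rw [abs_neg, abs_mul, abs_of_pos ha]; nlinarith [hg_bd s, abs_nonneg (g s)]
  have hig : ∀ c d : ℝ, IntervalIntegrable (fun s => -(a * g s)) volume c d :=
    fun c d => FP3Aux.intInt c d (measurable_const.mul hg_meas).neg hfg_bd
  obtain ⟨X, hXdef⟩ : ∃ X : ℝ → ℝ, X = fun t => x0 + ∫ s in t0..t, -(a * g s) := ⟨_, rfl⟩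
  have hXcont : Continuous X := by
    rw [hXdef]
    exact continuous_const.add (intervalIntegral.continuous_primitive hig t0)
  have hxbX : ∀ t ∈ Icc t0 T, xb t = X t := by
    intro t ht
    rw [hxb_eq t ht, hXdef]
    simp only
    congr 1
    apply intervalIntegral.integral_congr_ae
    filter_upwards [hg_imp] with s hs hmem
    rw [Set.uIoc_of_le ht.1] at hmem
    rw [hs ⟨hmem.1.le, le_trans hmem.2 ht.2⟩]
  -- um' and XM
  obtain ⟨um', humdef⟩ : ∃ u : ℝ → ℝ, u = FP3Aux.um a t0 T x0 := ⟨_, rfl⟩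
  have hum_meas : Measurable um' := humdef ▸ FP3Aux.um_meas a t0 T x0
  have hum_bd : ∀ s, |um' s| ≤ 1 := humdef ▸ FP3Aux.um_bd a t0 T x0
  have hfum_bd : ∀ s, |(-(a * um' s))| ≤ a := by
    intro s; rw [abs_neg, abs_mul, abs_of_pos ha]; nlinarith [hum_bd s, abs_nonneg (um' s)]
  have hium : ∀ c d : ℝ, IntervalIntegrable (fun s => -(a * um' s)) volume c d :=
    fun c d => FP3Aux.intInt c d (measurable_const.mul hum_meas).neg hfum_bd
  obtain ⟨XM, hXMdef⟩ : ∃ XM : ℝ → ℝ, XM = fun t => x0 + ∫ s in t0..t, -(a * um' s) := ⟨_, rfl⟩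
  have hXMcont : Continuous XM := by
    rw [hXMdef]
    exact continuous_const.add (intervalIntegral.continuous_primitive hium t0)
  -- h1 : minimal time bound
  have hXT : X T = -1 := by rw [← hxbX T ⟨hT, le_refl T⟩]; exact hend
  have hintb : ∀ c d : ℝ, c ≤ d → |∫ s in c..d, -(a * g s)| ≤ a * (d - c) := by
    intro c d hcd
    have hb := intervalIntegral.norm_integral_le_of_norm_le_const (C := a)
      (f := fun s => -(a * g s)) (a := c) (b := d) (fun x _ => by
        rw [Real.norm_eq_abs]; exact hfg_bd x)
    rw [Real.norm_eq_abs] at hb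
    calc |∫ s in c..d, -(a*g s)| ≤ a * |d - c| := hb
    _ = a * (d - c) := by rw [abs_of_nonneg (sub_nonneg.mpr hcd)]
  have h1 : 1 + x0 ≤ a * (T - t0) := by
    have hb := abs_le.mp (hintb t0 T hT)
    have h2 : X T = x0 + ∫ s in t0..T, -(a * g s) := by rw [hXdef]
    rw [hXT] at h2
    linarith [hb.1]
  -- X ≤ Mfun on Icc
  have hXle : ∀ t ∈ Icc t0 T, X t ≤ FP3Aux.Mfun a t0 T x0 t := by
    intro t ht
    have hXt : X t = x0 + ∫ s in t0..t, -(a * g s) := by rw [hXdef]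
    have hup : X t ≤ x0 + a * (t - t0) := by
      have hb := abs_le.mp (hintb t0 t ht.1)
      rw [hXt]; linarith [hb.2]
    have hdown : X t ≤ -1 + a * (T - t) := by
      have hadd := intervalIntegral.integral_add_adjacent_intervals (hig t0 t) (hig t T)
      have hb := abs_le.mp (hintb t T ht.2)
      have h2 : X T = X t + ∫ s in t..T, -(a * g s) := by
        rw [hXdef]; simp only; rw [← hadd]; ring
      rw [hXT] at h2
      linarith [hb.1]
    have h1' : X t ≤ 1 := by rw [← hxbX t ht]; exact (hxb_mem t ht).2
    exact le_min (le_min hup hdown) h1'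
  have hMeq0 := FP3Aux.Mprim a t0 T x0 ha htT hx0l hx0r h1
  have hMeq : ∀ t ∈ Icc t0 T, FP3Aux.Mfun a t0 T x0 t = XM t := by
    intro t ht
    rw [hXMdef]
    simp only
    rw [humdef]
    exact hMeq0 t ht
  have hMT : FP3Aux.Mfun a t0 T x0 T = -1 := by
    unfold FP3Aux.Mfun
    have e : -1 + a*(T-T) = -1 := by ring
    rw [e]
    rw [min_eq_right (show (-1:ℝ) ≤ x0 + a*(T-t0) by nlinarith)]
    exact min_eq_left (by norm_num)
  have hXMT : XM T = -1 := by rw [← hMeq T ⟨hT, le_refl T⟩]; exact hMT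
  have hXM_mem : ∀ t ∈ Icc t0 T, XM t ∈ Icc (-1:ℝ) 1 := by
    intro t ht
    rw [← hMeq t ht]
    constructor
    · unfold FP3Aux.Mfun
      refine le_min (le_min ?_ ?_) ?_
      · nlinarith [ht.1]
      · nlinarith [ht.2]
      · norm_num
    · exact min_le_right _ _
  -- theta and the competitor
  obtain ⟨θ, hθdef⟩ : ∃ z : ℝ, z = min 1 (δ / (2*a*(T - t0) + 1)) := ⟨_, rfl⟩
  have hθpos : 0 < θ := by
    rw [hθdef]; exact lt_min one_pos (div_pos hδ (by nlinarith [mul_nonneg ha.le (sub_nonneg.mpr hT)]))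
  have hθ1 : θ ≤ 1 := by rw [hθdef]; exact min_le_left _ _
  obtain ⟨vθ, hvdef⟩ : ∃ v : ℝ → ℝ, v = fun s => (1-θ) * g s + θ * um' s := ⟨_, rfl⟩
  have hv_meas : Measurable vθ := by
    rw [hvdef]; exact (measurable_const.mul hg_meas).add (measurable_const.mul hum_meas)
  have hv_bd : ∀ s, |vθ s| ≤ 1 := by
    intro s
    rw [hvdef, abs_le]
    have h2 := abs_le.mp (hg_bd s); have h3 := abs_le.mp (hum_bd s)
    constructor <;> simp only <;> nlinarith [hθpos.le, hθ1]
  have hiv : ∀ c d : ℝ, IntervalIntegrable (fun s => -(a * vθ s)) volume c d := by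
    intro c d
    refine FP3Aux.intInt c d (measurable_const.mul hv_meas).neg (C := a) ?_
    intro s; rw [abs_neg, abs_mul, abs_of_pos ha]; nlinarith [hv_bd s, abs_nonneg (vθ s)]
  obtain ⟨Y, hYdef⟩ : ∃ Y : ℝ → ℝ, Y = fun t => x0 + ∫ s in t0..t, -(a * vθ s) := ⟨_, rfl⟩
  have hYlin : ∀ t : ℝ, Y t = (1-θ) * X t + θ * XM t := by
    intro t
    rw [hYdef, hXdef, hXMdef]
    simp only
    have hpt : ∀ s, -(a * vθ s) = (1-θ) * (-(a * g s)) + θ * (-(a * um' s)) := by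
      intro s; rw [hvdef]; ring
    rw [intervalIntegral.integral_congr (fun s _ => hpt s),
      intervalIntegral.integral_add ((hig t0 t).const_mul _) ((hium t0 t).const_mul _),
      intervalIntegral.integral_const_mul, intervalIntegral.integral_const_mul]
    ring
  have hfeas : FP3Feasible a t0 T x0 Y vθ := by
    refine ⟨hv_meas.aestronglyMeasurable, ?_, fun t ht => by rw [hYdef], ?_⟩
    · exact Filter.Eventually.of_forall (fun s => abs_le.mp (hv_bd s))
    · intro t ht
      have h2 := hXM_mem t ht
      have h3 : X t ∈ Icc (-1:ℝ) 1 := by rw [← hxbX t ht]; exact hxb_mem t ht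
      rw [hYlin t]
      constructor <;> nlinarith [h2.1, h2.2, h3.1, h3.2, hθpos.le, hθ1]
  -- the W11 distance is small
  have hdist : (∫ t in t0..T, |(-(a * vθ t)) - (-(a * ub t))|) ≤ δ := by
    have hcongr : (∫ t in t0..T, |(-(a * vθ t)) - (-(a * ub t))|)
        = ∫ t in t0..T, |θ * (a * (g t - um' t))| := by
      apply intervalIntegral.integral_congr_ae
      filter_upwards [hg_imp] with s hs hmem
      rw [Set.uIoc_of_le hT] at hmem
      rw [hs ⟨hmem.1.le, hmem.2⟩, hvdef]
      congr 1
      ring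
    rw [hcongr]
    have hb : ∀ x ∈ Set.uIoc t0 T, ‖|θ * (a * (g x - um' x))|‖ ≤ θ * (2*a) := by
      intro x _
      rw [Real.norm_eq_abs, abs_abs, abs_mul, abs_mul]
      have h2 := abs_le.mp (hg_bd x); have h3 := abs_le.mp (hum_bd x)
      have h4 : |g x - um' x| ≤ 2 := abs_le.mpr ⟨by linarith, by linarith⟩
      rw [abs_of_pos hθpos, abs_of_pos ha]
      have h5 : a * |g x - um' x| ≤ a * 2 := mul_le_mul_of_nonneg_left h4 ha.le
      have h6 : θ * (a * |g x - um' x|) ≤ θ * (a*2) := mul_le_mul_of_nonneg_left h5 hθpos.le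
      linarith
    have hn := intervalIntegral.norm_integral_le_of_norm_le_const hb
    rw [Real.norm_eq_abs] at hn
    have h2 : (∫ t in t0..T, |θ * (a * (g t - um' t))|) ≤ θ * (2*a) * |T - t0| :=
      le_trans (le_abs_self _) hn
    rw [abs_of_nonneg (sub_nonneg.mpr hT)] at h2
    have hθle : θ ≤ δ / (2*a*(T - t0) + 1) := by rw [hθdef]; exact min_le_right _ _
    have hd : 0 < 2*a*(T-t0) + 1 := by nlinarith [mul_nonneg ha.le (sub_nonneg.mpr hT)]
    rw [le_div_iff₀ hd] at hθle
    nlinarith [hθpos.le]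
  have hJ := Hmin Y vθ hfeas hdist
  -- rewrite the costs
  have hcost_ub : FP3Cost lam t0 T xb ub = FP3Cost lam t0 T X g := by
    unfold FP3Cost
    apply intervalIntegral.integral_congr_ae
    filter_upwards [hg_imp] with s hs hmem
    rw [Set.uIoc_of_le hT] at hmem
    have hicc : s ∈ Icc t0 T := ⟨hmem.1.le, hmem.2⟩
    rw [hs hicc, hxbX s hicc]
  have cidg := FP3Aux.costid a lam t0 T x0 ha hlam hT g hg_meas hg_bd
  have cidm := FP3Aux.costid a lam t0 T x0 ha hlam hT um' hum_meas hum_bd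
  have cidv := FP3Aux.costid a lam t0 T x0 ha hlam hT vθ hv_meas hv_bd
  rw [← hXdef] at cidg
  rw [← hXMdef] at cidm
  rw [← hYdef] at cidv
  obtain ⟨IX, hIXdef⟩ : ∃ z : ℝ,
    z = ∫ t in t0..T, Real.exp (-(lam*t)) * (x0 + ∫ s in t0..t, -(a * g s)) := ⟨_, rfl⟩
  obtain ⟨IM, hIMdef⟩ : ∃ z : ℝ,
    z = ∫ t in t0..T, Real.exp (-(lam*t)) * (x0 + ∫ s in t0..t, -(a * um' s)) := ⟨_, rfl⟩
  rw [← hIXdef] at cidg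
  rw [← hIMdef] at cidm
  have hXsum : (x0 + ∫ s in t0..T, -(a * g s)) = X T := by rw [hXdef]
  have hXMsum : (x0 + ∫ s in t0..T, -(a * um' s)) = XM T := by rw [hXMdef]
  have hYsum : (x0 + ∫ s in t0..T, -(a * vθ s)) = Y T := by rw [hYdef]
  rw [hXsum, hXT] at cidg
  rw [hYsum] at cidv
  have hYT : Y T = -1 := by rw [hYlin T, hXT, hXMT]; ring
  rw [hYT] at cidv
  -- the Y-integral is an affine combination
  have hIYeq : (∫ t in t0..T, Real.exp (-(lam*t)) * (x0 + ∫ s in t0..t, -(a * vθ s)))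
      = (1-θ) * IX + θ * IM := by
    have hpt : ∀ t : ℝ, Real.exp (-(lam*t)) * (x0 + ∫ s in t0..t, -(a * vθ s))
        = (1-θ) * (Real.exp (-(lam*t)) * (x0 + ∫ s in t0..t, -(a * g s)))
          + θ * (Real.exp (-(lam*t)) * (x0 + ∫ s in t0..t, -(a * um' s))) := by
      intro t
      have h2 := hYlin t
      rw [hYdef, hXdef, hXMdef] at h2
      simp only at h2
      rw [h2]
      ring
    have hiEX : IntervalIntegrable
        (fun t => Real.exp (-(lam*t)) * (x0 + ∫ s in t0..t, -(a * g s))) volume t0 T := by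
      have : Continuous (fun t => Real.exp (-(lam*t)) * (x0 + ∫ s in t0..t, -(a * g s))) :=
        hEcont.mul (continuous_const.add (intervalIntegral.continuous_primitive hig t0))
      exact this.intervalIntegrable t0 T
    have hiEM : IntervalIntegrable
        (fun t => Real.exp (-(lam*t)) * (x0 + ∫ s in t0..t, -(a * um' s))) volume t0 T := by
      have : Continuous (fun t => Real.exp (-(lam*t)) * (x0 + ∫ s in t0..t, -(a * um' s))) :=
        hEcont.mul (continuous_const.add (intervalIntegral.continuous_primitive hium t0))
      exact this.intervalIntegrable t0 T
    rw [intervalIntegral.integral_congr (fun t _ => hpt t),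
      intervalIntegral.integral_add (hiEX.const_mul _) (hiEM.const_mul _),
      intervalIntegral.integral_const_mul, intervalIntegral.integral_const_mul,
      ← hIXdef, ← hIMdef]
  rw [hIYeq] at cidv
  -- derive IM ≤ IX from local minimality
  have hfrac : lam/a - 1 < 0 := by
    have : lam/a < 1 := (div_lt_one ha).mpr hal
    linarith
  rw [hcost_ub, cidg, cidv] at hJ
  have hIMle : IM ≤ IX := by
    by_contra hcon
    push_neg at hcon
    have hc : 0 < (1 - lam/a) := by linarith
    have hp := mul_pos (mul_pos hc hθpos) (sub_pos.mpr hcon)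
    nlinarith [hJ, hp]
  -- reverse inequality from pointwise comparison
  have hdiffeq : IM - IX = ∫ t in t0..T, Real.exp (-(lam*t)) * (XM t - X t) := by
    have hiEX : IntervalIntegrable (fun t => Real.exp (-(lam*t)) * X t) volume t0 T :=
      (hEcont.mul hXcont).intervalIntegrable t0 T
    have hiEM : IntervalIntegrable (fun t => Real.exp (-(lam*t)) * XM t) volume t0 T :=
      (hEcont.mul hXMcont).intervalIntegrable t0 T
    have hIX2 : IX = ∫ t in t0..T, Real.exp (-(lam*t)) * X t := by
      rw [hIXdef, hXdef]
    have hIM2 : IM = ∫ t in t0..T, Real.exp (-(lam*t)) * XM t := by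
      rw [hIMdef, hXMdef]
    rw [hIX2, hIM2, ← intervalIntegral.integral_sub hiEM hiEX]
    apply intervalIntegral.integral_congr
    intro t _
    ring
  have hnn : ∀ t ∈ Icc t0 T, 0 ≤ Real.exp (-(lam*t)) * (XM t - X t) := by
    intro t ht
    have h2 : X t ≤ XM t := by
      rw [← hMeq t ht]
      exact hXle t ht
    have h3 := Real.exp_pos (-(lam*t))
    nlinarith
  have hge : 0 ≤ IM - IX := by
    rw [hdiffeq]
    exact intervalIntegral.integral_nonneg hT hnn
  have hzero : (∫ t in t0..T, Real.exp (-(lam*t)) * (XM t - X t)) = 0 := by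
    rw [← hdiffeq]; linarith
  -- conclude XM = X on Icc, i.e. xb = Mfun
  have haezero : ∀ᵐ s ∂(volume.restrict (Ioc t0 T)), Real.exp (-(lam*s)) * (XM s - X s) = 0 := by
    have hint : IntervalIntegrable (fun t => Real.exp (-(lam*t)) * (XM t - X t)) volume t0 T :=
      (hEcont.mul (hXMcont.sub hXcont)).intervalIntegrable t0 T
    have hnn2 : ∀ᵐ s ∂(volume.restrict (Ioc t0 T)),
        0 ≤ Real.exp (-(lam*s)) * (XM s - X s) := by
      rw [ae_restrict_iff' measurableSet_Ioc]
      exact Filter.Eventually.of_forall (fun s hs => hnn s ⟨hs.1.le, hs.2⟩)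
    have hnn' : 0 ≤ᵐ[volume.restrict (Ioc t0 T ∪ Ioc T t0)]
        (fun t => Real.exp (-(lam*t)) * (XM t - X t)) := by
      rw [Ioc_eq_empty (not_lt.mpr hT), union_empty]
      filter_upwards [hnn2] with s hs using hs
    have h0 := (intervalIntegral.integral_eq_zero_iff_of_nonneg_ae hnn' hint).mp hzero
    rw [Ioc_eq_empty (not_lt.mpr hT), union_empty] at h0
    exact h0
  have hfinal : ∀ t ∈ Icc t0 T, xb t = FP3Aux.Mfun a t0 T x0 t := by
    intro t ht
    have h3 := FP3Aux.zero_of_ae t0 T htT _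
      (hEcont.mul (hXMcont.sub hXcont)) haezero t ht
    have h4 : XM t = X t := by
      have h5 := Real.exp_pos (-(lam*t))
      rcases mul_eq_zero.mp h3 with h | h
      · exact absurd h (ne_of_gt h5)
      · linarith [sub_eq_zero.mp h]
    rw [hxbX t ht, ← h4, ← hMeq t ht]
  -- endgame
  have e1 : a * ((1+x0)/a) = 1 + x0 := by field_simp
  rcases eq_or_lt_of_le h1 with heq | hlt2
  · left
    constructor
    · rw [eq_div_iff ha']; linarith
    · intro t ht
      rw [hfinal t ht]
      unfold FP3Aux.Mfun
      have hdu : -1 + a*(T-t) ≤ x0 + a*(t-t0) := by nlinarith [ht.1]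
      have hd1 : -1 + a*(T-t) ≤ 1 := by nlinarith [ht.1]
      rw [min_eq_right hdu, min_eq_left hd1]
      linarith
  · right
    have hA0 : (0:ℝ) ≤ (1+x0)/a := div_nonneg (by linarith) ha.le
    have htz0' : t0 ≤ (T + t0 - (1 + x0) / a) / 2 := by
      have h2 : (1+x0)/a < T - t0 := by rw [div_lt_iff₀ ha]; linarith
      linarith
    have htzT' : (T + t0 - (1 + x0) / a) / 2 ≤ T := by linarith
    have hud : x0 + a * ((T + t0 - (1 + x0) / a) / 2 - t0)
        = -1 + a*(T - (T + t0 - (1 + x0) / a) / 2) := by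
      nlinarith [e1]
    have hpeak : x0 + a * ((T + t0 - (1 + x0) / a) / 2 - t0) < 1 := by
      have hmem : (T + t0 - (1 + x0) / a) / 2 ∈ Icc t0 T := ⟨htz0', htzT'⟩
      have hb := hbelow _ hmem
      rw [hfinal _ hmem] at hb
      unfold FP3Aux.Mfun at hb
      by_contra hcon
      push_neg at hcon
      rw [min_eq_right (le_min hcon (by linarith [hud]))] at hb
      exact lt_irrefl _ hb
    refine ⟨by rw [div_lt_iff₀ ha]; linarith, ?_, ?_, ?_⟩
    · rw [lt_div_iff₀ ha]; nlinarith [e1, hpeak]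
    · intro t ht
      have htmem : t ∈ Icc t0 T := ⟨ht.1, le_trans ht.2 htzT'⟩
      rw [hfinal t htmem]
      unfold FP3Aux.Mfun
      have h2 : x0 + a*(t-t0) ≤ -1 + a*(T-t) := by nlinarith [ht.2, e1]
      have h3 : x0 + a*(t-t0) ≤ 1 := by nlinarith [ht.2, hpeak]
      rw [min_eq_left h2, min_eq_left h3]
    · intro t ht
      have htmem : t ∈ Icc t0 T := ⟨le_trans htz0' ht.1.le, ht.2⟩
      rw [hfinal t htmem]
      unfold FP3Aux.Mfun
      have h2 : -1 + a*(T-t) ≤ x0 + a*(t-t0) := by nlinarith [ht.1.le, e1]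
      have h3 : -1 + a*(T-t) ≤ 1 := by nlinarith [ht.1.le, hpeak, hud]
      rw [min_eq_right h2, min_eq_left h3]
      ring
end
end
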